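/- arXiv:2404.07007 — 2 statements merged into one kernel-verified Lean document; each statement's English description precedes it below -/
import Mathlib

section
/- Assume 0 < m_0 ≤ M_0 for a fixed vector v ∈ ℝ^d, and suppose there exists R ∈ {k+1,…,N} with ⟨x_R(0), v⟩ = M_0. Set δ⁺₁ := (1/(2(N−1))) (Γ/Λ) (1 − e^{−Λσ}) (M_0/m_0 − 1). Then for all t ∈ [5τ, 6τ], every i = 1,…,N and every j = 1,…,M satisfy ⟨x_i(t), v⟩ ≥ m_0 [ 1 + (1/((M−1)(N+h−1)(M+k−1))) (Γ/Λ)^3 δ⁺₁ e^{−6τΛ} (1 − e^{−Λτ})^3 ] and ⟨y_j(t), v⟩ ≥ m_0 [ 1 + (1/((M−1)(N+h−1)(M+k−1))) (Γ/Λ)^3 δ⁺₁ e^{−6τΛ} (1 − e^{−Λτ})^3 ]. -/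
open Real Set Filter Topology
open scoped BigOperators RealInnerProductSpace

noncomputable section

/-- `Λ` : the maximum of the sup-norms of the four (positive) influence functions. -/
def Lam {d : ℕ} (ψ ψs φ φs : EuclideanSpace ℝ (Fin d) → EuclideanSpace ℝ (Fin d) → ℝ) : ℝ :=
  max
    (max (⨆ p : EuclideanSpace ℝ (Fin d) × EuclideanSpace ℝ (Fin d), ψ p.1 p.2)
         (⨆ p : EuclideanSpace ℝ (Fin d) × EuclideanSpace ℝ (Fin d), ψs p.1 p.2))
    (max (⨆ p : EuclideanSpace ℝ (Fin d) × EuclideanSpace ℝ (Fin d), φ p.1 p.2)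
         (⨆ p : EuclideanSpace ℝ (Fin d) × EuclideanSpace ℝ (Fin d), φs p.1 p.2))

/-- An influence function is admissible when it is continuous, positive and bounded. -/
def Admissible {d : ℕ} (f : EuclideanSpace ℝ (Fin d) → EuclideanSpace ℝ (Fin d) → ℝ) : Prop :=
  Continuous (fun p : EuclideanSpace ℝ (Fin d) × EuclideanSpace ℝ (Fin d) => f p.1 p.2) ∧
    (∀ z₁ z₂, 0 < f z₁ z₂) ∧
    BddAbove (Set.range fun p : EuclideanSpace ℝ (Fin d) × EuclideanSpace ℝ (Fin d) => f p.1 p.2)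

/-- `(x, y)` is a global classical solution of the two-population delayed
Hegselmann–Krause system, with `k` (resp. `h`) leaders in the first (resp. second)
population and time delay `τ`. -/
structure IsSol {d N M : ℕ} (h k : ℕ) (τ : ℝ)
    (ψ ψs φ φs : EuclideanSpace ℝ (Fin d) → EuclideanSpace ℝ (Fin d) → ℝ)
    (x : Fin N → ℝ → EuclideanSpace ℝ (Fin d))
    (y : Fin M → ℝ → EuclideanSpace ℝ (Fin d)) : Prop where
  contx : ∀ i, Continuous (x i)
  conty : ∀ j, Continuous (y j)
  odex_lead : ∀ i : Fin N, (i : ℕ) < k → ∀ t : ℝ, 0 < t →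
    HasDerivAt (x i)
      ((∑ j ∈ Finset.univ.erase i,
          (ψ (x i t) (x j t) / ((N : ℝ) + h - 1)) • (x j t - x i t)) +
        ∑ j ∈ Finset.univ.filter (fun j : Fin M => (j : ℕ) < h),
          (φ (x i t) (y j (t - τ)) / ((N : ℝ) + h - 1)) • (y j (t - τ) - x i t)) t
  odex_foll : ∀ i : Fin N, k ≤ (i : ℕ) → ∀ t : ℝ, 0 < t →
    HasDerivAt (x i)
      (∑ j ∈ Finset.univ.erase i,
          (ψ (x i t) (x j t) / ((N : ℝ) - 1)) • (x j t - x i t)) t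
  odey_lead : ∀ i : Fin M, (i : ℕ) < h → ∀ t : ℝ, 0 < t →
    HasDerivAt (y i)
      ((∑ j ∈ Finset.univ.erase i,
          (ψs (y i t) (y j t) / ((M : ℝ) + k - 1)) • (y j t - y i t)) +
        ∑ j ∈ Finset.univ.filter (fun j : Fin N => (j : ℕ) < k),
          (φs (y i t) (x j (t - τ)) / ((M : ℝ) + k - 1)) • (x j (t - τ) - y i t)) t
  odey_foll : ∀ i : Fin M, h ≤ (i : ℕ) → ∀ t : ℝ, 0 < t →
    HasDerivAt (y i)
      (∑ j ∈ Finset.univ.erase i,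
          (ψs (y i t) (y j t) / ((M : ℝ) - 1)) • (y j t - y i t)) t

/-- `m_0` : the minimum of the projections on `v` of the initial data. -/
def mInit {d N M : ℕ} (h k : ℕ) (τ : ℝ) (v : EuclideanSpace ℝ (Fin d))
    (x : Fin N → ℝ → EuclideanSpace ℝ (Fin d))
    (y : Fin M → ℝ → EuclideanSpace ℝ (Fin d)) : ℝ :=
  min
    (min (⨅ p : {i : Fin N // (i : ℕ) < k} × (Icc (-τ) (0 : ℝ)), ⟪x p.1.1 (p.2 : ℝ), v⟫)
         (⨅ i : {i : Fin N // k ≤ (i : ℕ)}, ⟪x i.1 0, v⟫))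
    (min (⨅ p : {j : Fin M // (j : ℕ) < h} × (Icc (-τ) (0 : ℝ)), ⟪y p.1.1 (p.2 : ℝ), v⟫)
         (⨅ j : {j : Fin M // h ≤ (j : ℕ)}, ⟪y j.1 0, v⟫))

/-- `M_0` : the maximum of the projections on `v` of the initial data. -/
def MInit {d N M : ℕ} (h k : ℕ) (τ : ℝ) (v : EuclideanSpace ℝ (Fin d))
    (x : Fin N → ℝ → EuclideanSpace ℝ (Fin d))
    (y : Fin M → ℝ → EuclideanSpace ℝ (Fin d)) : ℝ :=
  max
    (max (⨆ p : {i : Fin N // (i : ℕ) < k} × (Icc (-τ) (0 : ℝ)), ⟪x p.1.1 (p.2 : ℝ), v⟫)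
         (⨆ i : {i : Fin N // k ≤ (i : ℕ)}, ⟪x i.1 0, v⟫))
    (max (⨆ p : {j : Fin M // (j : ℕ) < h} × (Icc (-τ) (0 : ℝ)), ⟪y p.1.1 (p.2 : ℝ), v⟫)
         (⨆ j : {j : Fin M // h ≤ (j : ℕ)}, ⟪y j.1 0, v⟫))

/-- `C_0` : the maximum of the norms of the initial data. -/
def Cinit {d N M : ℕ} (h k : ℕ) (τ : ℝ)
    (x : Fin N → ℝ → EuclideanSpace ℝ (Fin d))
    (y : Fin M → ℝ → EuclideanSpace ℝ (Fin d)) : ℝ :=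
  max
    (max (⨆ p : {i : Fin N // (i : ℕ) < k} × (Icc (-τ) (0 : ℝ)), ‖x p.1.1 (p.2 : ℝ)‖)
         (⨆ i : {i : Fin N // k ≤ (i : ℕ)}, ‖x i.1 0‖))
    (max (⨆ p : {j : Fin M // (j : ℕ) < h} × (Icc (-τ) (0 : ℝ)), ‖y p.1.1 (p.2 : ℝ)‖)
         (⨆ j : {j : Fin M // h ≤ (j : ℕ)}, ‖y j.1 0‖))

/-- the minimum of an influence function on the ball of radius `C` (in each variable). -/
def minOnBall {d : ℕ} (C : ℝ)
    (f : EuclideanSpace ℝ (Fin d) → EuclideanSpace ℝ (Fin d) → ℝ) : ℝ :=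
  ⨅ p : {z : EuclideanSpace ℝ (Fin d) × EuclideanSpace ℝ (Fin d) // ‖z.1‖ ≤ C ∧ ‖z.2‖ ≤ C},
    f p.1.1 p.1.2

/-- `Γ := min {ψ₀, ψ*₀, φ₀, φ*₀}`. -/
def Gam {d N M : ℕ} (h k : ℕ) (τ : ℝ)
    (ψ ψs φ φs : EuclideanSpace ℝ (Fin d) → EuclideanSpace ℝ (Fin d) → ℝ)
    (x : Fin N → ℝ → EuclideanSpace ℝ (Fin d))
    (y : Fin M → ℝ → EuclideanSpace ℝ (Fin d)) : ℝ :=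
  min (min (minOnBall (Cinit h k τ x y) ψ) (minOnBall (Cinit h k τ x y) ψs))
      (min (minOnBall (Cinit h k τ x y) φ) (minOnBall (Cinit h k τ x y) φs))

/-- `m_n` : minimum of the projections on `v` over the time mesh `I_n = [(6n-1)τ, 6nτ]`. -/
def mSeq {d N M : ℕ} (h k : ℕ) (τ : ℝ) (v : EuclideanSpace ℝ (Fin d))
    (x : Fin N → ℝ → EuclideanSpace ℝ (Fin d))
    (y : Fin M → ℝ → EuclideanSpace ℝ (Fin d)) (n : ℕ) : ℝ :=
  min
    (min (⨅ p : {i : Fin N // (i : ℕ) < k} × (Icc ((6 * (n : ℝ) - 1) * τ) (6 * (n : ℝ) * τ)),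
            ⟪x p.1.1 (p.2 : ℝ), v⟫)
         (⨅ i : {i : Fin N // k ≤ (i : ℕ)}, ⟪x i.1 (6 * (n : ℝ) * τ), v⟫))
    (min (⨅ p : {j : Fin M // (j : ℕ) < h} × (Icc ((6 * (n : ℝ) - 1) * τ) (6 * (n : ℝ) * τ)),
            ⟪y p.1.1 (p.2 : ℝ), v⟫)
         (⨅ j : {j : Fin M // h ≤ (j : ℕ)}, ⟪y j.1 (6 * (n : ℝ) * τ), v⟫))

/-- `M_n` : maximum of the projections on `v` over the time mesh `I_n = [(6n-1)τ, 6nτ]`. -/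
def MSeq {d N M : ℕ} (h k : ℕ) (τ : ℝ) (v : EuclideanSpace ℝ (Fin d))
    (x : Fin N → ℝ → EuclideanSpace ℝ (Fin d))
    (y : Fin M → ℝ → EuclideanSpace ℝ (Fin d)) (n : ℕ) : ℝ :=
  max
    (max (⨆ p : {i : Fin N // (i : ℕ) < k} × (Icc ((6 * (n : ℝ) - 1) * τ) (6 * (n : ℝ) * τ)),
            ⟪x p.1.1 (p.2 : ℝ), v⟫)
         (⨆ i : {i : Fin N // k ≤ (i : ℕ)}, ⟪x i.1 (6 * (n : ℝ) * τ), v⟫))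
    (max (⨆ p : {j : Fin M // (j : ℕ) < h} × (Icc ((6 * (n : ℝ) - 1) * τ) (6 * (n : ℝ) * τ)),
            ⟪y p.1.1 (p.2 : ℝ), v⟫)
         (⨆ j : {j : Fin M // h ≤ (j : ℕ)}, ⟪y j.1 (6 * (n : ℝ) * τ), v⟫))



lemma mono_of_deriv_Icc (F : ℝ → ℝ) {a b : ℝ} (hab : a ≤ b)
    (hF : ContinuousOn F (Icc a b))
    (hd : ∀ t ∈ Ioo a b, ∃ g, HasDerivAt F g t ∧ 0 ≤ g) : F a ≤ F b := by
  have hmon : MonotoneOn F (Icc a b) := by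
    apply monotoneOn_of_deriv_nonneg (convex_Icc a b) hF
    · intro t ht
      rw [interior_Icc] at ht
      obtain ⟨g, hg, _⟩ := hd t ht
      exact hg.differentiableAt.differentiableWithinAt
    · intro t ht
      rw [interior_Icc] at ht
      obtain ⟨g, hg, hg0⟩ := hd t ht
      rw [hg.deriv]; exact hg0
  exact hmon (left_mem_Icc.2 hab) (right_mem_Icc.2 hab) hab

/-- Gronwall-type lower bound with constant source. -/
lemma gronLower (u : ℝ → ℝ) {a b L m S : ℝ} (hab : a ≤ b) (hL : 0 < L)
    (hcont : ContinuousOn u (Icc a b))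
    (hder : ∀ t ∈ Ioo a b, ∃ g, HasDerivAt u g t ∧ -(L * (u t - m)) + S ≤ g) :
    m + (u a - m) * Real.exp (-(L * (b - a))) + (S / L) * (1 - Real.exp (-(L * (b - a)))) ≤ u b := by
  have hexp : Continuous fun t : ℝ => Real.exp (L * t) := by continuity
  set F : ℝ → ℝ := fun t => (u t - (m + S / L)) * Real.exp (L * t) with hFdef
  have hFab : F a ≤ F b := by
    apply mono_of_deriv_Icc F hab
    · exact (hcont.sub continuousOn_const).mul hexp.continuousOn
    · intro t ht
      obtain ⟨g, hg, hgb⟩ := hder t ht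
      refine ⟨_, (hg.sub_const (m + S / L)).mul (((hasDerivAt_id t).const_mul L).exp), ?_⟩
      have h1 : (0:ℝ) < Real.exp (L * id t) := Real.exp_pos _
      have hSL : S / L * L = S := div_mul_cancel₀ _ hL.ne'
      have h2 : 0 ≤ g + L * (u t - m) - S := by linarith
      have h3 : g * Real.exp (L * id t) + (u t - (m + S / L)) * (Real.exp (L * id t) * (L * 1))
          = Real.exp (L * id t) * (g + L * (u t - m) - S) := by
        field_simp
        ring
      simp only [id_eq] at h3 ⊢
      rw [h3]
      exact mul_nonneg h1.le h2
  have he : Real.exp (L * a) = Real.exp (-(L * (b - a))) * Real.exp (L * b) := by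
    rw [← Real.exp_add]; ring_nf
  have hb1 : (0:ℝ) < Real.exp (L * b) := Real.exp_pos _
  have key : (u a - (m + S / L)) * Real.exp (L * a) ≤ (u b - (m + S / L)) * Real.exp (L * b) := hFab
  rw [he] at key
  have key2 : (u a - (m + S / L)) * Real.exp (-(L * (b - a))) ≤ u b - (m + S / L) := by
    have := le_of_mul_le_mul_right (by linarith [key] : ((u a - (m + S / L)) * Real.exp (-(L * (b - a)))) * Real.exp (L * b) ≤ (u b - (m + S / L)) * Real.exp (L * b)) hb1
    exact this
  linarith [key2]

/-- Linear lower bound: derivative bounded below by a constant. -/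
lemma linLower (u : ℝ → ℝ) {a b C : ℝ} (hab : a ≤ b)
    (hcont : ContinuousOn u (Icc a b))
    (hder : ∀ t ∈ Ioo a b, ∃ g, HasDerivAt u g t ∧ -C ≤ g) :
    u a - C * (b - a) ≤ u b := by
  have hFab : (fun t => u t + C * t) a ≤ (fun t => u t + C * t) b := by
    apply mono_of_deriv_Icc _ hab
    · exact hcont.add (continuous_const.mul continuous_id).continuousOn
    · intro t ht
      obtain ⟨g, hg, hgb⟩ := hder t ht
      refine ⟨g + C * 1, hg.add ((hasDerivAt_id t).const_mul C), by linarith⟩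
  simp only at hFab
  linarith

lemma sum_le_bound {α : Type*} (s : Finset α) (c p : α → ℝ) {q b L : ℝ}
    (hc : ∀ r ∈ s, 0 ≤ c r) (hp : ∀ r ∈ s, p r ≤ b) (hq : q ≤ b)
    (hL : ∑ r ∈ s, c r ≤ L) :
    ∑ r ∈ s, c r * (p r - q) ≤ L * (b - q) := by
  have h1 : ∑ r ∈ s, c r * (p r - q) ≤ ∑ r ∈ s, c r * (b - q) :=
    Finset.sum_le_sum fun r hr =>
      mul_le_mul_of_nonneg_left (by linarith [hp r hr]) (hc r hr)
  rw [← Finset.sum_mul] at h1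
  have h2 : (∑ r ∈ s, c r) * (b - q) ≤ L * (b - q) :=
    mul_le_mul_of_nonneg_right hL (by linarith)
  linarith

lemma sum_ge_bound {α : Type*} (s : Finset α) (c p : α → ℝ) {q m L : ℝ}
    (hc : ∀ r ∈ s, 0 ≤ c r) (hp : ∀ r ∈ s, m ≤ p r) (hq : m ≤ q)
    (hL : ∑ r ∈ s, c r ≤ L) :
    -(L * (q - m)) ≤ ∑ r ∈ s, c r * (p r - q) := by
  have h1 : ∑ r ∈ s, c r * (m - q) ≤ ∑ r ∈ s, c r * (p r - q) :=
    Finset.sum_le_sum fun r hr =>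
      mul_le_mul_of_nonneg_left (by linarith [hp r hr]) (hc r hr)
  rw [← Finset.sum_mul] at h1
  have h2 : L * (m - q) ≤ (∑ r ∈ s, c r) * (m - q) :=
    mul_le_mul_of_nonpos_right hL (by linarith)
  linarith

lemma sum_ge_bound' {α : Type*} (s : Finset α) (c p : α → ℝ) {q m L γ A : ℝ}
    {r₀ : α} (hr₀ : r₀ ∈ s)
    (hc : ∀ r ∈ s, 0 ≤ c r) (hp : ∀ r ∈ s, m ≤ p r) (hq : m ≤ q)
    (hL : ∑ r ∈ s, c r ≤ L) (hγ : γ ≤ c r₀) (hγ0 : 0 ≤ γ)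
    (hA : m + A ≤ p r₀) (hA0 : 0 ≤ A) :
    -(L * (q - m)) + γ * A ≤ ∑ r ∈ s, c r * (p r - q) := by
  have hsplit : ∀ r ∈ s, c r * (p r - q) = c r * (p r - m) + c r * (m - q) := by
    intro r _; ring
  rw [Finset.sum_congr rfl hsplit, Finset.sum_add_distrib]
  have h1 : γ * A ≤ ∑ r ∈ s, c r * (p r - m) := by
    have hterm : γ * A ≤ c r₀ * (p r₀ - m) :=
      mul_le_mul hγ (by linarith) hA0 (hc r₀ hr₀)
    have h5 := Finset.single_le_sum (f := fun r => c r * (p r - m))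
      (fun r hr => mul_nonneg (hc r hr) (by linarith [hp r hr])) hr₀
    linarith
  have h2 : -(L * (q - m)) ≤ ∑ r ∈ s, c r * (m - q) := by
    have h3 : ∑ r ∈ s, c r * (m - q) = (∑ r ∈ s, c r) * (m - q) := by
      rw [Finset.sum_mul]
    have h4 : L * (m - q) ≤ (∑ r ∈ s, c r) * (m - q) :=
      mul_le_mul_of_nonpos_right hL (by linarith)
    rw [h3]; linarith
  linarith

lemma sum_div_le {α : Type*} (s : Finset α) (f : α → ℝ) {Λ D : ℝ} (hD : 0 < D)
    (hf : ∀ r ∈ s, f r ≤ Λ) (hΛ : 0 ≤ Λ) :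
    ∑ r ∈ s, f r / D ≤ (s.card : ℝ) * Λ / D := by
  have h1 : ∑ r ∈ s, f r / D ≤ ∑ r ∈ s, Λ / D :=
    Finset.sum_le_sum fun r hr => by gcongr; exact hf r hr
  rw [Finset.sum_const, nsmul_eq_mul] at h1
  calc ∑ r ∈ s, f r / D ≤ (s.card : ℝ) * (Λ / D) := h1
    _ = (s.card : ℝ) * Λ / D := by ring

lemma proj_deriv {d : ℕ} {X : ℝ → EuclideanSpace ℝ (Fin d)}
    {X' : EuclideanSpace ℝ (Fin d)} {w : EuclideanSpace ℝ (Fin d)} {t : ℝ}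
    (hX : HasDerivAt X X' t) :
    HasDerivAt (fun s => (⟪X s, w⟫ : ℝ)) (⟪X', w⟫ : ℝ) t := by
  have h := (innerSL ℝ w).hasFDerivAt (x := X t) |>.comp_hasDerivAt t hX
  have heq : (fun s => (⟪X s, w⟫ : ℝ)) = fun s => (innerSL ℝ w) (X s) := by
    funext s
    simp only [innerSL_apply_apply]
    exact real_inner_comm _ _
  rw [heq]
  have e : (⟪X', w⟫ : ℝ) = (innerSL ℝ w) X' := by
    simp only [innerSL_apply_apply]
    exact real_inner_comm _ _
  rw [e]
  exact h

/-- Core invariance lemma: a finite family of functions whose derivatives point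
"inwards" below any common upper bound stays below the initial bound `c`. -/
lemma upcore {ι : Type*} [Fintype ι] [Nonempty ι] (u : ι → ℝ → ℝ)
    (hcont : ∀ β, Continuous (u β)) {L c T : ℝ} (hL : 0 < L) (hT : 0 ≤ T)
    (hinit : ∀ β, u β 0 ≤ c)
    (hder : ∀ β t b, 0 < t → t ≤ T → c ≤ b →
      (∀ γ s, 0 ≤ s → s ≤ t → u γ s ≤ b) →
      ∃ g, HasDerivAt (u β) g t ∧ g ≤ L * (b - u β t)) :
    ∀ β t, 0 ≤ t → t ≤ T → u β t ≤ c := by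
  set K := L + 1 with hK
  have hK0 : (0:ℝ) < K := by linarith
  -- ε-version
  have main : ∀ ε : ℝ, 0 < ε → ∀ β t, 0 ≤ t → t ≤ T →
      u β t ≤ c + ε * Real.exp (K * t) := by
    intro ε hε
    set B : ℝ → ℝ := fun s => c + ε * Real.exp (K * s) with hB
    have hBcont : Continuous B := by continuity
    have hBmono : Monotone B := by
      intro s₁ s₂ hs
      have := Real.exp_le_exp.2 (mul_le_mul_of_nonneg_left hs hK0.le)
      simp only [hB]
      nlinarith
    have hBc : ∀ s, c < B s := by
      intro s
      simp only [hB]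
      nlinarith [Real.exp_pos (K * s)]
    set A : Set ℝ := {r | r ∈ Icc 0 T ∧ ∀ γ, ∀ s ∈ Icc 0 r, u γ s ≤ B s} with hA
    have hA0 : (0:ℝ) ∈ A := by
      refine ⟨⟨le_refl _, hT⟩, fun γ s hs => ?_⟩
      have : s = 0 := le_antisymm hs.2 hs.1
      subst this
      exact (hinit γ).trans (hBc 0).le
    have hAne : A.Nonempty := ⟨0, hA0⟩
    have hAbdd : BddAbove A := ⟨T, fun r hr => hr.1.2⟩
    set t₀ := sSup A with ht₀
    have ht₀0 : 0 ≤ t₀ := le_csSup hAbdd hA0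
    have ht₀T : t₀ ≤ T := csSup_le hAne fun r hr => hr.1.2
    have ht₀A : t₀ ∈ A := by
      refine ⟨⟨ht₀0, ht₀T⟩, fun γ s hs => ?_⟩
      rcases lt_or_eq_of_le hs.2 with hlt | heq
      · obtain ⟨r, hrA, hsr⟩ := exists_lt_of_lt_csSup hAne hlt
        exact hrA.2 γ s ⟨hs.1, hsr.le⟩
      · rw [heq]
        rw [heq] at hs
        rcases eq_or_lt_of_le hs.1 with h0 | h0
        · rw [← h0]
          exact (hinit γ).trans (hBc 0).le
        · -- limit from the left
          have hne : (𝓝[<] t₀).NeBot := nhdsLT_neBot t₀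
          have htend : Tendsto (fun r => u γ r - B r) (𝓝[<] t₀) (𝓝 (u γ t₀ - B t₀)) :=
            ((hcont γ).sub hBcont).continuousAt.continuousWithinAt.tendsto
          have hev : ∀ᶠ r in 𝓝[<] t₀, u γ r - B r ≤ 0 := by
            filter_upwards [Ioo_mem_nhdsLT_of_mem (⟨h0, le_refl t₀⟩ : t₀ ∈ Ioc 0 t₀)]
              with r hr
            have : u γ r ≤ B r := by
              obtain ⟨r', hr'A, hrr'⟩ := exists_lt_of_lt_csSup hAne hr.2
              exact hr'A.2 γ r ⟨hr.1.le, hrr'.le⟩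
            linarith
          have := le_of_tendsto htend hev
          linarith
    -- t₀ = T by contradiction
    have ht₀eq : t₀ = T := by
      by_contra hne
      have ht₀ltT : t₀ < T := lt_of_le_of_ne ht₀T hne
      have hstrict : ∀ γ, u γ t₀ < B t₀ := by
        intro γ
        rcases lt_or_eq_of_le (ht₀A.2 γ t₀ ⟨ht₀0, le_refl _⟩) with h | heq
        · exact h
        · exfalso
          have ht₀pos : 0 < t₀ := by
            rcases eq_or_lt_of_le ht₀0 with h0 | h0
            · exfalso
              have := hinit γ
              rw [← h0] at heq
              have := hBc 0
              linarith
            · exact h0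
          obtain ⟨g, hg, hgle⟩ := hder γ t₀ (B t₀) ht₀pos ht₀T (hBc t₀).le
            (fun γ' s hs0 hst => (ht₀A.2 γ' s ⟨hs0, hst⟩).trans (hBmono hst))
          rw [← heq, sub_self, mul_zero] at hgle
          -- derivative of w := u γ - B at t₀ is negative
          have hBder : HasDerivAt B (ε * (Real.exp (K * t₀) * (K * 1))) t₀ := by
            exact ((((hasDerivAt_id t₀).const_mul K).exp).const_mul ε).const_add c
          have hw : HasDerivAt (fun s => u γ s - B s)
              (g - ε * (Real.exp (K * t₀) * (K * 1))) t₀ := hg.sub hBder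
          have hneg : g - ε * (Real.exp (K * t₀) * (K * 1)) < 0 := by
            nlinarith [Real.exp_pos (K * t₀), mul_pos hε (mul_pos (Real.exp_pos (K * t₀)) hK0)]
          have hsl := hasDerivAt_iff_tendsto_slope.1 hw
          have hsl' : Tendsto (slope (fun s => u γ s - B s) t₀) (𝓝[<] t₀)
              (𝓝 (g - ε * (Real.exp (K * t₀) * (K * 1)))) :=
            hsl.mono_left (nhdsWithin_mono _ fun r hr => ne_of_lt hr)
          have hev : ∀ᶠ r in 𝓝[<] t₀, slope (fun s => u γ s - B s) t₀ r < 0 :=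
            hsl'.eventually_lt_const hneg
          have hev2 : ∀ᶠ r in 𝓝[<] t₀, r ∈ Ioo 0 t₀ :=
            Ioo_mem_nhdsLT_of_mem ⟨ht₀pos, le_refl _⟩
          have hne2 : (𝓝[<] t₀).NeBot := nhdsLT_neBot t₀
          obtain ⟨r, hr1, hr2⟩ := (hev.and hev2).exists
          have hwr : u γ r - B r ≤ 0 := by
            have := ht₀A.2 γ r ⟨hr2.1.le, hr2.2.le⟩
            linarith
          have hwt₀ : u γ t₀ - B t₀ = 0 := by rw [← heq]; ring
          rw [slope_def_field] at hr1
          have : (u γ r - B r - (u γ t₀ - B t₀)) / (r - t₀) < 0 := by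
            simpa [div_eq_iff, sub_eq_iff_eq_add] using hr1
          rw [hwt₀, sub_zero] at this
          have hrt : r - t₀ < 0 := by linarith [hr2.2]
          have : 0 < u γ r - B r := by
            rcases div_neg_iff.1 this with ⟨h1, h2⟩ | ⟨h1, h2⟩
            · linarith
            · linarith
          linarith
      -- push beyond t₀
      have hopen : ∀ᶠ s in 𝓝 t₀, ∀ γ, u γ s < B s := by
        rw [eventually_all]
        intro γ
        have : Continuous fun s => u γ s - B s := (hcont γ).sub hBcont
        have h0 : u γ t₀ - B t₀ < 0 := by linarith [hstrict γ]
        have h1 : ∀ᶠ s in 𝓝 t₀, u γ s - B s < 0 :=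
          (this.continuousAt).eventually_lt_const (by simpa using h0)
        filter_upwards [h1] with s hs using by linarith
      obtain ⟨δ, hδ0, hδ⟩ := Metric.eventually_nhds_iff.1 hopen
      set t₁ := min T (t₀ + δ / 2) with ht₁
      have ht₁t₀ : t₀ < t₁ := lt_min ht₀ltT (by linarith)
      have ht₁A : t₁ ∈ A := by
        refine ⟨⟨by linarith, min_le_left _ _⟩, fun γ s hs => ?_⟩
        rcases le_or_gt s t₀ with h | h
        · exact ht₀A.2 γ s ⟨hs.1, h⟩
        · have hst₁ : s ≤ t₀ + δ / 2 := le_trans hs.2 (min_le_right _ _)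
          have : dist s t₀ < δ := by
            rw [Real.dist_eq, abs_lt]
            constructor <;> linarith
          exact (hδ this γ).le
      have := le_csSup hAbdd ht₁A
      linarith
    intro β t ht0 htT
    have : t ∈ Icc 0 t₀ := ⟨ht0, by rw [ht₀eq]; exact htT⟩
    exact ht₀A.2 β t this
  -- let ε → 0
  intro β t ht0 htT
  by_contra hcon
  push_neg at hcon
  set ε := (u β t - c) / (2 * Real.exp (K * t)) with hε
  have hεpos : 0 < ε := div_pos (by linarith) (by positivity)
  have := main ε hεpos β t ht0 htT
  have hexp : (0:ℝ) < Real.exp (K * t) := Real.exp_pos _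
  rw [hε] at this
  have h2 : (u β t - c) / (2 * Real.exp (K * t)) * Real.exp (K * t) = (u β t - c) / 2 := by
    field_simp
  rw [h2] at this
  linarith

lemma inner_comb {d : ℕ} {α : Type*} (s : Finset α) (c : α → ℝ)
    (z : α → EuclideanSpace ℝ (Fin d)) (q w : EuclideanSpace ℝ (Fin d)) :
    (⟪∑ r ∈ s, c r • (z r - q), w⟫ : ℝ) = ∑ r ∈ s, c r * ((⟪z r, w⟫ : ℝ) - (⟪q, w⟫ : ℝ)) := by
  rw [sum_inner]
  exact Finset.sum_congr rfl fun r _ => by rw [real_inner_smul_left, inner_sub_left]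

lemma filter_lt_card (n m : ℕ) :
    (Finset.univ.filter (fun j : Fin n => (j : ℕ) < m)).card ≤ m := by
  classical
  have := Finset.card_le_card_of_injOn
    (s := Finset.univ.filter (fun j : Fin n => (j : ℕ) < m)) (t := Finset.range m)
    (fun j : Fin n => (j : ℕ))
    (fun a ha => Finset.mem_range.2 (Finset.mem_filter.1 ha).2)
    (Fin.val_injective.injOn)
  simpa using this


lemma bddBelow_proj {n : ℕ} (hn : 0 < n) (P : Fin n → Prop) (g : Fin n → ℝ → ℝ)
    (hg : ∀ i, Continuous (g i)) (a b : ℝ) :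
    BddBelow (Set.range fun p : {i : Fin n // P i} × Icc a b => g p.1.1 (p.2 : ℝ)) := by
  refine ⟨(Finset.univ : Finset (Fin n)).inf' ⟨⟨0, hn⟩, Finset.mem_univ _⟩
    (fun i => sInf (g i '' Icc a b)), ?_⟩
  rintro z ⟨p, rfl⟩
  refine le_trans (Finset.inf'_le _ (Finset.mem_univ p.1.1)) ?_
  exact csInf_le ((isCompact_Icc.image_of_continuousOn (hg p.1.1).continuousOn).bddBelow)
    ⟨(p.2 : ℝ), p.2.2, rfl⟩

lemma bddAbove_proj {n : ℕ} (hn : 0 < n) (P : Fin n → Prop) (g : Fin n → ℝ → ℝ)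
    (hg : ∀ i, Continuous (g i)) (a b : ℝ) :
    BddAbove (Set.range fun p : {i : Fin n // P i} × Icc a b => g p.1.1 (p.2 : ℝ)) := by
  refine ⟨(Finset.univ : Finset (Fin n)).sup' ⟨⟨0, hn⟩, Finset.mem_univ _⟩
    (fun i => sSup (g i '' Icc a b)), ?_⟩
  rintro z ⟨p, rfl⟩
  refine le_trans ?_ (Finset.le_sup' _ (Finset.mem_univ p.1.1))
  exact le_csSup ((isCompact_Icc.image_of_continuousOn (hg p.1.1).continuousOn).bddAbove)
    ⟨(p.2 : ℝ), p.2.2, rfl⟩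


lemma coef_bound {α : Type*} (s : Finset α) (f : α → ℝ) {Λ D Cr : ℝ} (hD : 0 < D)
    (hf : ∀ r ∈ s, f r ≤ Λ) (hΛ : 0 ≤ Λ) (hcard : (s.card : ℝ) ≤ Cr) :
    ∑ r ∈ s, f r / D ≤ Cr * Λ / D := by
  refine (sum_div_le s f hD hf hΛ).trans ?_
  gcongr

lemma invUp {d N M : ℕ} {h k : ℕ} (hN : 2 ≤ N) (hM2 : 2 ≤ M)
    (hh1 : 1 ≤ h) (hhM : h < M) (hk1 : 1 ≤ k) (hkN : k < N)
    {τ Λ : ℝ} (hτ : 0 < τ) (hΛ : 0 < Λ)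
    {ψ ψs φ φs : EuclideanSpace ℝ (Fin d) → EuclideanSpace ℝ (Fin d) → ℝ}
    (hψb : ∀ z₁ z₂, 0 ≤ ψ z₁ z₂ ∧ ψ z₁ z₂ ≤ Λ)
    (hψsb : ∀ z₁ z₂, 0 ≤ ψs z₁ z₂ ∧ ψs z₁ z₂ ≤ Λ)
    (hφb : ∀ z₁ z₂, 0 ≤ φ z₁ z₂ ∧ φ z₁ z₂ ≤ Λ)
    (hφsb : ∀ z₁ z₂, 0 ≤ φs z₁ z₂ ∧ φs z₁ z₂ ≤ Λ)
    {x : Fin N → ℝ → EuclideanSpace ℝ (Fin d)} {y : Fin M → ℝ → EuclideanSpace ℝ (Fin d)}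
    (hsol : IsSol h k τ ψ ψs φ φs x y)
    (w : EuclideanSpace ℝ (Fin d)) (c : ℝ)
    (hd1 : ∀ i : Fin N, (i : ℕ) < k → ∀ s ∈ Icc (-τ) (0:ℝ), (⟪x i s, w⟫:ℝ) ≤ c)
    (hd2 : ∀ i : Fin N, k ≤ (i : ℕ) → (⟪x i 0, w⟫:ℝ) ≤ c)
    (hd3 : ∀ j : Fin M, (j : ℕ) < h → ∀ s ∈ Icc (-τ) (0:ℝ), (⟪y j s, w⟫:ℝ) ≤ c)
    (hd4 : ∀ j : Fin M, h ≤ (j : ℕ) → (⟪y j 0, w⟫:ℝ) ≤ c) :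
    ∀ t, 0 ≤ t → t ≤ 6 * τ → (∀ i, (⟪x i t, w⟫:ℝ) ≤ c) ∧ (∀ j, (⟪y j t, w⟫:ℝ) ≤ c) := by
  have hNR : (2:ℝ) ≤ (N:ℝ) := by exact_mod_cast hN
  have hMR : (2:ℝ) ≤ (M:ℝ) := by exact_mod_cast hM2
  have hhR : (1:ℝ) ≤ (h:ℝ) := by exact_mod_cast hh1
  have hkR : (1:ℝ) ≤ (k:ℝ) := by exact_mod_cast hk1
  have hDx : (0:ℝ) < (N:ℝ) + h - 1 := by linarith
  have hDxF : (0:ℝ) < (N:ℝ) - 1 := by linarith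
  have hDy : (0:ℝ) < (M:ℝ) + k - 1 := by linarith
  have hDyF : (0:ℝ) < (M:ℝ) - 1 := by linarith
  have hNE : Nonempty (Fin N ⊕ Fin M) := ⟨Sum.inl ⟨0, by omega⟩⟩
  set u : (Fin N ⊕ Fin M) → ℝ → ℝ :=
    Sum.elim (fun i t => (⟪x i t, w⟫:ℝ)) (fun j t => (⟪y j t, w⟫:ℝ)) with hu
  have hcardN : ∀ i : Fin N, (((Finset.univ.erase i).card : ℝ)) = (N:ℝ) - 1 := by
    intro i
    rw [Finset.card_erase_of_mem (Finset.mem_univ i), Finset.card_univ, Fintype.card_fin]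
    have : 1 ≤ N := by omega
    push_cast [Nat.cast_sub this]
    ring
  have hcardM : ∀ j : Fin M, (((Finset.univ.erase j).card : ℝ)) = (M:ℝ) - 1 := by
    intro j
    rw [Finset.card_erase_of_mem (Finset.mem_univ j), Finset.card_univ, Fintype.card_fin]
    have : 1 ≤ M := by omega
    push_cast [Nat.cast_sub this]
    ring
  have hcont : ∀ β, Continuous (u β) := by
    rintro (i | j)
    · exact (hsol.contx i).inner continuous_const
    · exact (hsol.conty j).inner continuous_const
  have hinit : ∀ β, u β 0 ≤ c := by
    rintro (i | j)
    · rcases lt_or_ge (i:ℕ) k with hik | hik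
      · exact hd1 i hik 0 ⟨by linarith, le_refl _⟩
      · exact hd2 i hik
    · rcases lt_or_ge (j:ℕ) h with hjh | hjh
      · exact hd3 j hjh 0 ⟨by linarith, le_refl _⟩
      · exact hd4 j hjh
  have key := upcore u hcont hΛ (T := 6*τ) (by linarith) hinit ?_
  · exact fun t ht0 htT =>
      ⟨fun i => key (Sum.inl i) t ht0 htT, fun j => key (Sum.inr j) t ht0 htT⟩
  rintro (i | j) t b ht htT hcb hall
  · -- x agents
    have hqb : (⟪x i t, w⟫:ℝ) ≤ b := hall (Sum.inl i) t ht.le le_rfl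
    rcases lt_or_ge (i:ℕ) k with hik | hik
    · -- x leader
      have hx := hsol.odex_lead i hik t ht
      have hproj := proj_deriv (w := w) hx
      rw [inner_add_left, inner_comb, inner_comb] at hproj
      refine ⟨_, hproj, ?_⟩
      have hb1 : ∑ j ∈ Finset.univ.erase i,
          (ψ (x i t) (x j t) / ((N:ℝ) + h - 1)) * ((⟪x j t, w⟫:ℝ) - (⟪x i t, w⟫:ℝ))
          ≤ (((N:ℝ) - 1) * Λ / ((N:ℝ) + h - 1)) * (b - (⟪x i t, w⟫:ℝ)) := by
        refine sum_le_bound _ _ _ (fun r _ => div_nonneg (hψb _ _).1 hDx.le)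
          (fun r _ => hall (Sum.inl r) t ht.le le_rfl) hqb ?_
        refine coef_bound _ _ hDx (fun r _ => (hψb _ _).2) hΛ.le ?_
        rw [hcardN i]
      have hb2 : ∑ j ∈ Finset.univ.filter (fun j : Fin M => (j:ℕ) < h),
          (φ (x i t) (y j (t - τ)) / ((N:ℝ) + h - 1)) * ((⟪y j (t - τ), w⟫:ℝ) - (⟪x i t, w⟫:ℝ))
          ≤ ((h:ℝ) * Λ / ((N:ℝ) + h - 1)) * (b - (⟪x i t, w⟫:ℝ)) := by
        refine sum_le_bound _ _ _ (fun r _ => div_nonneg (hφb _ _).1 hDx.le)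
          (fun r hr => ?_) hqb ?_
        · rcases le_or_gt 0 (t - τ) with h0 | h0
          · exact hall (Sum.inr r) (t - τ) h0 (by linarith)
          · exact (hd3 r (Finset.mem_filter.1 hr).2 (t - τ) ⟨by linarith, h0.le⟩).trans hcb
        · refine coef_bound _ _ hDx (fun r _ => (hφb _ _).2) hΛ.le ?_
          exact_mod_cast filter_lt_card M h
      have hco : (((N:ℝ) - 1) * Λ / ((N:ℝ) + h - 1)) + ((h:ℝ) * Λ / ((N:ℝ) + h - 1)) = Λ := by
        field_simp
        ring
      have : u (Sum.inl i) t = (⟪x i t, w⟫:ℝ) := rfl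
      rw [this]
      nlinarith [hb1, hb2, hqb]
    · -- x follower
      have hx := hsol.odex_foll i hik t ht
      have hproj := proj_deriv (w := w) hx
      rw [inner_comb] at hproj
      refine ⟨_, hproj, ?_⟩
      have hb1 : ∑ j ∈ Finset.univ.erase i,
          (ψ (x i t) (x j t) / ((N:ℝ) - 1)) * ((⟪x j t, w⟫:ℝ) - (⟪x i t, w⟫:ℝ))
          ≤ (((N:ℝ) - 1) * Λ / ((N:ℝ) - 1)) * (b - (⟪x i t, w⟫:ℝ)) := by
        refine sum_le_bound _ _ _ (fun r _ => div_nonneg (hψb _ _).1 hDxF.le)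
          (fun r _ => hall (Sum.inl r) t ht.le le_rfl) hqb ?_
        refine coef_bound _ _ hDxF (fun r _ => (hψb _ _).2) hΛ.le ?_
        rw [hcardN i]
      have hco : ((N:ℝ) - 1) * Λ / ((N:ℝ) - 1) = Λ := by field_simp
      have : u (Sum.inl i) t = (⟪x i t, w⟫:ℝ) := rfl
      rw [this]
      rw [hco] at hb1
      exact hb1
  · -- y agents
    have hqb : (⟪y j t, w⟫:ℝ) ≤ b := hall (Sum.inr j) t ht.le le_rfl
    rcases lt_or_ge (j:ℕ) h with hjh | hjh
    · -- y leader
      have hy := hsol.odey_lead j hjh t ht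
      have hproj := proj_deriv (w := w) hy
      rw [inner_add_left, inner_comb, inner_comb] at hproj
      refine ⟨_, hproj, ?_⟩
      have hb1 : ∑ r ∈ Finset.univ.erase j,
          (ψs (y j t) (y r t) / ((M:ℝ) + k - 1)) * ((⟪y r t, w⟫:ℝ) - (⟪y j t, w⟫:ℝ))
          ≤ (((M:ℝ) - 1) * Λ / ((M:ℝ) + k - 1)) * (b - (⟪y j t, w⟫:ℝ)) := by
        refine sum_le_bound _ _ _ (fun r _ => div_nonneg (hψsb _ _).1 hDy.le)
          (fun r _ => hall (Sum.inr r) t ht.le le_rfl) hqb ?_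
        refine coef_bound _ _ hDy (fun r _ => (hψsb _ _).2) hΛ.le ?_
        rw [hcardM j]
      have hb2 : ∑ r ∈ Finset.univ.filter (fun r : Fin N => (r:ℕ) < k),
          (φs (y j t) (x r (t - τ)) / ((M:ℝ) + k - 1)) * ((⟪x r (t - τ), w⟫:ℝ) - (⟪y j t, w⟫:ℝ))
          ≤ ((k:ℝ) * Λ / ((M:ℝ) + k - 1)) * (b - (⟪y j t, w⟫:ℝ)) := by
        refine sum_le_bound _ _ _ (fun r _ => div_nonneg (hφsb _ _).1 hDy.le)
          (fun r hr => ?_) hqb ?_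
        · rcases le_or_gt 0 (t - τ) with h0 | h0
          · exact hall (Sum.inl r) (t - τ) h0 (by linarith)
          · exact (hd1 r (Finset.mem_filter.1 hr).2 (t - τ) ⟨by linarith, h0.le⟩).trans hcb
        · refine coef_bound _ _ hDy (fun r _ => (hφsb _ _).2) hΛ.le ?_
          exact_mod_cast filter_lt_card N k
      have hco : (((M:ℝ) - 1) * Λ / ((M:ℝ) + k - 1)) + ((k:ℝ) * Λ / ((M:ℝ) + k - 1)) = Λ := by
        field_simp
        ring
      have : u (Sum.inr j) t = (⟪y j t, w⟫:ℝ) := rfl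
      rw [this]
      nlinarith [hb1, hb2, hqb]
    · -- y follower
      have hy := hsol.odey_foll j hjh t ht
      have hproj := proj_deriv (w := w) hy
      rw [inner_comb] at hproj
      refine ⟨_, hproj, ?_⟩
      have hb1 : ∑ r ∈ Finset.univ.erase j,
          (ψs (y j t) (y r t) / ((M:ℝ) - 1)) * ((⟪y r t, w⟫:ℝ) - (⟪y j t, w⟫:ℝ))
          ≤ (((M:ℝ) - 1) * Λ / ((M:ℝ) - 1)) * (b - (⟪y j t, w⟫:ℝ)) := by
        refine sum_le_bound _ _ _ (fun r _ => div_nonneg (hψsb _ _).1 hDyF.le)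
          (fun r _ => hall (Sum.inr r) t ht.le le_rfl) hqb ?_
        refine coef_bound _ _ hDyF (fun r _ => (hψsb _ _).2) hΛ.le ?_
        rw [hcardM j]
      have hco : ((M:ℝ) - 1) * Λ / ((M:ℝ) - 1) = Λ := by field_simp
      have : u (Sum.inr j) t = (⟪y j t, w⟫:ℝ) := rfl
      rw [this]
      rw [hco] at hb1
      exact hb1


set_option maxHeartbeats 4000000 in
theorem stmt11
    (d N M h k : ℕ) (hd : 1 ≤ d) (hN : 2 ≤ N) (hM2 : 2 ≤ M) (hMN : M ≤ N)
    (hh1 : 1 ≤ h) (hhM : h < M) (hk1 : 1 ≤ k) (hkN : k < N)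
    (τ : ℝ) (hτ : 0 < τ)
    (ψ ψs φ φs : EuclideanSpace ℝ (Fin d) → EuclideanSpace ℝ (Fin d) → ℝ)
    (hψ : Admissible ψ) (hψs : Admissible ψs) (hφ : Admissible φ) (hφs : Admissible φs)
    (x : Fin N → ℝ → EuclideanSpace ℝ (Fin d)) (y : Fin M → ℝ → EuclideanSpace ℝ (Fin d))
    (hsol : IsSol h k τ ψ ψs φ φs x y)
    (v : EuclideanSpace ℝ (Fin d)) (Λ Γ m₀ M₀ : ℝ)
    (hΛ : Λ = Lam ψ ψs φ φs) (hΓ : Γ = Gam h k τ ψ ψs φ φs x y)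
    (hm₀ : m₀ = mInit h k τ v x y) (hM₀ : M₀ = MInit h k τ v x y)
    (hm₀pos : 0 < m₀) (hm₀M₀ : m₀ ≤ M₀)
    (σ : ℝ) (hσ : σ = min τ ((M₀ - m₀) / (4 * Λ * M₀)))
    (R : Fin N) (hRk : k ≤ (R : ℕ)) (hRM : ⟪x R 0, v⟫ = M₀) (δ₁ : ℝ)
    (hδ₁ : δ₁ = (1 / (2 * ((N : ℝ) - 1))) * (Γ / Λ) * (1 - Real.exp (-(Λ * σ))) * (M₀ / m₀ - 1))
    :
    ∀ t ∈ Icc (5 * τ) (6 * τ),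
      (∀ i : Fin N, m₀ * (1 + (1 / (((M : ℝ) - 1) * ((N : ℝ) + h - 1) * ((M : ℝ) + k - 1))) * (Γ / Λ) ^ 3 * δ₁ *
        Real.exp (-(6 * τ * Λ)) * (1 - Real.exp (-(Λ * τ))) ^ 3) ≤ ⟪x i t, v⟫) ∧
      (∀ j : Fin M, m₀ * (1 + (1 / (((M : ℝ) - 1) * ((N : ℝ) + h - 1) * ((M : ℝ) + k - 1))) * (Γ / Λ) ^ 3 * δ₁ *
        Real.exp (-(6 * τ * Λ)) * (1 - Real.exp (-(Λ * τ))) ^ 3) ≤ ⟪y j t, v⟫) := by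
  classical
  have hNR : (2:ℝ) ≤ (N:ℝ) := by exact_mod_cast hN
  have hMR : (2:ℝ) ≤ (M:ℝ) := by exact_mod_cast hM2
  have hhR : (1:ℝ) ≤ (h:ℝ) := by exact_mod_cast hh1
  have hkR : (1:ℝ) ≤ (k:ℝ) := by exact_mod_cast hk1
  have hDx : (0:ℝ) < (N:ℝ) + h - 1 := by linarith
  have hDxF : (0:ℝ) < (N:ℝ) - 1 := by linarith
  have hDy : (0:ℝ) < (M:ℝ) + k - 1 := by linarith
  have hDyF : (0:ℝ) < (M:ℝ) - 1 := by linarith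
  have hM₀pos : 0 < M₀ := lt_of_lt_of_le hm₀pos hm₀M₀
  -- upper bounds by Λ
  have hψΛ : ∀ z₁ z₂, ψ z₁ z₂ ≤ Λ := fun z₁ z₂ => by
    rw [hΛ]
    exact le_trans (le_ciSup hψ.2.2 (z₁, z₂)) (le_trans (le_max_left _ _) (le_max_left _ _))
  have hψsΛ : ∀ z₁ z₂, ψs z₁ z₂ ≤ Λ := fun z₁ z₂ => by
    rw [hΛ]
    exact le_trans (le_ciSup hψs.2.2 (z₁, z₂)) (le_trans (le_max_right _ _) (le_max_left _ _))
  have hφΛ : ∀ z₁ z₂, φ z₁ z₂ ≤ Λ := fun z₁ z₂ => by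
    rw [hΛ]
    exact le_trans (le_ciSup hφ.2.2 (z₁, z₂)) (le_trans (le_max_left _ _) (le_max_right _ _))
  have hφsΛ : ∀ z₁ z₂, φs z₁ z₂ ≤ Λ := fun z₁ z₂ => by
    rw [hΛ]
    exact le_trans (le_ciSup hφs.2.2 (z₁, z₂)) (le_trans (le_max_right _ _) (le_max_right _ _))
  have hΛpos : 0 < Λ := lt_of_lt_of_le (hψ.2.1 0 0) (hψΛ 0 0)
  have hψb : ∀ z₁ z₂, 0 ≤ ψ z₁ z₂ ∧ ψ z₁ z₂ ≤ Λ := fun z₁ z₂ => ⟨(hψ.2.1 _ _).le, hψΛ _ _⟩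
  have hψsb : ∀ z₁ z₂, 0 ≤ ψs z₁ z₂ ∧ ψs z₁ z₂ ≤ Λ := fun z₁ z₂ => ⟨(hψs.2.1 _ _).le, hψsΛ _ _⟩
  have hφb : ∀ z₁ z₂, 0 ≤ φ z₁ z₂ ∧ φ z₁ z₂ ≤ Λ := fun z₁ z₂ => ⟨(hφ.2.1 _ _).le, hφΛ _ _⟩
  have hφsb : ∀ z₁ z₂, 0 ≤ φs z₁ z₂ ∧ φs z₁ z₂ ≤ Λ := fun z₁ z₂ => ⟨(hφs.2.1 _ _).le, hφsΛ _ _⟩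
  -- Γ lower bounds
  have hbb : ∀ f : EuclideanSpace ℝ (Fin d) → EuclideanSpace ℝ (Fin d) → ℝ,
      Admissible f → BddBelow (Set.range fun p : {z : EuclideanSpace ℝ (Fin d) ×
        EuclideanSpace ℝ (Fin d) // ‖z.1‖ ≤ Cinit h k τ x y ∧ ‖z.2‖ ≤ Cinit h k τ x y} =>
        f p.1.1 p.1.2) := by
    intro f hf
    exact ⟨0, by rintro z ⟨p, rfl⟩; exact (hf.2.1 _ _).le⟩
  have hΓψ : ∀ z₁ z₂, ‖z₁‖ ≤ Cinit h k τ x y → ‖z₂‖ ≤ Cinit h k τ x y → Γ ≤ ψ z₁ z₂ := by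
    intro z₁ z₂ h1 h2
    rw [hΓ]
    exact le_trans (le_trans (min_le_left _ _) (min_le_left _ _))
      (ciInf_le (hbb ψ hψ) ⟨(z₁, z₂), h1, h2⟩)
  have hΓψs : ∀ z₁ z₂, ‖z₁‖ ≤ Cinit h k τ x y → ‖z₂‖ ≤ Cinit h k τ x y → Γ ≤ ψs z₁ z₂ := by
    intro z₁ z₂ h1 h2
    rw [hΓ]
    exact le_trans (le_trans (min_le_left _ _) (min_le_right _ _))
      (ciInf_le (hbb ψs hψs) ⟨(z₁, z₂), h1, h2⟩)
  have hΓφ : ∀ z₁ z₂, ‖z₁‖ ≤ Cinit h k τ x y → ‖z₂‖ ≤ Cinit h k τ x y → Γ ≤ φ z₁ z₂ := by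
    intro z₁ z₂ h1 h2
    rw [hΓ]
    exact le_trans (le_trans (min_le_right _ _) (min_le_left _ _))
      (ciInf_le (hbb φ hφ) ⟨(z₁, z₂), h1, h2⟩)
  have hΓφs : ∀ z₁ z₂, ‖z₁‖ ≤ Cinit h k τ x y → ‖z₂‖ ≤ Cinit h k τ x y → Γ ≤ φs z₁ z₂ := by
    intro z₁ z₂ h1 h2
    rw [hΓ]
    exact le_trans (le_trans (min_le_right _ _) (min_le_right _ _))
      (ciInf_le (hbb φs hφs) ⟨(z₁, z₂), h1, h2⟩)
  -- continuity of projections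
  have hcx : ∀ i : Fin N, Continuous fun s => (⟪x i s, v⟫ : ℝ) :=
    fun i => (hsol.contx i).inner continuous_const
  have hcy : ∀ j : Fin M, Continuous fun s => (⟪y j s, v⟫ : ℝ) :=
    fun j => (hsol.conty j).inner continuous_const
  -- initial data bounds
  have hNpos : 0 < N := by omega
  have hMpos : 0 < M := by omega
  have hxlead_data : ∀ i : Fin N, (i:ℕ) < k → ∀ s ∈ Icc (-τ) (0:ℝ),
      m₀ ≤ (⟪x i s, v⟫:ℝ) ∧ (⟪x i s, v⟫:ℝ) ≤ M₀ ∧ ‖x i s‖ ≤ Cinit h k τ x y := by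
    intro i hik s hs
    refine ⟨?_, ?_, ?_⟩
    · rw [hm₀]
      exact le_trans (le_trans (min_le_left _ _) (min_le_left _ _))
        (ciInf_le (bddBelow_proj hNpos _ _ (fun i => (hsol.contx i).inner continuous_const) _ _)
          ⟨⟨i, hik⟩, ⟨s, hs⟩⟩)
    · rw [hM₀]
      exact le_trans
        (le_ciSup (bddAbove_proj hNpos _ _ (fun i => (hsol.contx i).inner continuous_const) _ _)
          ⟨⟨i, hik⟩, ⟨s, hs⟩⟩)
        (le_trans (le_max_left _ _) (le_max_left _ _))
    · exact le_trans
        (le_ciSup (bddAbove_proj hNpos _ _ (fun i => (hsol.contx i).norm) _ _)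
          ⟨⟨i, hik⟩, ⟨s, hs⟩⟩)
        (le_trans (le_max_left _ _) (le_max_left _ _))
  have hylead_data : ∀ j : Fin M, (j:ℕ) < h → ∀ s ∈ Icc (-τ) (0:ℝ),
      m₀ ≤ (⟪y j s, v⟫:ℝ) ∧ (⟪y j s, v⟫:ℝ) ≤ M₀ ∧ ‖y j s‖ ≤ Cinit h k τ x y := by
    intro j hjh s hs
    refine ⟨?_, ?_, ?_⟩
    · rw [hm₀]
      exact le_trans (le_trans (min_le_right _ _) (min_le_left _ _))
        (ciInf_le (bddBelow_proj hMpos _ _ (fun j => (hsol.conty j).inner continuous_const) _ _)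
          ⟨⟨j, hjh⟩, ⟨s, hs⟩⟩)
    · rw [hM₀]
      exact le_trans
        (le_ciSup (bddAbove_proj hMpos _ _ (fun j => (hsol.conty j).inner continuous_const) _ _)
          ⟨⟨j, hjh⟩, ⟨s, hs⟩⟩)
        (le_trans (le_max_left _ _) (le_max_right _ _))
    · exact le_trans
        (le_ciSup (bddAbove_proj hMpos _ _ (fun j => (hsol.conty j).norm) _ _)
          ⟨⟨j, hjh⟩, ⟨s, hs⟩⟩)
        (le_trans (le_max_left _ _) (le_max_right _ _))
  have hxfoll_data : ∀ i : Fin N, k ≤ (i:ℕ) →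
      m₀ ≤ (⟪x i 0, v⟫:ℝ) ∧ (⟪x i 0, v⟫:ℝ) ≤ M₀ ∧ ‖x i 0‖ ≤ Cinit h k τ x y := by
    intro i hik
    refine ⟨?_, ?_, ?_⟩
    · rw [hm₀]
      exact le_trans (le_trans (min_le_left _ _) (min_le_right _ _))
        (ciInf_le (f := fun i : {i : Fin N // k ≤ (i:ℕ)} => (⟪x i.1 0, v⟫:ℝ))
          ((Set.finite_range _).bddBelow) ⟨i, hik⟩)
    · rw [hM₀]
      exact le_trans (le_ciSup (f := fun i : {i : Fin N // k ≤ (i:ℕ)} => (⟪x i.1 0, v⟫:ℝ))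
          ((Set.finite_range _).bddAbove) ⟨i, hik⟩)
        (le_trans (le_max_right _ _) (le_max_left _ _))
    · exact le_trans (le_ciSup (f := fun i : {i : Fin N // k ≤ (i:ℕ)} => ‖x i.1 0‖)
          ((Set.finite_range _).bddAbove) ⟨i, hik⟩)
        (le_trans (le_max_right _ _) (le_max_left _ _))
  have hyfoll_data : ∀ j : Fin M, h ≤ (j:ℕ) →
      m₀ ≤ (⟪y j 0, v⟫:ℝ) ∧ (⟪y j 0, v⟫:ℝ) ≤ M₀ ∧ ‖y j 0‖ ≤ Cinit h k τ x y := by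
    intro j hjh
    refine ⟨?_, ?_, ?_⟩
    · rw [hm₀]
      exact le_trans (le_trans (min_le_right _ _) (min_le_right _ _))
        (ciInf_le (f := fun j : {j : Fin M // h ≤ (j:ℕ)} => (⟪y j.1 0, v⟫:ℝ))
          ((Set.finite_range _).bddBelow) ⟨j, hjh⟩)
    · rw [hM₀]
      exact le_trans (le_ciSup (f := fun j : {j : Fin M // h ≤ (j:ℕ)} => (⟪y j.1 0, v⟫:ℝ))
          ((Set.finite_range _).bddAbove) ⟨j, hjh⟩)
        (le_trans (le_max_right _ _) (le_max_right _ _))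
    · exact le_trans (le_ciSup (f := fun j : {j : Fin M // h ≤ (j:ℕ)} => ‖y j.1 0‖)
          ((Set.finite_range _).bddAbove) ⟨j, hjh⟩)
        (le_trans (le_max_right _ _) (le_max_right _ _))
  have hC₀0 : 0 ≤ Cinit h k τ x y :=
    le_trans (norm_nonneg (x R 0)) (hxfoll_data R hRk).2.2
  haveI : Nonempty {z : EuclideanSpace ℝ (Fin d) × EuclideanSpace ℝ (Fin d) //
      ‖z.1‖ ≤ Cinit h k τ x y ∧ ‖z.2‖ ≤ Cinit h k τ x y} :=
    ⟨⟨(0, 0), by simpa using hC₀0, by simpa using hC₀0⟩⟩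
  have hΓ0 : 0 ≤ Γ := by
    rw [hΓ]
    have l1 : (0:ℝ) ≤ minOnBall (Cinit h k τ x y) ψ := le_ciInf fun p => (hψ.2.1 _ _).le
    have l2 : (0:ℝ) ≤ minOnBall (Cinit h k τ x y) ψs := le_ciInf fun p => (hψs.2.1 _ _).le
    have l3 : (0:ℝ) ≤ minOnBall (Cinit h k τ x y) φ := le_ciInf fun p => (hφ.2.1 _ _).le
    have l4 : (0:ℝ) ≤ minOnBall (Cinit h k τ x y) φs := le_ciInf fun p => (hφs.2.1 _ _).le
    exact le_min (le_min l1 l2) (le_min l3 l4)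
  have hΓΛ : Γ ≤ Λ :=
    le_trans (hΓψ 0 0 (by simpa using hC₀0) (by simpa using hC₀0)) (hψΛ 0 0)
  -- invariance
  have INV := fun (w : EuclideanSpace ℝ (Fin d)) (c : ℝ) h1 h2 h3 h4 =>
    invUp hN hM2 hh1 hhM hk1 hkN hτ hΛpos hψb hψsb hφb hφsb hsol w c h1 h2 h3 h4
  have hxup : ∀ (i : Fin N) t, 0 ≤ t → t ≤ 6*τ → (⟪x i t, v⟫:ℝ) ≤ M₀ := by
    intro i t ht0 ht6
    exact (INV v M₀ (fun i hik s hs => (hxlead_data i hik s hs).2.1)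
      (fun i hik => (hxfoll_data i hik).2.1)
      (fun j hjh s hs => (hylead_data j hjh s hs).2.1)
      (fun j hjh => (hyfoll_data j hjh).2.1) t ht0 ht6).1 i
  have hyup : ∀ (j : Fin M) t, 0 ≤ t → t ≤ 6*τ → (⟪y j t, v⟫:ℝ) ≤ M₀ := by
    intro j t ht0 ht6
    exact (INV v M₀ (fun i hik s hs => (hxlead_data i hik s hs).2.1)
      (fun i hik => (hxfoll_data i hik).2.1)
      (fun j hjh s hs => (hylead_data j hjh s hs).2.1)
      (fun j hjh => (hyfoll_data j hjh).2.1) t ht0 ht6).2 j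
  have hINVlow := INV (-v) (-m₀)
    (fun i hik s hs => by rw [inner_neg_right]; linarith [(hxlead_data i hik s hs).1])
    (fun i hik => by rw [inner_neg_right]; linarith [(hxfoll_data i hik).1])
    (fun j hjh s hs => by rw [inner_neg_right]; linarith [(hylead_data j hjh s hs).1])
    (fun j hjh => by rw [inner_neg_right]; linarith [(hyfoll_data j hjh).1])
  have hxlow : ∀ (i : Fin N) t, 0 ≤ t → t ≤ 6*τ → m₀ ≤ (⟪x i t, v⟫:ℝ) := by
    intro i t ht0 ht6
    have := (hINVlow t ht0 ht6).1 i
    rw [inner_neg_right] at this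
    linarith
  have hylow : ∀ (j : Fin M) t, 0 ≤ t → t ≤ 6*τ → m₀ ≤ (⟪y j t, v⟫:ℝ) := by
    intro j t ht0 ht6
    have := (hINVlow t ht0 ht6).2 j
    rw [inner_neg_right] at this
    linarith
  -- norm invariance
  have hnorms : ∀ t, 0 ≤ t → t ≤ 6*τ →
      (∀ i : Fin N, ‖x i t‖ ≤ Cinit h k τ x y) ∧ (∀ j : Fin M, ‖y j t‖ ≤ Cinit h k τ x y) := by
    intro t ht0 ht6
    have core : ∀ w : EuclideanSpace ℝ (Fin d),
        (∀ i : Fin N, (⟪x i t, w⟫:ℝ) ≤ Cinit h k τ x y * ‖w‖) ∧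
        (∀ j : Fin M, (⟪y j t, w⟫:ℝ) ≤ Cinit h k τ x y * ‖w‖) := by
      intro w
      refine INV w (Cinit h k τ x y * ‖w‖)
        (fun i hik s hs => le_trans (real_inner_le_norm _ _)
          (mul_le_mul_of_nonneg_right (hxlead_data i hik s hs).2.2 (norm_nonneg w)))
        (fun i hik => le_trans (real_inner_le_norm _ _)
          (mul_le_mul_of_nonneg_right (hxfoll_data i hik).2.2 (norm_nonneg w)))
        (fun j hjh s hs => le_trans (real_inner_le_norm _ _)
          (mul_le_mul_of_nonneg_right (hylead_data j hjh s hs).2.2 (norm_nonneg w)))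
        (fun j hjh => le_trans (real_inner_le_norm _ _)
          (mul_le_mul_of_nonneg_right (hyfoll_data j hjh).2.2 (norm_nonneg w)))
        t ht0 ht6
    constructor
    · intro i
      have := (core (x i t)).1 i
      rw [real_inner_self_eq_norm_mul_norm] at this
      rcases eq_or_lt_of_le (norm_nonneg (x i t)) with h0 | h0
      · rw [← h0]; exact hC₀0
      · exact le_of_mul_le_mul_right (by linarith) h0
    · intro j
      have := (core (y j t)).2 j
      rw [real_inner_self_eq_norm_mul_norm] at this
      rcases eq_or_lt_of_le (norm_nonneg (y j t)) with h0 | h0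
      · rw [← h0]; exact hC₀0
      · exact le_of_mul_le_mul_right (by linarith) h0
  have hxnorm : ∀ (i : Fin N) t, 0 ≤ t → t ≤ 6*τ → ‖x i t‖ ≤ Cinit h k τ x y :=
    fun i t ht0 ht6 => (hnorms t ht0 ht6).1 i
  have hynorm : ∀ (j : Fin M) t, 0 ≤ t → t ≤ 6*τ → ‖y j t‖ ≤ Cinit h k τ x y :=
    fun j t ht0 ht6 => (hnorms t ht0 ht6).2 j
  -- cardinality and coefficient-sum facts
  have hcardN : ∀ i : Fin N, (((Finset.univ.erase i).card : ℝ)) = (N:ℝ) - 1 := by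
    intro i
    rw [Finset.card_erase_of_mem (Finset.mem_univ i), Finset.card_univ, Fintype.card_fin]
    have h1 : 1 ≤ N := by omega
    push_cast [Nat.cast_sub h1]
    ring
  have hcardM : ∀ j : Fin M, (((Finset.univ.erase j).card : ℝ)) = (M:ℝ) - 1 := by
    intro j
    rw [Finset.card_erase_of_mem (Finset.mem_univ j), Finset.card_univ, Fintype.card_fin]
    have h1 : 1 ≤ M := by omega
    push_cast [Nat.cast_sub h1]
    ring
  have hcoefN : ∀ (i : Fin N) (s : ℝ),
      ∑ r ∈ Finset.univ.erase i, ψ (x i s) (x r s) / ((N:ℝ) - 1) ≤ Λ := by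
    intro i s
    have hb := coef_bound (Finset.univ.erase i) (fun r => ψ (x i s) (x r s)) hDxF
      (fun r _ => hψΛ _ _) hΛpos.le (le_of_eq (hcardN i))
    have he : ((N:ℝ) - 1) * Λ / ((N:ℝ) - 1) = Λ := by field_simp
    rw [he] at hb
    exact hb
  have hcoefM : ∀ (j : Fin M) (s : ℝ),
      ∑ r ∈ Finset.univ.erase j, ψs (y j s) (y r s) / ((M:ℝ) - 1) ≤ Λ := by
    intro j s
    have hb := coef_bound (Finset.univ.erase j) (fun r => ψs (y j s) (y r s)) hDyF
      (fun r _ => hψsΛ _ _) hΛpos.le (le_of_eq (hcardM j))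
    have he : ((M:ℝ) - 1) * Λ / ((M:ℝ) - 1) = Λ := by field_simp
    rw [he] at hb
    exact hb
  -- σ facts
  have hσ0 : 0 ≤ σ := by
    rw [hσ]
    exact le_min hτ.le (div_nonneg (by linarith) (by positivity))
  have hστ : σ ≤ τ := by rw [hσ]; exact min_le_left _ _
  have hσ6 : σ ≤ 6*τ := by linarith
  have hσle : σ * (4*Λ*M₀) ≤ M₀ - m₀ := by
    have h1 : σ ≤ (M₀ - m₀)/(4*Λ*M₀) := by rw [hσ]; exact min_le_right _ _
    have h2 : (0:ℝ) < 4*Λ*M₀ := by positivity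
    calc σ * (4*Λ*M₀) ≤ ((M₀ - m₀)/(4*Λ*M₀)) * (4*Λ*M₀) :=
          mul_le_mul_of_nonneg_right h1 h2.le
      _ = M₀ - m₀ := div_mul_cancel₀ _ h2.ne'
  -- Step 1 : the follower R stays above the midpoint on [0, σ]
  have hS1 : ∀ t, 0 ≤ t → t ≤ σ → (M₀ + m₀)/2 ≤ (⟪x R t, v⟫:ℝ) := by
    intro t ht0 htσ
    have hder : ∀ s ∈ Ioo (0:ℝ) t, ∃ g, HasDerivAt (fun s => (⟪x R s, v⟫:ℝ)) g s ∧
        -(Λ*(M₀ - m₀)) ≤ g := by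
      intro s hs
      have hs6 : s ≤ 6*τ := by linarith [hs.2]
      have hx := hsol.odex_foll R hRk s hs.1
      have hp := proj_deriv (w := v) hx
      rw [inner_comb] at hp
      refine ⟨_, hp, ?_⟩
      have hq : m₀ ≤ (⟪x R s, v⟫:ℝ) := hxlow R s hs.1.le hs6
      have hqM : (⟪x R s, v⟫:ℝ) ≤ M₀ := hxup R s hs.1.le hs6
      have hge := sum_ge_bound (Finset.univ.erase R)
        (fun r => ψ (x R s) (x r s) / ((N:ℝ) - 1)) (fun r => (⟪x r s, v⟫:ℝ))
        (fun r _ => div_nonneg (hψ.2.1 _ _).le hDxF.le)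
        (fun r _ => hxlow r s hs.1.le hs6) hq (hcoefN R s)
      have : Λ*((⟪x R s, v⟫:ℝ) - m₀) ≤ Λ*(M₀ - m₀) :=
        mul_le_mul_of_nonneg_left (by linarith) hΛpos.le
      linarith
    have hlin := linLower (fun s => (⟪x R s, v⟫:ℝ)) ht0 ((hcx R).continuousOn) hder
    rw [hRM] at hlin
    have e1 : Λ*(M₀-m₀)*σ*(4*M₀) = (σ*(4*Λ*M₀))*(M₀-m₀) := by ring
    have e2 : (σ*(4*Λ*M₀))*(M₀-m₀) ≤ (M₀-m₀)*(M₀-m₀) :=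
      mul_le_mul_of_nonneg_right hσle (by linarith)
    have e3 : (M₀-m₀)*(M₀-m₀) ≤ M₀*(M₀-m₀) :=
      mul_le_mul_of_nonneg_right (by linarith) (by linarith)
    have e4a : (Λ*(M₀-m₀)*σ*4)*M₀ ≤ (M₀-m₀)*M₀ := by nlinarith [e1, e2, e3]
    have e4 : Λ*(M₀-m₀)*σ ≤ (M₀-m₀)/4 := by
      have := le_of_mul_le_mul_right e4a hM₀pos
      linarith
    have e5 : Λ*(M₀-m₀)*t ≤ Λ*(M₀-m₀)*σ :=
      mul_le_mul_of_nonneg_left htσ (mul_nonneg hΛpos.le (sub_nonneg.2 hm₀M₀))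
    linarith
  -- basic ratio facts
  have hrΓΛ0 : 0 ≤ Γ/Λ := div_nonneg hΓ0 hΛpos.le
  have hrΓΛ1 : Γ/Λ ≤ 1 := (div_le_one hΛpos).2 hΓΛ
  have hexpσ0 : 0 ≤ 1 - Real.exp (-(Λ*σ)) := by
    have : Real.exp (-(Λ*σ)) ≤ 1 := Real.exp_le_one_iff.2 (by nlinarith)
    linarith
  have hexpσ1 : 1 - Real.exp (-(Λ*σ)) ≤ 1 := by linarith [Real.exp_pos (-(Λ*σ))]
  have hδ₁0 : 0 ≤ δ₁ := by
    rw [hδ₁]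
    have hr : 0 ≤ M₀/m₀ - 1 := by
      rw [sub_nonneg, le_div_iff₀ hm₀pos]
      linarith
    have : (0:ℝ) ≤ 1/(2*((N:ℝ)-1)) := by positivity
    positivity
  have hm₀δ : m₀ * δ₁ = Γ/Λ * (1 - Real.exp (-(Λ*σ))) * (M₀ - m₀) / (2*((N:ℝ)-1)) := by
    rw [hδ₁]
    field_simp
  -- Step 2a : all followers are above m₀ + m₀δ₁ at time σ
  have hS2a : ∀ i : Fin N, k ≤ (i:ℕ) → m₀ + m₀*δ₁ ≤ (⟪x i σ, v⟫:ℝ) := by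
    intro i hik
    have hδle : m₀*δ₁ ≤ (M₀ - m₀)/2 := by
      rw [hm₀δ]
      have hX0 : 0 ≤ Γ/Λ * (1 - Real.exp (-(Λ*σ))) * (M₀ - m₀) := by
        apply mul_nonneg (mul_nonneg hrΓΛ0 hexpσ0) (by linarith)
      have hX1 : Γ/Λ * (1 - Real.exp (-(Λ*σ))) * (M₀ - m₀) ≤ M₀ - m₀ := by
        have h1 : Γ/Λ * (1 - Real.exp (-(Λ*σ))) ≤ 1 := mul_le_one₀ hrΓΛ1 hexpσ0 hexpσ1
        have := mul_le_mul_of_nonneg_right h1 (sub_nonneg.2 hm₀M₀)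
        linarith
      calc Γ/Λ * (1 - Real.exp (-(Λ*σ))) * (M₀ - m₀) / (2*((N:ℝ)-1))
          ≤ Γ/Λ * (1 - Real.exp (-(Λ*σ))) * (M₀ - m₀) / 2 := by gcongr; linarith
        _ ≤ (M₀ - m₀)/2 := by linarith
    by_cases hiR : i = R
    · subst hiR
      have := hS1 σ hσ0 le_rfl
      linarith
    · have hder : ∀ s ∈ Ioo (0:ℝ) σ, ∃ g, HasDerivAt (fun s => (⟪x i s, v⟫:ℝ)) g s ∧
          -(Λ*((⟪x i s, v⟫:ℝ) - m₀)) + (Γ/((N:ℝ)-1)) * ((M₀ - m₀)/2) ≤ g := by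
        intro s hs
        have hs6 : s ≤ 6*τ := by linarith [hs.2]
        have hx := hsol.odex_foll i hik s hs.1
        have hp := proj_deriv (w := v) hx
        rw [inner_comb] at hp
        refine ⟨_, hp, ?_⟩
        have hq : m₀ ≤ (⟪x i s, v⟫:ℝ) := hxlow i s hs.1.le hs6
        have hRmem : R ∈ Finset.univ.erase i :=
          Finset.mem_erase.2 ⟨fun hc => hiR hc.symm, Finset.mem_univ _⟩
        have hγ : Γ/((N:ℝ)-1) ≤ ψ (x i s) (x R s) / ((N:ℝ)-1) := by
          have := hΓψ (x i s) (x R s) (hxnorm i s hs.1.le hs6) (hxnorm R s hs.1.le hs6)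
          gcongr
        have hge := sum_ge_bound' (Finset.univ.erase i)
          (fun r => ψ (x i s) (x r s) / ((N:ℝ)-1)) (fun r => (⟪x r s, v⟫:ℝ))
          hRmem
          (fun r _ => div_nonneg (hψ.2.1 _ _).le hDxF.le)
          (fun r _ => hxlow r s hs.1.le hs6) hq (hcoefN i s) hγ
          (div_nonneg hΓ0 hDxF.le)
          (by have := hS1 s hs.1.le (by linarith [hs.2]); linarith :
            m₀ + (M₀ - m₀)/2 ≤ (⟪x R s, v⟫:ℝ))
          (by linarith : (0:ℝ) ≤ (M₀ - m₀)/2)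
        exact hge
      have hg := gronLower (fun s => (⟪x i s, v⟫:ℝ)) hσ0 hΛpos ((hcx i).continuousOn) hder
      rw [sub_zero] at hg
      have h0m : m₀ ≤ (⟪x i 0, v⟫:ℝ) := (hxfoll_data i hik).1
      have heq : Γ/((N:ℝ)-1) * ((M₀-m₀)/2) / Λ * (1 - Real.exp (-(Λ*σ))) = m₀*δ₁ := by
        rw [hm₀δ]
        field_simp
      have hmid : 0 ≤ ((⟪x i 0, v⟫:ℝ) - m₀) * Real.exp (-(Λ*σ)) :=
        mul_nonneg (by linarith) (Real.exp_pos _).le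
      linarith
  -- Step 2b : followers stay above m₀ + m₀δ₁ exp(-Λ(t-σ)) on [σ, 6τ]
  have hFoll : ∀ i : Fin N, k ≤ (i:ℕ) → ∀ t, σ ≤ t → t ≤ 6*τ →
      m₀ + m₀*δ₁*Real.exp (-(Λ*(t-σ))) ≤ (⟪x i t, v⟫:ℝ) := by
    intro i hik t hσt ht6
    have hder : ∀ s ∈ Ioo σ t, ∃ g, HasDerivAt (fun s => (⟪x i s, v⟫:ℝ)) g s ∧
        -(Λ*((⟪x i s, v⟫:ℝ) - m₀)) + 0 ≤ g := by
      intro s hs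
      have hs0 : 0 < s := lt_of_le_of_lt hσ0 hs.1
      have hs6 : s ≤ 6*τ := by linarith [hs.2]
      have hx := hsol.odex_foll i hik s hs0
      have hp := proj_deriv (w := v) hx
      rw [inner_comb] at hp
      refine ⟨_, hp, ?_⟩
      have hq : m₀ ≤ (⟪x i s, v⟫:ℝ) := hxlow i s hs0.le hs6
      have hge := sum_ge_bound (Finset.univ.erase i)
        (fun r => ψ (x i s) (x r s) / ((N:ℝ)-1)) (fun r => (⟪x r s, v⟫:ℝ))
        (fun r _ => div_nonneg (hψ.2.1 _ _).le hDxF.le)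
        (fun r _ => hxlow r s hs0.le hs6) hq (hcoefN i s)
      linarith
    have hg := gronLower (fun s => (⟪x i s, v⟫:ℝ)) hσt hΛpos ((hcx i).continuousOn) hder
    rw [zero_div, zero_mul, add_zero] at hg
    have hmid : 0 ≤ ((⟪x i σ, v⟫:ℝ) - m₀ - m₀*δ₁) * Real.exp (-(Λ*(t-σ))) :=
      mul_nonneg (by linarith [hS2a i hik]) (Real.exp_pos _).le
    nlinarith [hg, hmid]
  set c0 : ℝ := m₀*δ₁*Real.exp (-(6*τ*Λ)) with hc0def
  have hc0nn : 0 ≤ c0 :=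
    mul_nonneg (mul_nonneg hm₀pos.le hδ₁0) (Real.exp_pos _).le
  have hFollc0 : ∀ i : Fin N, k ≤ (i:ℕ) → ∀ t, τ ≤ t → t ≤ 6*τ →
      m₀ + c0 ≤ (⟪x i t, v⟫:ℝ) := by
    intro i hik t hτt ht6
    have h1 := hFoll i hik t (le_trans hστ hτt) ht6
    have h2 : Real.exp (-(6*τ*Λ)) ≤ Real.exp (-(Λ*(t-σ))) := by
      apply Real.exp_le_exp.2
      have h3 : t - σ ≤ 6*τ := by linarith
      have := mul_le_mul_of_nonneg_left h3 hΛpos.le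
      linarith
    have h3 : c0 ≤ m₀*δ₁*Real.exp (-(Λ*(t-σ))) := by
      rw [hc0def]
      exact mul_le_mul_of_nonneg_left h2 (mul_nonneg hm₀pos.le hδ₁0)
    linarith
  -- exponential factor facts
  have hEτ1 : Real.exp (-(Λ*τ)) ≤ 1 := Real.exp_le_one_iff.2 (by nlinarith)
  have hffnn : 0 ≤ Γ/Λ * (1 - Real.exp (-(Λ*τ))) := mul_nonneg hrΓΛ0 (by linarith)
  have hff1 : Γ/Λ * (1 - Real.exp (-(Λ*τ))) ≤ 1 :=
    mul_le_one₀ hrΓΛ1 (by linarith) (by linarith [Real.exp_pos (-(Λ*τ))])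
  set c1 : ℝ := c0 * (Γ/Λ * (1 - Real.exp (-(Λ*τ))) / ((N:ℝ)+h-1)) with hc1def
  set c2 : ℝ := c1 * (Γ/Λ * (1 - Real.exp (-(Λ*τ))) / ((M:ℝ)+k-1)) with hc2def
  set c3 : ℝ := c2 * (Γ/Λ * (1 - Real.exp (-(Λ*τ))) / ((M:ℝ)-1)) with hc3def
  -- Step 3 : x-leaders
  have hLead : ∀ i : Fin N, (i:ℕ) < k → ∀ t, 2*τ ≤ t → t ≤ 6*τ →
      m₀ + c1 ≤ (⟪x i t, v⟫:ℝ) := by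
    intro i hik t h2t ht6
    have hτt : τ ≤ t := by linarith
    have hder : ∀ s ∈ Ioo τ t, ∃ g, HasDerivAt (fun s => (⟪x i s, v⟫:ℝ)) g s ∧
        -(Λ*((⟪x i s, v⟫:ℝ) - m₀)) + (Γ/((N:ℝ)+h-1)) * c0 ≤ g := by
      intro s hs
      have hs0 : 0 < s := lt_trans hτ hs.1
      have hs6 : s ≤ 6*τ := by linarith [hs.2]
      have hx := hsol.odex_lead i hik s hs0
      have hp := proj_deriv (w := v) hx
      rw [inner_add_left, inner_comb, inner_comb] at hp
      refine ⟨_, hp, ?_⟩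
      have hq : m₀ ≤ (⟪x i s, v⟫:ℝ) := hxlow i s hs0.le hs6
      have hRi : R ≠ i := by
        intro hc
        rw [hc] at hRk
        omega
      have hRmem : R ∈ Finset.univ.erase i := Finset.mem_erase.2 ⟨hRi, Finset.mem_univ _⟩
      have hγ : Γ/((N:ℝ)+h-1) ≤ ψ (x i s) (x R s) / ((N:ℝ)+h-1) := by
        have := hΓψ (x i s) (x R s) (hxnorm i s hs0.le hs6) (hxnorm R s hs0.le hs6)
        gcongr
      have hsum1le : ∑ r ∈ Finset.univ.erase i, ψ (x i s) (x r s)/((N:ℝ)+h-1)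
          ≤ ((N:ℝ)-1)*Λ/((N:ℝ)+h-1) :=
        coef_bound _ _ hDx (fun r _ => hψΛ _ _) hΛpos.le (le_of_eq (hcardN i))
      have hsum2le : ∑ r ∈ Finset.univ.filter (fun j : Fin M => (j:ℕ) < h),
          φ (x i s) (y r (s-τ))/((N:ℝ)+h-1) ≤ (h:ℝ)*Λ/((N:ℝ)+h-1) :=
        coef_bound _ _ hDx (fun r _ => hφΛ _ _) hΛpos.le (by exact_mod_cast filter_lt_card M h)
      have hge1 := sum_ge_bound' (Finset.univ.erase i)
        (fun r => ψ (x i s) (x r s)/((N:ℝ)+h-1)) (fun r => (⟪x r s, v⟫:ℝ)) hRmem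
        (fun r _ => div_nonneg (hψ.2.1 _ _).le hDx.le)
        (fun r _ => hxlow r s hs0.le hs6) hq hsum1le hγ (div_nonneg hΓ0 hDx.le)
        (by have := hFollc0 R hRk s hs.1.le hs6; linarith : m₀ + c0 ≤ (⟪x R s, v⟫:ℝ)) hc0nn
      have hge2 := sum_ge_bound (Finset.univ.filter (fun j : Fin M => (j:ℕ) < h))
        (fun r => φ (x i s) (y r (s-τ))/((N:ℝ)+h-1)) (fun r => (⟪y r (s-τ), v⟫:ℝ))
        (fun r _ => div_nonneg (hφ.2.1 _ _).le hDx.le)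
        (fun r _ => hylow r (s-τ) (by linarith [hs.1]) (by linarith [hs.2])) hq hsum2le
      have hco : (((N:ℝ)-1)*Λ/((N:ℝ)+h-1)) * ((⟪x i s, v⟫:ℝ) - m₀)
          + ((h:ℝ)*Λ/((N:ℝ)+h-1)) * ((⟪x i s, v⟫:ℝ) - m₀) = Λ * ((⟪x i s, v⟫:ℝ) - m₀) := by
        rw [← add_mul]
        congr 1
        field_simp
        ring
      linarith
    have hg := gronLower (fun s => (⟪x i s, v⟫:ℝ)) hτt hΛpos ((hcx i).continuousOn) hder
    have hEle : Real.exp (-(Λ*(t-τ))) ≤ Real.exp (-(Λ*τ)) := by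
      apply Real.exp_le_exp.2
      have h3 : τ ≤ t - τ := by linarith
      have := mul_le_mul_of_nonneg_left h3 hΛpos.le
      linarith
    have hSnn : 0 ≤ (Γ/((N:ℝ)+h-1)) * c0 / Λ :=
      div_nonneg (mul_nonneg (div_nonneg hΓ0 hDx.le) hc0nn) hΛpos.le
    have hSc1 : (Γ/((N:ℝ)+h-1)) * c0 / Λ * (1 - Real.exp (-(Λ*τ))) = c1 := by
      rw [hc1def]
      field_simp
    have huτ : m₀ ≤ (⟪x i τ, v⟫:ℝ) := hxlow i τ hτ.le (by linarith)
    have hmid : 0 ≤ ((⟪x i τ, v⟫:ℝ) - m₀) * Real.exp (-(Λ*(t-τ))) :=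
      mul_nonneg (by linarith) (Real.exp_pos _).le
    have hthird : (Γ/((N:ℝ)+h-1)) * c0 / Λ * (1 - Real.exp (-(Λ*τ)))
        ≤ (Γ/((N:ℝ)+h-1)) * c0 / Λ * (1 - Real.exp (-(Λ*(t-τ)))) :=
      mul_le_mul_of_nonneg_left (by linarith) hSnn
    rw [hSc1] at hthird
    linarith
  -- Step 4 : y-leaders
  have hYLead : ∀ j : Fin M, (j:ℕ) < h → ∀ t, 4*τ ≤ t → t ≤ 6*τ →
      m₀ + c2 ≤ (⟪y j t, v⟫:ℝ) := by
    intro j hjh t h4t ht6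
    have h3t : 3*τ ≤ t := by linarith
    have hc1nn : 0 ≤ c1 := by
      rw [hc1def]
      exact mul_nonneg hc0nn (div_nonneg hffnn hDx.le)
    have hder : ∀ s ∈ Ioo (3*τ) t, ∃ g, HasDerivAt (fun s => (⟪y j s, v⟫:ℝ)) g s ∧
        -(Λ*((⟪y j s, v⟫:ℝ) - m₀)) + (Γ/((M:ℝ)+k-1)) * c1 ≤ g := by
      intro s hs
      have hs0 : 0 < s := by nlinarith [hs.1, hτ]
      have hs6 : s ≤ 6*τ := by linarith [hs.2]
      have hy := hsol.odey_lead j hjh s hs0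
      have hp := proj_deriv (w := v) hy
      rw [inner_add_left, inner_comb, inner_comb] at hp
      refine ⟨_, hp, ?_⟩
      have hq : m₀ ≤ (⟪y j s, v⟫:ℝ) := hylow j s hs0.le hs6
      have hx0 : Fin N := ⟨0, by omega⟩
      have hx0mem : (⟨0, by omega⟩ : Fin N) ∈
          Finset.univ.filter (fun r : Fin N => (r:ℕ) < k) :=
        Finset.mem_filter.2 ⟨Finset.mem_univ _, by simp; omega⟩
      have hγ : Γ/((M:ℝ)+k-1) ≤ φs (y j s) (x ⟨0, by omega⟩ (s-τ)) / ((M:ℝ)+k-1) := by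
        have := hΓφs (y j s) (x ⟨0, by omega⟩ (s-τ)) (hynorm j s hs0.le hs6)
          (hxnorm _ (s-τ) (by linarith [hs.1]) (by linarith [hs.2]))
        gcongr
      have hsum1le : ∑ r ∈ Finset.univ.erase j, ψs (y j s) (y r s)/((M:ℝ)+k-1)
          ≤ ((M:ℝ)-1)*Λ/((M:ℝ)+k-1) :=
        coef_bound _ _ hDy (fun r _ => hψsΛ _ _) hΛpos.le (le_of_eq (hcardM j))
      have hsum2le : ∑ r ∈ Finset.univ.filter (fun r : Fin N => (r:ℕ) < k),
          φs (y j s) (x r (s-τ))/((M:ℝ)+k-1) ≤ (k:ℝ)*Λ/((M:ℝ)+k-1) :=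
        coef_bound _ _ hDy (fun r _ => hφsΛ _ _) hΛpos.le (by exact_mod_cast filter_lt_card N k)
      have hge1 := sum_ge_bound (Finset.univ.erase j)
        (fun r => ψs (y j s) (y r s)/((M:ℝ)+k-1)) (fun r => (⟪y r s, v⟫:ℝ))
        (fun r _ => div_nonneg (hψs.2.1 _ _).le hDy.le)
        (fun r _ => hylow r s hs0.le hs6) hq hsum1le
      have hge2 := sum_ge_bound' (Finset.univ.filter (fun r : Fin N => (r:ℕ) < k))
        (fun r => φs (y j s) (x r (s-τ))/((M:ℝ)+k-1)) (fun r => (⟪x r (s-τ), v⟫:ℝ)) hx0mem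
        (fun r _ => div_nonneg (hφs.2.1 _ _).le hDy.le)
        (fun r _ => hxlow r (s-τ) (by linarith [hs.1]) (by linarith [hs.2])) hq hsum2le hγ
        (div_nonneg hΓ0 hDy.le)
        (by
          have := hLead ⟨0, by omega⟩ (by simp; omega) (s-τ)
            (by linarith [hs.1]) (by linarith [hs.2])
          linarith : m₀ + c1 ≤ (⟪x (⟨0, by omega⟩ : Fin N) (s-τ), v⟫:ℝ)) hc1nn
      have hco : (((M:ℝ)-1)*Λ/((M:ℝ)+k-1)) * ((⟪y j s, v⟫:ℝ) - m₀)
          + ((k:ℝ)*Λ/((M:ℝ)+k-1)) * ((⟪y j s, v⟫:ℝ) - m₀) = Λ * ((⟪y j s, v⟫:ℝ) - m₀) := by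
        rw [← add_mul]
        congr 1
        field_simp
        ring
      linarith
    have hg := gronLower (fun s => (⟪y j s, v⟫:ℝ)) h3t hΛpos ((hcy j).continuousOn) hder
    have hEle : Real.exp (-(Λ*(t-3*τ))) ≤ Real.exp (-(Λ*τ)) := by
      apply Real.exp_le_exp.2
      have h3 : τ ≤ t - 3*τ := by linarith
      have := mul_le_mul_of_nonneg_left h3 hΛpos.le
      linarith
    have hSnn : 0 ≤ (Γ/((M:ℝ)+k-1)) * c1 / Λ :=
      div_nonneg (mul_nonneg (div_nonneg hΓ0 hDy.le) hc1nn) hΛpos.le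
    have hSc2 : (Γ/((M:ℝ)+k-1)) * c1 / Λ * (1 - Real.exp (-(Λ*τ))) = c2 := by
      rw [hc2def]
      field_simp
    have huτ : m₀ ≤ (⟪y j (3*τ), v⟫:ℝ) := hylow j (3*τ) (by linarith) (by linarith)
    have hmid : 0 ≤ ((⟪y j (3*τ), v⟫:ℝ) - m₀) * Real.exp (-(Λ*(t-3*τ))) :=
      mul_nonneg (by linarith) (Real.exp_pos _).le
    have hthird : (Γ/((M:ℝ)+k-1)) * c1 / Λ * (1 - Real.exp (-(Λ*τ)))
        ≤ (Γ/((M:ℝ)+k-1)) * c1 / Λ * (1 - Real.exp (-(Λ*(t-3*τ)))) :=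
      mul_le_mul_of_nonneg_left (by linarith) hSnn
    rw [hSc2] at hthird
    linarith
  -- Step 5 : y-followers
  have hYFoll : ∀ j : Fin M, h ≤ (j:ℕ) → ∀ t, 5*τ ≤ t → t ≤ 6*τ →
      m₀ + c3 ≤ (⟪y j t, v⟫:ℝ) := by
    intro j hjh t h5t ht6
    have h4t : 4*τ ≤ t := by linarith
    have hc2nn : 0 ≤ c2 := by
      rw [hc2def]
      refine mul_nonneg ?_ (div_nonneg hffnn hDy.le)
      rw [hc1def]
      exact mul_nonneg hc0nn (div_nonneg hffnn hDx.le)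
    have hder : ∀ s ∈ Ioo (4*τ) t, ∃ g, HasDerivAt (fun s => (⟪y j s, v⟫:ℝ)) g s ∧
        -(Λ*((⟪y j s, v⟫:ℝ) - m₀)) + (Γ/((M:ℝ)-1)) * c2 ≤ g := by
      intro s hs
      have hs0 : 0 < s := by nlinarith [hs.1, hτ]
      have hs6 : s ≤ 6*τ := by linarith [hs.2]
      have hy := hsol.odey_foll j hjh s hs0
      have hp := proj_deriv (w := v) hy
      rw [inner_comb] at hp
      refine ⟨_, hp, ?_⟩
      have hq : m₀ ≤ (⟪y j s, v⟫:ℝ) := hylow j s hs0.le hs6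
      have hy0j : (⟨0, by omega⟩ : Fin M) ≠ j := by
        intro hc
        have : (0:ℕ) = (j:ℕ) := congrArg Fin.val hc
        omega
      have hy0mem : (⟨0, by omega⟩ : Fin M) ∈ Finset.univ.erase j :=
        Finset.mem_erase.2 ⟨hy0j, Finset.mem_univ _⟩
      have hγ : Γ/((M:ℝ)-1) ≤ ψs (y j s) (y ⟨0, by omega⟩ s) / ((M:ℝ)-1) := by
        have := hΓψs (y j s) (y ⟨0, by omega⟩ s) (hynorm j s hs0.le hs6)
          (hynorm _ s hs0.le hs6)
        gcongr
      have hge := sum_ge_bound' (Finset.univ.erase j)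
        (fun r => ψs (y j s) (y r s)/((M:ℝ)-1)) (fun r => (⟪y r s, v⟫:ℝ)) hy0mem
        (fun r _ => div_nonneg (hψs.2.1 _ _).le hDyF.le)
        (fun r _ => hylow r s hs0.le hs6) hq (hcoefM j s) hγ (div_nonneg hΓ0 hDyF.le)
        (by
          have := hYLead ⟨0, by omega⟩ (by simp; omega) s (by linarith [hs.1]) hs6
          linarith : m₀ + c2 ≤ (⟪y (⟨0, by omega⟩ : Fin M) s, v⟫:ℝ)) hc2nn
      linarith
    have hg := gronLower (fun s => (⟪y j s, v⟫:ℝ)) h4t hΛpos ((hcy j).continuousOn) hder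
    have hEle : Real.exp (-(Λ*(t-4*τ))) ≤ Real.exp (-(Λ*τ)) := by
      apply Real.exp_le_exp.2
      have h3 : τ ≤ t - 4*τ := by linarith
      have := mul_le_mul_of_nonneg_left h3 hΛpos.le
      linarith
    have hSnn : 0 ≤ (Γ/((M:ℝ)-1)) * c2 / Λ :=
      div_nonneg (mul_nonneg (div_nonneg hΓ0 hDyF.le) hc2nn) hΛpos.le
    have hSc3 : (Γ/((M:ℝ)-1)) * c2 / Λ * (1 - Real.exp (-(Λ*τ))) = c3 := by
      rw [hc3def]
      field_simp
    have huτ : m₀ ≤ (⟪y j (4*τ), v⟫:ℝ) := hylow j (4*τ) (by linarith) (by linarith)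
    have hmid : 0 ≤ ((⟪y j (4*τ), v⟫:ℝ) - m₀) * Real.exp (-(Λ*(t-4*τ))) :=
      mul_nonneg (by linarith) (Real.exp_pos _).le
    have hthird : (Γ/((M:ℝ)-1)) * c2 / Λ * (1 - Real.exp (-(Λ*τ)))
        ≤ (Γ/((M:ℝ)-1)) * c2 / Λ * (1 - Real.exp (-(Λ*(t-4*τ)))) :=
      mul_le_mul_of_nonneg_left (by linarith) hSnn
    rw [hSc3] at hthird
    linarith
  -- final assembly
  have hc1nn : 0 ≤ c1 := by
    rw [hc1def]
    exact mul_nonneg hc0nn (div_nonneg hffnn hDx.le)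
  have hc2nn : 0 ≤ c2 := by
    rw [hc2def]
    exact mul_nonneg hc1nn (div_nonneg hffnn hDy.le)
  have hfac : ∀ D : ℝ, 0 < D → (1:ℝ) ≤ D → Γ/Λ * (1 - Real.exp (-(Λ*τ))) / D ≤ 1 := by
    intro D hD h1D
    rw [div_le_one hD]
    linarith
  have hc1le : c1 ≤ c0 := by
    rw [hc1def]
    nlinarith [hfac _ hDx (by linarith), hc0nn, div_nonneg hffnn hDx.le]
  have hc2le : c2 ≤ c1 := by
    rw [hc2def]
    nlinarith [hfac _ hDy (by linarith), hc1nn, div_nonneg hffnn hDy.le]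
  have hc3le : c3 ≤ c2 := by
    rw [hc3def]
    nlinarith [hfac _ hDyF (by linarith), hc2nn, div_nonneg hffnn hDyF.le]
  have htarget : m₀ * (1 + (1 / (((M : ℝ) - 1) * ((N : ℝ) + h - 1) * ((M : ℝ) + k - 1))) *
      (Γ / Λ) ^ 3 * δ₁ * Real.exp (-(6 * τ * Λ)) * (1 - Real.exp (-(Λ * τ))) ^ 3)
      = m₀ + c3 := by
    rw [hc3def, hc2def, hc1def, hc0def]
    field_simp
  intro t ht
  obtain ⟨ht5, ht6⟩ := ht
  rw [htarget]
  constructor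
  · intro i
    rcases lt_or_ge (i:ℕ) k with hik | hik
    · have := hLead i hik t (by linarith) ht6
      linarith
    · have := hFollc0 i hik t (by linarith) ht6
      linarith
  · intro j
    rcases lt_or_ge (j:ℕ) h with hjh | hjh
    · have := hYLead j hjh t (by linarith) ht6
      linarith
    · exact hYFoll j hjh t ht5 ht6
end
end

section
/- Assume 0 < m_0 for a fixed unit vector v ∈ ℝ^d. Then the sequence of projected diameters D_n := M_n − m_n is non-negative, non-increasing, and converges to 0 as n → ∞; consequently ⟨x_i(t) − x_j(t), v⟩ → 0 as t → +∞ for all i, j = 1,…,N, ⟨y_i(t) − y_j(t), v⟩ → 0 for all i, j = 1,…,M, and ⟨x_i(t) − y_j(t), v⟩ → 0 for all i = 1,…,N, j = 1,…,M. -/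
open Real Set Filter Topology
open scoped BigOperators RealInnerProductSpace

noncomputable section

/-! ### Auxiliary machinery -/

section Aux

lemma slope_le_of_left (f : ℝ → ℝ) (f' a t ε : ℝ) (hat : a < t)
    (hd : HasDerivAt f f' t)
    (hs : ∀ s ∈ Ico a t, f t - f s ≤ -ε * (t - s)) : f' ≤ -ε := by
  have h1 : Tendsto (slope f t) (𝓝[<] t) (𝓝 f') := by
    have h2 : HasDerivWithinAt f f' (Iio t) t := hd.hasDerivWithinAt
    have h3 := hasDerivWithinAt_iff_tendsto_slope.mp h2
    rwa [Set.diff_singleton_eq_self (by simp)] at h3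
  refine le_of_tendsto h1 ?_
  filter_upwards [Ioo_mem_nhdsLT hat] with s hs'
  have hst : s < t := hs'.2
  have h4 := hs s ⟨le_of_lt hs'.1, hst⟩
  rw [slope_def_field, div_le_iff_of_neg (by linarith : s - t < 0)]
  nlinarith

lemma invLow {ι : Type*} [Fintype ι] [Nonempty ι]
    (f f' : ι → ℝ → ℝ) (a b α : ℝ) (hab : a ≤ b)
    (hcont : ∀ i, Continuous (f i))
    (hder : ∀ i, ∀ t ∈ Ioc a b, HasDerivAt (f i) (f' i t) t)
    (key : ∀ i, ∀ t ∈ Ioc a b, f i t < α → (∀ j, f i t ≤ f j t) → 0 ≤ f' i t)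
    (ha : ∀ i, α ≤ f i a) :
    ∀ i, ∀ t ∈ Icc a b, α ≤ f i t := by
  have main : ∀ ε > (0:ℝ), ∀ t ∈ Icc a b, ∀ i, α - ε * (1 + t - a) < f i t := by
    intro ε hε
    by_contra hcon
    push_neg at hcon
    obtain ⟨t₀, ht₀, i₀, hi₀⟩ := hcon
    set S : Set ℝ := (Icc a b) ∩ (⋃ i, {t | f i t ≤ α - ε * (1 + t - a)}) with hS
    have hne : S.Nonempty := ⟨t₀, ht₀, mem_iUnion.mpr ⟨i₀, hi₀⟩⟩
    have hclosed : IsClosed S := by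
      refine isClosed_Icc.inter (isClosed_iUnion_of_finite fun i => ?_)
      exact isClosed_le (hcont i) (by continuity)
    have hbdd : BddBelow S := ⟨a, fun t ht => ht.1.1⟩
    set c := sInf S with hc
    have hcS : c ∈ S := hclosed.csInf_mem hne hbdd
    obtain ⟨i, hi⟩ := mem_iUnion.mp hcS.2
    have hcab : c ∈ Icc a b := hcS.1
    have hac : a < c := by
      rcases eq_or_lt_of_le hcab.1 with heq | hlt
      · exfalso
        have := ha i
        rw [← heq] at hi
        simp only [mem_setOf_eq] at hi
        nlinarith
      · exact hlt
    have hnotS : ∀ s ∈ Ico a c, ∀ j, α - ε * (1 + s - a) < f j s := by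
      intro s hsac j
      by_contra hns
      push_neg at hns
      have hsS : s ∈ S := ⟨⟨hsac.1, le_trans (le_of_lt hsac.2) hcab.2⟩,
        mem_iUnion.mpr ⟨j, hns⟩⟩
      exact absurd (csInf_le hbdd hsS) (not_le.mpr hsac.2)
    have hline : ∀ j, α - ε * (1 + c - a) ≤ f j c := by
      intro j
      have hten : Tendsto (fun s => α - ε * (1 + s - a)) (𝓝[<] c)
          (𝓝 (α - ε * (1 + c - a))) := by
        apply Tendsto.mono_left _ nhdsWithin_le_nhds
        exact Continuous.tendsto (by fun_prop) c
      have hten2 : Tendsto (f j) (𝓝[<] c) (𝓝 (f j c)) :=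
        ((hcont j).tendsto c).mono_left nhdsWithin_le_nhds
      refine le_of_tendsto_of_tendsto hten hten2 ?_
      filter_upwards [Ioo_mem_nhdsLT hac] with s hs'
      exact le_of_lt (hnotS s ⟨le_of_lt hs'.1, hs'.2⟩ j)
    simp only [mem_setOf_eq] at hi
    have hmin : ∀ j, f i c ≤ f j c := fun j => le_trans hi (hline j)
    have hflt : f i c < α := by nlinarith
    have hkey := key i c ⟨hac, hcab.2⟩ hflt hmin
    have hslope : f' i c ≤ -ε := by
      refine slope_le_of_left (f i) (f' i c) a c ε hac (hder i c ⟨hac, hcab.2⟩) ?_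
      intro s hs'
      have := hnotS s hs' i
      nlinarith [hs'.2]
    linarith
  intro i t ht
  by_contra hcon
  push_neg at hcon
  have hba : (0:ℝ) < 1 + b - a := by linarith
  set ε := (α - f i t) / (1 + b - a) with hε
  have hεpos : 0 < ε := div_pos (by linarith) hba
  have h1 := main ε hεpos t ht i
  have h2 : ε * (1 + t - a) ≤ ε * (1 + b - a) := by
    apply mul_le_mul_of_nonneg_left _ (le_of_lt hεpos)
    linarith [ht.2]
  have h3 : ε * (1 + b - a) = α - f i t := by
    rw [hε, div_mul_cancel₀ _ (ne_of_gt hba)]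
  linarith

lemma invHigh {ι : Type*} [Fintype ι] [Nonempty ι]
    (f f' : ι → ℝ → ℝ) (a b α : ℝ) (hab : a ≤ b)
    (hcont : ∀ i, Continuous (f i))
    (hder : ∀ i, ∀ t ∈ Ioc a b, HasDerivAt (f i) (f' i t) t)
    (key : ∀ i, ∀ t ∈ Ioc a b, α < f i t → (∀ j, f j t ≤ f i t) → f' i t ≤ 0)
    (ha : ∀ i, f i a ≤ α) :
    ∀ i, ∀ t ∈ Icc a b, f i t ≤ α := by
  have := invLow (fun i t => -(f i t)) (fun i t => -(f' i t)) a b (-α) hab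
    (fun i => (hcont i).neg)
    (fun i t ht => (hder i t ht).neg)
    (fun i t ht h1 h2 => by
      have hgt : α < f i t := by linarith
      have hmax : ∀ j, f j t ≤ f i t := fun j => by linarith [h2 j]
      linarith [key i t ht hgt hmax])
    (fun i => by linarith [ha i])
  intro i t ht
  have h5 := this i t ht
  linarith

lemma pullMain (u u' : ℝ → ℝ) (K c a b : ℝ) (hK : 0 < K) (hab : a ≤ b)
    (hcont : Continuous u)
    (hder : ∀ t ∈ Ioo a b, HasDerivAt u (u' t) t)
    (hineq : ∀ t ∈ Ioo a b, -K * u t + c ≤ u' t) :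
    exp (K * a) * u a + c / K * (exp (K * b) - exp (K * a)) ≤ exp (K * b) * u b := by
  set G : ℝ → ℝ := fun t => exp (K * t) * u t - c / K * exp (K * t) with hG
  have hGd : ∀ t ∈ Ioo a b, HasDerivAt G (exp (K * t) * (K * u t + u' t - c)) t := by
    intro t ht
    have h1 : HasDerivAt (fun t => exp (K * t)) (K * exp (K * t)) t := by
      simpa [mul_comm] using ((hasDerivAt_id t).const_mul K).exp
    have h2 := (h1.mul (hder t ht)).sub (h1.const_mul (c / K))
    refine h2.congr_deriv ?_
    rw [div_mul_eq_mul_div, mul_div_assoc, mul_div_cancel_left₀ _ hK.ne']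
    ring
  have hmono : MonotoneOn G (Icc a b) := by
    apply monotoneOn_of_deriv_nonneg (convex_Icc a b)
    · exact Continuous.continuousOn (by fun_prop)
    · intro t ht
      rw [interior_Icc] at ht
      exact (hGd t ht).differentiableAt.differentiableWithinAt
    · intro t ht
      rw [interior_Icc] at ht
      rw [(hGd t ht).deriv]
      have := hineq t ht
      have he := exp_pos (K * t)
      nlinarith
  have hm := hmono (left_mem_Icc.mpr hab) (right_mem_Icc.mpr hab) hab
  simp only [hG] at hm
  linarith

lemma pullA (u u' : ℝ → ℝ) (K a b : ℝ) (hK : 0 < K) (hab : a ≤ b)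
    (hcont : Continuous u)
    (hder : ∀ t ∈ Ioo a b, HasDerivAt u (u' t) t)
    (hineq : ∀ t ∈ Ioo a b, -K * u t ≤ u' t) :
    exp (-(K * (b - a))) * u a ≤ u b := by
  have h := pullMain u u' K 0 a b hK hab hcont hder (by simpa using hineq)
  have hEb := exp_pos (K * b)
  rw [show -(K * (b - a)) = K * a - K * b by ring, exp_sub, div_mul_eq_mul_div,
    div_le_iff₀ hEb]
  simp only [zero_div, zero_mul, add_zero] at h
  nlinarith

lemma pullB (u u' : ℝ → ℝ) (K c a b : ℝ) (hK : 0 < K) (hab : a ≤ b)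
    (hcont : Continuous u)
    (hder : ∀ t ∈ Ioo a b, HasDerivAt u (u' t) t)
    (hineq : ∀ t ∈ Ioo a b, -K * u t + c ≤ u' t)
    (hua : 0 ≤ u a) :
    c / K * (1 - exp (-(K * (b - a)))) ≤ u b := by
  have h := pullMain u u' K c a b hK hab hcont hder hineq
  have hEb := exp_pos (K * b)
  have hEa := exp_pos (K * a)
  have key : c / K * (1 - exp (-(K * (b - a)))) * exp (K * b)
      = c / K * (exp (K * b) - exp (K * a)) := by
    rw [show -(K * (b - a)) = K * a - K * b by ring, exp_sub]
    field_simp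
  have h2 : c / K * (1 - exp (-(K * (b - a)))) * exp (K * b) ≤ u b * exp (K * b) := by
    rw [key]
    nlinarith [mul_nonneg hEa.le hua]
  exact le_of_mul_le_mul_right h2 hEb

lemma sum_bound {ι' : Type*} (F : Finset ι') (c V : ι' → ℝ) (p Mb Kp : ℝ)
    (hc : ∀ l ∈ F, 0 ≤ c l) (hsum : ∑ l ∈ F, c l ≤ Kp) (hV : ∀ l ∈ F, V l ≤ Mb)
    (hp : p ≤ Mb) :
    ∑ l ∈ F, c l * (V l - p) ≤ Kp * (Mb - p) := by
  calc ∑ l ∈ F, c l * (V l - p) ≤ ∑ l ∈ F, c l * (Mb - p) := by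
        refine Finset.sum_le_sum fun l hl => ?_
        exact mul_le_mul_of_nonneg_left (by linarith [hV l hl]) (hc l hl)
    _ = (∑ l ∈ F, c l) * (Mb - p) := by rw [Finset.sum_mul]
    _ ≤ Kp * (Mb - p) := mul_le_mul_of_nonneg_right hsum (by linarith)

lemma sum_bound_pull {ι' : Type*} [DecidableEq ι'] (F : Finset ι') (c V : ι' → ℝ)
    (p Mb Kp γ β : ℝ) (j0 : ι') (hj0 : j0 ∈ F)
    (hc : ∀ l ∈ F, 0 ≤ c l) (hsum : ∑ l ∈ F, c l ≤ Kp) (hV : ∀ l ∈ F, V l ≤ Mb)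
    (hp : p ≤ Mb) (hγ : γ ≤ c j0) (hγ0 : 0 ≤ γ) (hpull : V j0 ≤ Mb - β) (hβ : 0 ≤ β) :
    ∑ l ∈ F, c l * (V l - p) ≤ Kp * (Mb - p) - γ * β := by
  have hsplit := (Finset.add_sum_erase F (fun l => c l * (V l - p)) hj0).symm
  rw [hsplit]
  have h1 : ∑ l ∈ F.erase j0, c l * (V l - p)
      ≤ (∑ l ∈ F.erase j0, c l) * (Mb - p) := by
    have := sum_bound (F.erase j0) c V p Mb (∑ l ∈ F.erase j0, c l)
      (fun l hl => hc l (Finset.mem_of_mem_erase hl)) le_rfl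
      (fun l hl => hV l (Finset.mem_of_mem_erase hl)) hp
    exact this
  have h2 : c j0 * (V j0 - p) ≤ c j0 * (Mb - p) + γ * (V j0 - Mb) := by
    have e : c j0 * (V j0 - p) = c j0 * (Mb - p) + c j0 * (V j0 - Mb) := by ring
    rw [e]
    have hVj : V j0 - Mb ≤ 0 := by linarith
    nlinarith [hc j0 hj0]
  have h3 : γ * (V j0 - Mb) ≤ -(γ * β) := by nlinarith
  have h4 : (∑ l ∈ F.erase j0, c l) * (Mb - p) + c j0 * (Mb - p)
      ≤ Kp * (Mb - p) := by
    have he : c j0 + ∑ l ∈ F.erase j0, c l = ∑ l ∈ F, c l := Finset.add_sum_erase F c hj0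
    have hsum' : c j0 + ∑ l ∈ F.erase j0, c l ≤ Kp := by rw [he]; exact hsum
    nlinarith [mul_le_mul_of_nonneg_right hsum' (show (0:ℝ) ≤ Mb - p by linarith)]
  nlinarith

lemma bdd_above_window {ι : Type*} [Finite ι] (a b : ℝ) (g : ι → ℝ → ℝ)
    (hg : ∀ i, Continuous (g i)) :
    BddAbove (Set.range fun p : ι × (Icc a b) => g p.1 (p.2 : ℝ)) := by
  cases isEmpty_or_nonempty ι
  · refine ⟨0, ?_⟩
    rintro z ⟨⟨i, t⟩, rfl⟩
    exact (IsEmpty.false i).elim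
  · have hex : ∀ i : ι, ∃ B, ∀ t ∈ Icc a b, g i t ≤ B := by
      intro i
      rcases (isCompact_Icc (a := a) (b := b)).bddAbove_image
        ((hg i).continuousOn) with ⟨B, hB⟩
      exact ⟨B, fun t ht => hB (Set.mem_image_of_mem _ ht)⟩
    choose B hB using hex
    cases nonempty_fintype ι
    refine ⟨Finset.univ.sup' Finset.univ_nonempty B, ?_⟩
    rintro z ⟨⟨i, t⟩, rfl⟩
    exact le_trans (hB i t t.2) (Finset.le_sup' B (Finset.mem_univ i))

lemma bdd_below_window {ι : Type*} [Finite ι] (a b : ℝ) (g : ι → ℝ → ℝ)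
    (hg : ∀ i, Continuous (g i)) :
    BddBelow (Set.range fun p : ι × (Icc a b) => g p.1 (p.2 : ℝ)) := by
  have := bdd_above_window a b (fun i t => -(g i t)) (fun i => (hg i).neg)
  rcases this with ⟨B, hB⟩
  refine ⟨-B, ?_⟩
  rintro z ⟨p, rfl⟩
  have := hB (Set.mem_range_self p)
  simp only at this ⊢
  linarith

end Aux


/-! ### Facts about the bounds -/

section Facts

variable {d : ℕ} {ψ ψs φ φs : EuclideanSpace ℝ (Fin d) → EuclideanSpace ℝ (Fin d) → ℝ}

lemma le_lam_psi (hψ : Admissible ψ) (z1 z2 : EuclideanSpace ℝ (Fin d)) :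
    ψ z1 z2 ≤ Lam ψ ψs φ φs :=
  le_trans (le_ciSup hψ.2.2 (z1, z2)) (le_trans (le_max_left _ _) (le_max_left _ _))

lemma le_lam_psis (hψs : Admissible ψs) (z1 z2 : EuclideanSpace ℝ (Fin d)) :
    ψs z1 z2 ≤ Lam ψ ψs φ φs :=
  le_trans (le_ciSup hψs.2.2 (z1, z2)) (le_trans (le_max_right _ _) (le_max_left _ _))

lemma le_lam_phi (hφ : Admissible φ) (z1 z2 : EuclideanSpace ℝ (Fin d)) :
    φ z1 z2 ≤ Lam ψ ψs φ φs :=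
  le_trans (le_ciSup hφ.2.2 (z1, z2)) (le_trans (le_max_left _ _) (le_max_right _ _))

lemma le_lam_phis (hφs : Admissible φs) (z1 z2 : EuclideanSpace ℝ (Fin d)) :
    φs z1 z2 ≤ Lam ψ ψs φ φs :=
  le_trans (le_ciSup hφs.2.2 (z1, z2)) (le_trans (le_max_right _ _) (le_max_right _ _))

lemma lam_pos (hψ : Admissible ψ) : 0 < Lam ψ ψs φ φs :=
  lt_of_lt_of_le (hψ.2.1 0 0) (le_lam_psi hψ 0 0)

lemma minOnBall_le {C : ℝ} {f : EuclideanSpace ℝ (Fin d) → EuclideanSpace ℝ (Fin d) → ℝ}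
    (hf : Admissible f) {z1 z2 : EuclideanSpace ℝ (Fin d)}
    (h1 : ‖z1‖ ≤ C) (h2 : ‖z2‖ ≤ C) : minOnBall C f ≤ f z1 z2 := by
  unfold minOnBall
  have hbdd : BddBelow (Set.range fun p : {z : EuclideanSpace ℝ (Fin d) ×
      EuclideanSpace ℝ (Fin d) // ‖z.1‖ ≤ C ∧ ‖z.2‖ ≤ C} => f p.1.1 p.1.2) := by
    refine ⟨0, ?_⟩
    rintro w ⟨p, rfl⟩
    exact (hf.2.1 _ _).le
  exact ciInf_le hbdd ⟨(z1, z2), ⟨h1, h2⟩⟩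

lemma minOnBall_pos {C : ℝ} {f : EuclideanSpace ℝ (Fin d) → EuclideanSpace ℝ (Fin d) → ℝ}
    (hf : Admissible f) (hC : 0 ≤ C) : 0 < minOnBall C f := by
  set S : Set (EuclideanSpace ℝ (Fin d) × EuclideanSpace ℝ (Fin d)) :=
    Metric.closedBall 0 C ×ˢ Metric.closedBall 0 C with hSdef
  have hcomp : IsCompact S :=
    (isCompact_closedBall (0 : EuclideanSpace ℝ (Fin d)) C).prod
      (isCompact_closedBall (0 : EuclideanSpace ℝ (Fin d)) C)
  have hne : S.Nonempty := ⟨(0, 0), by simp [hSdef, hC]⟩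
  obtain ⟨p0, hp0S, hmin⟩ := hcomp.exists_isMinOn hne (hf.1.continuousOn)
  have hpos : 0 < f p0.1 p0.2 := hf.2.1 _ _
  haveI : Nonempty {z : EuclideanSpace ℝ (Fin d) × EuclideanSpace ℝ (Fin d) //
      ‖z.1‖ ≤ C ∧ ‖z.2‖ ≤ C} := ⟨⟨(0, 0), by simp [hC]⟩⟩
  unfold minOnBall
  refine lt_of_lt_of_le hpos (le_ciInf fun p => ?_)
  refine hmin ?_
  simp only [hSdef, Set.mem_prod, Metric.mem_closedBall]
  constructor
  · simpa [dist_eq_norm] using p.2.1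
  · simpa [dist_eq_norm] using p.2.2

end Facts

/-! ### Negation symmetry -/

lemma iInf_neg_real {ι : Sort*} (f : ι → ℝ) : (⨅ i, -(f i)) = -(⨆ i, f i) := by
  rw [iInf, iSup, Real.sInf_def]
  congr 2
  ext z
  simp only [Set.mem_range, Set.mem_neg]
  constructor
  · rintro ⟨i, hi⟩; exact ⟨i, by linarith⟩
  · rintro ⟨i, hi⟩; exact ⟨i, by linarith⟩

section Neg

variable {d N M : ℕ} (h k : ℕ) (τ : ℝ) (w : EuclideanSpace ℝ (Fin d))
  (x : Fin N → ℝ → EuclideanSpace ℝ (Fin d)) (y : Fin M → ℝ → EuclideanSpace ℝ (Fin d))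

lemma mSeq_neg (n : ℕ) : mSeq h k τ (-w) x y n = -(MSeq h k τ w x y n) := by
  unfold mSeq MSeq
  simp only [inner_neg_right]
  rw [iInf_neg_real, iInf_neg_real, iInf_neg_real, iInf_neg_real,
    min_neg_neg, min_neg_neg, min_neg_neg]

lemma MSeq_neg (n : ℕ) : MSeq h k τ (-w) x y n = -(mSeq h k τ w x y n) := by
  have := mSeq_neg h k τ (-w) x y n
  rw [neg_neg] at this
  linarith

end Neg

/-! ### Main development -/

section Main

variable {d N M h k : ℕ} {τ : ℝ}
  {ψ ψs φ φs : EuclideanSpace ℝ (Fin d) → EuclideanSpace ℝ (Fin d) → ℝ}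
  {x : Fin N → ℝ → EuclideanSpace ℝ (Fin d)}
  {y : Fin M → ℝ → EuclideanSpace ℝ (Fin d)}

/-- window left endpoint -/
local notation "wlo " n => (6 * (n : ℝ) - 1) * τ
local notation "whi " n => 6 * (n : ℝ) * τ

lemma contP (hsol : IsSol h k τ ψ ψs φ φs x y) (i : Fin N)
    (w : EuclideanSpace ℝ (Fin d)) : Continuous fun t => ⟪x i t, w⟫ :=
  (hsol.contx i).inner continuous_const

lemma contQ (hsol : IsSol h k τ ψ ψs φ φs x y) (j : Fin M)
    (w : EuclideanSpace ℝ (Fin d)) : Continuous fun t => ⟪y j t, w⟫ :=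
  (hsol.conty j).inner continuous_const

-- Nonempty instances
lemma ne_xlead (hN : 2 ≤ N) (hk1 : 1 ≤ k) : Nonempty {i : Fin N // (i : ℕ) < k} :=
  ⟨⟨⟨0, by omega⟩, by simp; omega⟩⟩

lemma ne_xfoll (hkN : k < N) : Nonempty {i : Fin N // k ≤ (i : ℕ)} :=
  ⟨⟨⟨k, hkN⟩, le_rfl⟩⟩

lemma ne_ylead (hM2 : 2 ≤ M) (hh1 : 1 ≤ h) : Nonempty {j : Fin M // (j : ℕ) < h} :=
  ⟨⟨⟨0, by omega⟩, by simp; omega⟩⟩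

lemma ne_yfoll (hhM : h < M) : Nonempty {j : Fin M // h ≤ (j : ℕ)} :=
  ⟨⟨⟨h, hhM⟩, le_rfl⟩⟩

lemma window_le (hτ : 0 < τ) (n : ℕ) : ((6 * (n : ℝ) - 1) * τ) ≤ 6 * (n : ℝ) * τ := by
  nlinarith [Nat.cast_nonneg (α := ℝ) n]

-- Accessors for MSeq
lemma xlead_le_MSeq (hsol : IsSol h k τ ψ ψs φ φs x y) (hτ : 0 < τ)
    (w : EuclideanSpace ℝ (Fin d)) (n : ℕ) (i : Fin N) (hik : (i : ℕ) < k)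
    {t : ℝ} (ht : t ∈ Icc ((6 * (n : ℝ) - 1) * τ) (6 * (n : ℝ) * τ)) :
    ⟪x i t, w⟫ ≤ MSeq h k τ w x y n := by
  refine le_trans ?_ (le_max_left _ _)
  refine le_trans ?_ (le_max_left _ _)
  exact le_ciSup_of_le
    (bdd_above_window _ _ (fun p : {i : Fin N // (i : ℕ) < k} => fun t => ⟪x p.1 t, w⟫)
      (fun p => contP hsol p.1 w))
    (⟨⟨i, hik⟩, ⟨t, ht⟩⟩ : {i : Fin N // (i : ℕ) < k} ×
      (Icc ((6 * (n : ℝ) - 1) * τ) (6 * (n : ℝ) * τ))) le_rfl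

lemma xfoll_le_MSeq (hkN : k < N)
    (w : EuclideanSpace ℝ (Fin d)) (n : ℕ) (i : Fin N) (hik : k ≤ (i : ℕ)) :
    ⟪x i (6 * (n : ℝ) * τ), w⟫ ≤ MSeq h k τ w x y n := by
  refine le_trans ?_ (le_max_left _ _)
  refine le_trans ?_ (le_max_right _ _)
  exact le_ciSup_of_le (Set.Finite.bddAbove (Set.finite_range _)) ⟨i, hik⟩ le_rfl

lemma ylead_le_MSeq (hsol : IsSol h k τ ψ ψs φ φs x y) (hτ : 0 < τ)
    (w : EuclideanSpace ℝ (Fin d)) (n : ℕ) (j : Fin M) (hjh : (j : ℕ) < h)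
    {t : ℝ} (ht : t ∈ Icc ((6 * (n : ℝ) - 1) * τ) (6 * (n : ℝ) * τ)) :
    ⟪y j t, w⟫ ≤ MSeq h k τ w x y n := by
  refine le_trans ?_ (le_max_right _ _)
  refine le_trans ?_ (le_max_left _ _)
  exact le_ciSup_of_le
    (bdd_above_window _ _ (fun p : {j : Fin M // (j : ℕ) < h} => fun t => ⟪y p.1 t, w⟫)
      (fun p => contQ hsol p.1 w))
    (⟨⟨j, hjh⟩, ⟨t, ht⟩⟩ : {j : Fin M // (j : ℕ) < h} ×
      (Icc ((6 * (n : ℝ) - 1) * τ) (6 * (n : ℝ) * τ))) le_rfl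

lemma yfoll_le_MSeq (hhM : h < M)
    (w : EuclideanSpace ℝ (Fin d)) (n : ℕ) (j : Fin M) (hjh : h ≤ (j : ℕ)) :
    ⟪y j (6 * (n : ℝ) * τ), w⟫ ≤ MSeq h k τ w x y n := by
  refine le_trans ?_ (le_max_right _ _)
  refine le_trans ?_ (le_max_right _ _)
  exact le_ciSup_of_le (Set.Finite.bddAbove (Set.finite_range _)) ⟨j, hjh⟩ le_rfl

-- Accessors for mSeq, via negation
lemma mSeq_le_xlead (hsol : IsSol h k τ ψ ψs φ φs x y) (hτ : 0 < τ)
    (w : EuclideanSpace ℝ (Fin d)) (n : ℕ) (i : Fin N) (hik : (i : ℕ) < k)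
    {t : ℝ} (ht : t ∈ Icc ((6 * (n : ℝ) - 1) * τ) (6 * (n : ℝ) * τ)) :
    mSeq h k τ w x y n ≤ ⟪x i t, w⟫ := by
  have h1 := xlead_le_MSeq hsol hτ (-w) n i hik ht
  have h2 := MSeq_neg h k τ w x y n
  rw [h2, inner_neg_right] at h1
  linarith

lemma mSeq_le_xfoll (hkN : k < N)
    (w : EuclideanSpace ℝ (Fin d)) (n : ℕ) (i : Fin N) (hik : k ≤ (i : ℕ)) :
    mSeq h k τ w x y n ≤ ⟪x i (6 * (n : ℝ) * τ), w⟫ := by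
  have h1 := xfoll_le_MSeq (τ := τ) (x := x) (y := y) (h := h) hkN (-w) n i hik
  rw [MSeq_neg h k τ w x y n, inner_neg_right] at h1
  linarith

lemma mSeq_le_ylead (hsol : IsSol h k τ ψ ψs φ φs x y) (hτ : 0 < τ)
    (w : EuclideanSpace ℝ (Fin d)) (n : ℕ) (j : Fin M) (hjh : (j : ℕ) < h)
    {t : ℝ} (ht : t ∈ Icc ((6 * (n : ℝ) - 1) * τ) (6 * (n : ℝ) * τ)) :
    mSeq h k τ w x y n ≤ ⟪y j t, w⟫ := by
  have h1 := ylead_le_MSeq hsol hτ (-w) n j hjh ht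
  rw [MSeq_neg h k τ w x y n, inner_neg_right] at h1
  linarith

lemma mSeq_le_yfoll (hhM : h < M)
    (w : EuclideanSpace ℝ (Fin d)) (n : ℕ) (j : Fin M) (hjh : h ≤ (j : ℕ)) :
    mSeq h k τ w x y n ≤ ⟪y j (6 * (n : ℝ) * τ), w⟫ := by
  have h1 := yfoll_le_MSeq (τ := τ) (x := x) (y := y) (k := k) hhM (-w) n j hjh
  rw [MSeq_neg h k τ w x y n, inner_neg_right] at h1
  linarith

-- Builders
lemma MSeq_le (hN : 2 ≤ N) (hM2 : 2 ≤ M) (hh1 : 1 ≤ h) (hk1 : 1 ≤ k)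
    (hkN : k < N) (hhM : h < M) (hτ : 0 < τ)
    (w : EuclideanSpace ℝ (Fin d)) (n : ℕ) (β : ℝ)
    (h1 : ∀ i : Fin N, (i : ℕ) < k →
      ∀ t ∈ Icc ((6 * (n : ℝ) - 1) * τ) (6 * (n : ℝ) * τ), ⟪x i t, w⟫ ≤ β)
    (h2 : ∀ i : Fin N, k ≤ (i : ℕ) → ⟪x i (6 * (n : ℝ) * τ), w⟫ ≤ β)
    (h3 : ∀ j : Fin M, (j : ℕ) < h →
      ∀ t ∈ Icc ((6 * (n : ℝ) - 1) * τ) (6 * (n : ℝ) * τ), ⟪y j t, w⟫ ≤ β)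
    (h4 : ∀ j : Fin M, h ≤ (j : ℕ) → ⟪y j (6 * (n : ℝ) * τ), w⟫ ≤ β) :
    MSeq h k τ w x y n ≤ β := by
  haveI := ne_xlead hN hk1
  haveI := ne_xfoll hkN
  haveI := ne_ylead hM2 hh1
  haveI := ne_yfoll hhM
  haveI : Nonempty ↥(Icc ((6 * (n : ℝ) - 1) * τ) (6 * (n : ℝ) * τ)) :=
    Set.nonempty_Icc_subtype (window_le hτ n)
  refine max_le (max_le ?_ ?_) (max_le ?_ ?_)
  · exact ciSup_le fun p => h1 p.1.1 p.1.2 p.2 p.2.2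
  · exact ciSup_le fun p => h2 p.1 p.2
  · exact ciSup_le fun p => h3 p.1.1 p.1.2 p.2 p.2.2
  · exact ciSup_le fun p => h4 p.1 p.2

lemma le_mSeq (hN : 2 ≤ N) (hM2 : 2 ≤ M) (hh1 : 1 ≤ h) (hk1 : 1 ≤ k)
    (hkN : k < N) (hhM : h < M) (hτ : 0 < τ)
    (w : EuclideanSpace ℝ (Fin d)) (n : ℕ) (β : ℝ)
    (h1 : ∀ i : Fin N, (i : ℕ) < k →
      ∀ t ∈ Icc ((6 * (n : ℝ) - 1) * τ) (6 * (n : ℝ) * τ), β ≤ ⟪x i t, w⟫)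
    (h2 : ∀ i : Fin N, k ≤ (i : ℕ) → β ≤ ⟪x i (6 * (n : ℝ) * τ), w⟫)
    (h3 : ∀ j : Fin M, (j : ℕ) < h →
      ∀ t ∈ Icc ((6 * (n : ℝ) - 1) * τ) (6 * (n : ℝ) * τ), β ≤ ⟪y j t, w⟫)
    (h4 : ∀ j : Fin M, h ≤ (j : ℕ) → β ≤ ⟪y j (6 * (n : ℝ) * τ), w⟫) :
    β ≤ mSeq h k τ w x y n := by
  have hM := MSeq_le hN hM2 hh1 hk1 hkN hhM hτ (-w) n (-β)
    (fun i hik t ht => by rw [inner_neg_right]; linarith [h1 i hik t ht])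
    (fun i hik => by rw [inner_neg_right]; linarith [h2 i hik])
    (fun j hjh t ht => by rw [inner_neg_right]; linarith [h3 j hjh t ht])
    (fun j hjh => by rw [inner_neg_right]; linarith [h4 j hjh])
  rw [MSeq_neg h k τ w x y n] at hM
  linarith

-- Cinit accessors
lemma norm_xlead_le_Cinit (hsol : IsSol h k τ ψ ψs φ φs x y)
    (i : Fin N) (hik : (i : ℕ) < k) {t : ℝ} (ht : t ∈ Icc (-τ) (0 : ℝ)) :
    ‖x i t‖ ≤ Cinit h k τ x y := by
  refine le_trans ?_ (le_max_left _ _)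
  refine le_trans ?_ (le_max_left _ _)
  exact le_ciSup_of_le
    (bdd_above_window _ _ (fun p : {i : Fin N // (i : ℕ) < k} => fun t => ‖x p.1 t‖)
      (fun p => (hsol.contx p.1).norm))
    (⟨⟨i, hik⟩, ⟨t, ht⟩⟩ : {i : Fin N // (i : ℕ) < k} × (Icc (-τ) (0:ℝ))) le_rfl

lemma norm_xfoll_le_Cinit (i : Fin N) (hik : k ≤ (i : ℕ)) :
    ‖x i 0‖ ≤ Cinit h k τ x y := by
  refine le_trans ?_ (le_max_left _ _)
  refine le_trans ?_ (le_max_right _ _)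
  exact le_ciSup_of_le (Set.Finite.bddAbove (Set.finite_range _)) ⟨i, hik⟩ le_rfl

lemma norm_ylead_le_Cinit (hsol : IsSol h k τ ψ ψs φ φs x y)
    (j : Fin M) (hjh : (j : ℕ) < h) {t : ℝ} (ht : t ∈ Icc (-τ) (0 : ℝ)) :
    ‖y j t‖ ≤ Cinit h k τ x y := by
  refine le_trans ?_ (le_max_right _ _)
  refine le_trans ?_ (le_max_left _ _)
  exact le_ciSup_of_le
    (bdd_above_window _ _ (fun p : {j : Fin M // (j : ℕ) < h} => fun t => ‖y p.1 t‖)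
      (fun p => (hsol.conty p.1).norm))
    (⟨⟨j, hjh⟩, ⟨t, ht⟩⟩ : {j : Fin M // (j : ℕ) < h} × (Icc (-τ) (0:ℝ))) le_rfl

lemma norm_yfoll_le_Cinit (j : Fin M) (hjh : h ≤ (j : ℕ)) :
    ‖y j 0‖ ≤ Cinit h k τ x y := by
  refine le_trans ?_ (le_max_right _ _)
  refine le_trans ?_ (le_max_right _ _)
  exact le_ciSup_of_le (Set.Finite.bddAbove (Set.finite_range _)) ⟨j, hjh⟩ le_rfl

lemma cinit_nonneg (hsol : IsSol h k τ ψ ψs φ φs x y) (hN : 2 ≤ N) (hk1 : 1 ≤ k)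
    (hτ : 0 < τ) : 0 ≤ Cinit h k τ x y := by
  obtain ⟨i⟩ := ne_xlead hN hk1
  exact le_trans (norm_nonneg _)
    (norm_xlead_le_Cinit hsol i.1 i.2 ⟨by linarith, le_rfl⟩)

end Main


section Main2

variable {d N M h k : ℕ} {τ : ℝ}
  {ψ ψs φ φs : EuclideanSpace ℝ (Fin d) → EuclideanSpace ℝ (Fin d) → ℝ}
  {x : Fin N → ℝ → EuclideanSpace ℝ (Fin d)}
  {y : Fin M → ℝ → EuclideanSpace ℝ (Fin d)}

lemma mul_np {a b : ℝ} (ha : 0 ≤ a) (hb : b ≤ 0) : a * b ≤ 0 := by nlinarith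

lemma hdP_xl (hsol : IsSol h k τ ψ ψs φ φs x y) (w : EuclideanSpace ℝ (Fin d))
    (i : Fin N) (hik : (i : ℕ) < k) (t : ℝ) (ht : 0 < t) :
    HasDerivAt (fun s => ⟪x i s, w⟫)
      ((∑ j ∈ Finset.univ.erase i,
          (ψ (x i (t)) (x j (t)) / ((N : ℝ) + h - 1)) * (⟪x j (t), w⟫ - ⟪x i (t), w⟫)) +
        ∑ j ∈ Finset.univ.filter (fun j : Fin M => (j : ℕ) < h),
          (φ (x i (t)) (y j ((t) - τ)) / ((N : ℝ) + h - 1)) * (⟪y j ((t) - τ), w⟫ - ⟪x i (t), w⟫)) t := by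
  have hD := (hsol.odex_lead i hik t ht).inner ℝ (hasDerivAt_const t w)
  simp only [inner_zero_right, add_zero, zero_add, inner_add_left, sum_inner,
    real_inner_smul_left, inner_sub_left] at hD
  exact hD

lemma hdP_xf (hsol : IsSol h k τ ψ ψs φ φs x y) (w : EuclideanSpace ℝ (Fin d))
    (i : Fin N) (hik : k ≤ (i : ℕ)) (t : ℝ) (ht : 0 < t) :
    HasDerivAt (fun s => ⟪x i s, w⟫)
      (∑ j ∈ Finset.univ.erase i,
          (ψ (x i (t)) (x j (t)) / ((N : ℝ) - 1)) * (⟪x j (t), w⟫ - ⟪x i (t), w⟫)) t := by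
  have hD := (hsol.odex_foll i hik t ht).inner ℝ (hasDerivAt_const t w)
  simp only [inner_zero_right, add_zero, zero_add, inner_add_left, sum_inner,
    real_inner_smul_left, inner_sub_left] at hD
  exact hD

lemma hdP_yl (hsol : IsSol h k τ ψ ψs φ φs x y) (w : EuclideanSpace ℝ (Fin d))
    (i : Fin M) (hih : (i : ℕ) < h) (t : ℝ) (ht : 0 < t) :
    HasDerivAt (fun s => ⟪y i s, w⟫)
      ((∑ j ∈ Finset.univ.erase i,
          (ψs (y i (t)) (y j (t)) / ((M : ℝ) + k - 1)) * (⟪y j (t), w⟫ - ⟪y i (t), w⟫)) +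
        ∑ j ∈ Finset.univ.filter (fun j : Fin N => (j : ℕ) < k),
          (φs (y i (t)) (x j ((t) - τ)) / ((M : ℝ) + k - 1)) * (⟪x j ((t) - τ), w⟫ - ⟪y i (t), w⟫)) t := by
  have hD := (hsol.odey_lead i hih t ht).inner ℝ (hasDerivAt_const t w)
  simp only [inner_zero_right, add_zero, zero_add, inner_add_left, sum_inner,
    real_inner_smul_left, inner_sub_left] at hD
  exact hD

lemma hdP_yf (hsol : IsSol h k τ ψ ψs φ φs x y) (w : EuclideanSpace ℝ (Fin d))
    (i : Fin M) (hih : h ≤ (i : ℕ)) (t : ℝ) (ht : 0 < t) :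
    HasDerivAt (fun s => ⟪y i s, w⟫)
      (∑ j ∈ Finset.univ.erase i,
          (ψs (y i (t)) (y j (t)) / ((M : ℝ) - 1)) * (⟪y j (t), w⟫ - ⟪y i (t), w⟫)) t := by
  have hD := (hsol.odey_foll i hih t ht).inner ℝ (hasDerivAt_const t w)
  simp only [inner_zero_right, add_zero, zero_add, inner_add_left, sum_inner,
    real_inner_smul_left, inner_sub_left] at hD
  exact hD

lemma den_xl_pos (hN : 2 ≤ N) : (0:ℝ) < (N : ℝ) + h - 1 := by
  have h1 : (2:ℝ) ≤ N := by exact_mod_cast hN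
  have h2 : (0:ℝ) ≤ h := Nat.cast_nonneg h
  linarith

lemma den_xf_pos (hN : 2 ≤ N) : (0:ℝ) < (N : ℝ) - 1 := by
  have h1 : (2:ℝ) ≤ N := by exact_mod_cast hN
  linarith

lemma den_yl_pos (hM2 : 2 ≤ M) : (0:ℝ) < (M : ℝ) + k - 1 := by
  have h1 : (2:ℝ) ≤ M := by exact_mod_cast hM2
  have h2 : (0:ℝ) ≤ k := Nat.cast_nonneg k
  linarith

lemma den_yf_pos (hM2 : 2 ≤ M) : (0:ℝ) < (M : ℝ) - 1 := by
  have h1 : (2:ℝ) ≤ M := by exact_mod_cast hM2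
  linarith

lemma DXL_nonpos (hψ : Admissible ψ) (hφ : Admissible φ) (hN : 2 ≤ N)
    (w : EuclideanSpace ℝ (Fin d)) (i : Fin N) (t : ℝ)
    (hmax : ∀ j : Fin N, ⟪x j t, w⟫ ≤ ⟪x i t, w⟫)
    (hdel : ∀ j : Fin M, (j : ℕ) < h → ⟪y j (t - τ), w⟫ ≤ ⟪x i t, w⟫) :
    ((∑ j ∈ Finset.univ.erase i,
          (ψ (x i (t)) (x j (t)) / ((N : ℝ) + h - 1)) * (⟪x j (t), w⟫ - ⟪x i (t), w⟫)) +
        ∑ j ∈ Finset.univ.filter (fun j : Fin M => (j : ℕ) < h),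
          (φ (x i (t)) (y j ((t) - τ)) / ((N : ℝ) + h - 1)) * (⟪y j ((t) - τ), w⟫ - ⟪x i (t), w⟫)) ≤ 0 := by
  have hden := den_xl_pos (h := h) hN
  apply add_nonpos
  · refine Finset.sum_nonpos fun j hj => mul_np
      (div_nonneg (hψ.2.1 _ _).le hden.le) (by linarith [hmax j])
  · refine Finset.sum_nonpos fun j hj => mul_np
      (div_nonneg (hφ.2.1 _ _).le hden.le)
      (by linarith [hdel j (Finset.mem_filter.mp hj).2])

lemma DXF_nonpos (hψ : Admissible ψ) (hN : 2 ≤ N)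
    (w : EuclideanSpace ℝ (Fin d)) (i : Fin N) (t : ℝ)
    (hmax : ∀ j : Fin N, ⟪x j t, w⟫ ≤ ⟪x i t, w⟫) :
    (∑ j ∈ Finset.univ.erase i,
          (ψ (x i (t)) (x j (t)) / ((N : ℝ) - 1)) * (⟪x j (t), w⟫ - ⟪x i (t), w⟫)) ≤ 0 := by
  have hden := den_xf_pos (N := N) hN
  refine Finset.sum_nonpos fun j hj => mul_np
    (div_nonneg (hψ.2.1 _ _).le hden.le) (by linarith [hmax j])

lemma DYL_nonpos (hψs : Admissible ψs) (hφs : Admissible φs) (hM2 : 2 ≤ M)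
    (w : EuclideanSpace ℝ (Fin d)) (i : Fin M) (t : ℝ)
    (hmax : ∀ j : Fin M, ⟪y j t, w⟫ ≤ ⟪y i t, w⟫)
    (hdel : ∀ j : Fin N, (j : ℕ) < k → ⟪x j (t - τ), w⟫ ≤ ⟪y i t, w⟫) :
    ((∑ j ∈ Finset.univ.erase i,
          (ψs (y i (t)) (y j (t)) / ((M : ℝ) + k - 1)) * (⟪y j (t), w⟫ - ⟪y i (t), w⟫)) +
        ∑ j ∈ Finset.univ.filter (fun j : Fin N => (j : ℕ) < k),
          (φs (y i (t)) (x j ((t) - τ)) / ((M : ℝ) + k - 1)) * (⟪x j ((t) - τ), w⟫ - ⟪y i (t), w⟫)) ≤ 0 := by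
  have hden := den_yl_pos (k := k) hM2
  apply add_nonpos
  · refine Finset.sum_nonpos fun j hj => mul_np
      (div_nonneg (hψs.2.1 _ _).le hden.le) (by linarith [hmax j])
  · refine Finset.sum_nonpos fun j hj => mul_np
      (div_nonneg (hφs.2.1 _ _).le hden.le)
      (by linarith [hdel j (Finset.mem_filter.mp hj).2])

lemma DYF_nonpos (hψs : Admissible ψs) (hM2 : 2 ≤ M)
    (w : EuclideanSpace ℝ (Fin d)) (i : Fin M) (t : ℝ)
    (hmax : ∀ j : Fin M, ⟪y j t, w⟫ ≤ ⟪y i t, w⟫) :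
    (∑ j ∈ Finset.univ.erase i,
          (ψs (y i (t)) (y j (t)) / ((M : ℝ) - 1)) * (⟪y j (t), w⟫ - ⟪y i (t), w⟫)) ≤ 0 := by
  have hden := den_yf_pos (M := M) hM2
  refine Finset.sum_nonpos fun j hj => mul_np
    (div_nonneg (hψs.2.1 _ _).le hden.le) (by linarith [hmax j])

lemma stepHigh (hsol : IsSol h k τ ψ ψs φ φs x y)
    (hψ : Admissible ψ) (hψs : Admissible ψs) (hφ : Admissible φ) (hφs : Admissible φs)
    (hN : 2 ≤ N) (hM2 : 2 ≤ M) (hτ : 0 < τ)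
    (w : EuclideanSpace ℝ (Fin d)) (Mb a b : ℝ)
    (h0a : 0 ≤ a) (hab : a ≤ b) (hbτ : b ≤ a + τ)
    (hinix : ∀ i, ⟪x i a, w⟫ ≤ Mb) (hiniy : ∀ j, ⟪y j a, w⟫ ≤ Mb)
    (hdelx : ∀ j : Fin N, (j : ℕ) < k → ∀ s ∈ Icc (a - τ) a, ⟪x j s, w⟫ ≤ Mb)
    (hdely : ∀ j : Fin M, (j : ℕ) < h → ∀ s ∈ Icc (a - τ) a, ⟪y j s, w⟫ ≤ Mb) :
    ∀ t ∈ Icc a b, (∀ i, ⟪x i t, w⟫ ≤ Mb) ∧ (∀ j, ⟪y j t, w⟫ ≤ Mb) := by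
  haveI : Nonempty (Fin N ⊕ Fin M) := ⟨Sum.inl ⟨0, by omega⟩⟩
  set F : (Fin N ⊕ Fin M) → ℝ → ℝ :=
    Sum.elim (fun i s => ⟪x i s, w⟫) (fun j s => ⟪y j s, w⟫) with hF
  set F' : (Fin N ⊕ Fin M) → ℝ → ℝ :=
    Sum.elim
      (fun i t => if hik : (i : ℕ) < k then
          (∑ j ∈ Finset.univ.erase i,
          (ψ (x i (t)) (x j (t)) / ((N : ℝ) + h - 1)) * (⟪x j (t), w⟫ - ⟪x i (t), w⟫)) +
        ∑ j ∈ Finset.univ.filter (fun j : Fin M => (j : ℕ) < h),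
          (φ (x i (t)) (y j ((t) - τ)) / ((N : ℝ) + h - 1)) * (⟪y j ((t) - τ), w⟫ - ⟪x i (t), w⟫)
        else
          ∑ j ∈ Finset.univ.erase i,
          (ψ (x i (t)) (x j (t)) / ((N : ℝ) - 1)) * (⟪x j (t), w⟫ - ⟪x i (t), w⟫))
      (fun i t => if hih : (i : ℕ) < h then
          (∑ j ∈ Finset.univ.erase i,
          (ψs (y i (t)) (y j (t)) / ((M : ℝ) + k - 1)) * (⟪y j (t), w⟫ - ⟪y i (t), w⟫)) +
        ∑ j ∈ Finset.univ.filter (fun j : Fin N => (j : ℕ) < k),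
          (φs (y i (t)) (x j ((t) - τ)) / ((M : ℝ) + k - 1)) * (⟪x j ((t) - τ), w⟫ - ⟪y i (t), w⟫)
        else
          ∑ j ∈ Finset.univ.erase i,
          (ψs (y i (t)) (y j (t)) / ((M : ℝ) - 1)) * (⟪y j (t), w⟫ - ⟪y i (t), w⟫)) with hF'
  have main := invHigh F F' a b Mb hab
    (by
      rintro (i | j)
      · exact contP hsol i w
      · exact contQ hsol j w)
    (by
      rintro (i | j) t ht
      · have ht0 : 0 < t := lt_of_le_of_lt h0a ht.1
        simp only [hF', hF, Sum.elim_inl]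
        by_cases hik : (i : ℕ) < k
        · rw [dif_pos hik]
          exact hdP_xl hsol w i hik t ht0
        · rw [dif_neg hik]
          exact hdP_xf hsol w i (le_of_not_gt hik) t ht0
      · have ht0 : 0 < t := lt_of_le_of_lt h0a ht.1
        simp only [hF', hF, Sum.elim_inr]
        by_cases hih : (j : ℕ) < h
        · rw [dif_pos hih]
          exact hdP_yl hsol w j hih t ht0
        · rw [dif_neg hih]
          exact hdP_yf hsol w j (le_of_not_gt hih) t ht0)
    (by
      rintro (i | j) t ht hgt hmax
      · simp only [hF', hF, Sum.elim_inl] at hgt hmax ⊢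
        have hdel : ∀ j : Fin M, (j : ℕ) < h → ⟪y j (t - τ), w⟫ ≤ ⟪x i t, w⟫ := by
          intro j hjh
          have : t - τ ∈ Icc (a - τ) a := ⟨by linarith [ht.1], by linarith [ht.2]⟩
          linarith [hdely j hjh (t - τ) this]
        by_cases hik : (i : ℕ) < k
        · rw [dif_pos hik]
          exact DXL_nonpos hψ hφ hN w i t (fun j => hmax (Sum.inl j)) hdel
        · rw [dif_neg hik]
          exact DXF_nonpos hψ hN w i t (fun j => hmax (Sum.inl j))
      · simp only [hF', hF, Sum.elim_inr] at hgt hmax ⊢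
        have hdel : ∀ i : Fin N, (i : ℕ) < k → ⟪x i (t - τ), w⟫ ≤ ⟪y j t, w⟫ := by
          intro i hik
          have : t - τ ∈ Icc (a - τ) a := ⟨by linarith [ht.1], by linarith [ht.2]⟩
          linarith [hdelx i hik (t - τ) this]
        by_cases hih : (j : ℕ) < h
        · rw [dif_pos hih]
          exact DYL_nonpos hψs hφs hM2 w j t (fun i => hmax (Sum.inr i)) hdel
        · rw [dif_neg hih]
          exact DYF_nonpos hψs hM2 w j t (fun i => hmax (Sum.inr i)))
    (by
      rintro (i | j)
      · exact hinix i
      · exact hiniy j)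
  intro t ht
  exact ⟨fun i => main (Sum.inl i) t ht, fun j => main (Sum.inr j) t ht⟩

end Main2


section Main3

variable {d N M h k : ℕ} {τ : ℝ}
  {ψ ψs φ φs : EuclideanSpace ℝ (Fin d) → EuclideanSpace ℝ (Fin d) → ℝ}
  {x : Fin N → ℝ → EuclideanSpace ℝ (Fin d)}
  {y : Fin M → ℝ → EuclideanSpace ℝ (Fin d)}

lemma globHigh (hsol : IsSol h k τ ψ ψs φ φs x y)
    (hψ : Admissible ψ) (hψs : Admissible ψs) (hφ : Admissible φ) (hφs : Admissible φs)
    (hN : 2 ≤ N) (hM2 : 2 ≤ M) (hτ : 0 < τ)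
    (w : EuclideanSpace ℝ (Fin d)) (Mb a : ℝ) (h0a : 0 ≤ a)
    (hdelx : ∀ j : Fin N, (j : ℕ) < k → ∀ s ∈ Icc (a - τ) a, ⟪x j s, w⟫ ≤ Mb)
    (hdely : ∀ j : Fin M, (j : ℕ) < h → ∀ s ∈ Icc (a - τ) a, ⟪y j s, w⟫ ≤ Mb)
    (hinix : ∀ i, ⟪x i a, w⟫ ≤ Mb) (hiniy : ∀ j, ⟪y j a, w⟫ ≤ Mb) :
    ∀ t, a ≤ t → (∀ i, ⟪x i t, w⟫ ≤ Mb) ∧ (∀ j, ⟪y j t, w⟫ ≤ Mb) := by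
  have hτn : 0 ≤ τ := hτ.le
  have claim : ∀ L : ℕ, ∀ t ∈ Icc a (a + (L : ℝ) * τ),
      (∀ i, ⟪x i t, w⟫ ≤ Mb) ∧ (∀ j, ⟪y j t, w⟫ ≤ Mb) := by
    intro L
    induction L with
    | zero =>
      intro t ht
      simp only [Nat.cast_zero, zero_mul, add_zero] at ht
      have : t = a := le_antisymm ht.2 ht.1
      subst this
      exact ⟨hinix, hiniy⟩
    | succ L IH =>
      intro t ht
      by_cases htL : t ≤ a + (L : ℝ) * τ
      · exact IH t ⟨ht.1, htL⟩
      · push_neg at htL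
        have hL0 : (0:ℝ) ≤ (L : ℝ) * τ := by positivity
        have haL : a ≤ a + (L : ℝ) * τ := by linarith
        have hstep := stepHigh hsol hψ hψs hφ hφs hN hM2 hτ w Mb
          (a + (L : ℝ) * τ) (a + ((L : ℕ) + 1 : ℝ) * τ)
          (by linarith) (by nlinarith) (by nlinarith)
          (fun i => (IH (a + (L : ℝ) * τ) ⟨haL, le_rfl⟩).1 i)
          (fun j => (IH (a + (L : ℝ) * τ) ⟨haL, le_rfl⟩).2 j)
          (by
            intro j hjk s hs
            by_cases hsa : a ≤ s
            · exact (IH s ⟨hsa, by linarith [hs.2]⟩).1 j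
            · push_neg at hsa
              exact hdelx j hjk s ⟨by linarith [hs.1], hsa.le⟩)
          (by
            intro j hjh s hs
            by_cases hsa : a ≤ s
            · exact (IH s ⟨hsa, by linarith [hs.2]⟩).2 j
            · push_neg at hsa
              exact hdely j hjh s ⟨by linarith [hs.1], hsa.le⟩)
        have ht2 : t ≤ a + ((L : ℕ) + 1 : ℝ) * τ := by
          have := ht.2
          push_cast at this ⊢
          linarith
        exact hstep t ⟨htL.le, ht2⟩
  intro t hta
  set L : ℕ := ⌈(t - a) / τ⌉₊ with hL
  have h1 : (t - a) / τ ≤ (L : ℝ) := Nat.le_ceil _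
  have h2 : t - a ≤ (L : ℝ) * τ := by
    rw [div_le_iff₀ hτ] at h1
    linarith
  exact claim L t ⟨hta, by linarith⟩

lemma invN_high (hsol : IsSol h k τ ψ ψs φ φs x y)
    (hψ : Admissible ψ) (hψs : Admissible ψs) (hφ : Admissible φ) (hφs : Admissible φs)
    (hN : 2 ≤ N) (hM2 : 2 ≤ M) (hkN : k < N) (hhM : h < M) (hτ : 0 < τ)
    (w : EuclideanSpace ℝ (Fin d)) (n : ℕ) :
    ∀ t, 6 * (n : ℝ) * τ ≤ t →
      (∀ i, ⟪x i t, w⟫ ≤ MSeq h k τ w x y n) ∧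
      (∀ j, ⟪y j t, w⟫ ≤ MSeq h k τ w x y n) := by
  have hwin : (6 * (n : ℝ) - 1) * τ = 6 * (n : ℝ) * τ - τ := by ring
  have h6n : (0:ℝ) ≤ 6 * (n : ℝ) * τ := by positivity
  refine globHigh hsol hψ hψs hφ hφs hN hM2 hτ w _ _ h6n ?_ ?_ ?_ ?_
  · intro j hjk s hs
    refine xlead_le_MSeq hsol hτ w n j hjk ⟨?_, hs.2⟩
    rw [hwin]; exact hs.1
  · intro j hjh s hs
    refine ylead_le_MSeq hsol hτ w n j hjh ⟨?_, hs.2⟩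
    rw [hwin]; exact hs.1
  · intro i
    by_cases hik : (i : ℕ) < k
    · exact xlead_le_MSeq hsol hτ w n i hik ⟨window_le hτ n, le_rfl⟩
    · exact xfoll_le_MSeq hkN w n i (le_of_not_gt hik)
  · intro j
    by_cases hjh : (j : ℕ) < h
    · exact ylead_le_MSeq hsol hτ w n j hjh ⟨window_le hτ n, le_rfl⟩
    · exact yfoll_le_MSeq hhM w n j (le_of_not_gt hjh)

lemma invN_low (hsol : IsSol h k τ ψ ψs φ φs x y)
    (hψ : Admissible ψ) (hψs : Admissible ψs) (hφ : Admissible φ) (hφs : Admissible φs)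
    (hN : 2 ≤ N) (hM2 : 2 ≤ M) (hkN : k < N) (hhM : h < M) (hτ : 0 < τ)
    (w : EuclideanSpace ℝ (Fin d)) (n : ℕ) :
    ∀ t, 6 * (n : ℝ) * τ ≤ t →
      (∀ i, mSeq h k τ w x y n ≤ ⟪x i t, w⟫) ∧
      (∀ j, mSeq h k τ w x y n ≤ ⟪y j t, w⟫) := by
  intro t ht
  have H := invN_high hsol hψ hψs hφ hφs hN hM2 hkN hhM hτ (-w) n t ht
  rw [MSeq_neg h k τ w x y n] at H
  constructor
  · intro i
    have := H.1 i
    rw [inner_neg_right] at this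
    linarith
  · intro j
    have := H.2 j
    rw [inner_neg_right] at this
    linarith

lemma normBound (hsol : IsSol h k τ ψ ψs φ φs x y)
    (hψ : Admissible ψ) (hψs : Admissible ψs) (hφ : Admissible φ) (hφs : Admissible φs)
    (hN : 2 ≤ N) (hM2 : 2 ≤ M) (hk1 : 1 ≤ k) (hkN : k < N) (hhM : h < M) (hτ : 0 < τ) :
    (∀ i (t : ℝ), 0 ≤ t → ‖x i t‖ ≤ Cinit h k τ x y) ∧
    (∀ j (t : ℝ), 0 ≤ t → ‖y j t‖ ≤ Cinit h k τ x y) := by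
  have hC0 := cinit_nonneg (ψ := ψ) (ψs := ψs) (φ := φ) (φs := φs) hsol hN hk1 hτ
  have key : ∀ w : EuclideanSpace ℝ (Fin d), ‖w‖ ≤ 1 → ∀ t, 0 ≤ t →
      (∀ i, ⟪x i t, w⟫ ≤ Cinit h k τ x y) ∧
      (∀ j, ⟪y j t, w⟫ ≤ Cinit h k τ x y) := by
    intro w hw
    have hb : ∀ z : EuclideanSpace ℝ (Fin d), ‖z‖ ≤ Cinit h k τ x y →
        ⟪z, w⟫ ≤ Cinit h k τ x y := by
      intro z hz
      have h1 := real_inner_le_norm z w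
      nlinarith [norm_nonneg z, norm_nonneg w]
    intro t ht
    refine globHigh hsol hψ hψs hφ hφs hN hM2 hτ w _ 0 le_rfl ?_ ?_ ?_ ?_ t ht
    · intro j hjk s hs
      rw [zero_sub] at hs
      exact hb _ (norm_xlead_le_Cinit hsol j hjk hs)
    · intro j hjh s hs
      rw [zero_sub] at hs
      exact hb _ (norm_ylead_le_Cinit hsol j hjh hs)
    · intro i
      by_cases hik : (i : ℕ) < k
      · exact hb _ (norm_xlead_le_Cinit hsol i hik ⟨by linarith, le_rfl⟩)
      · exact hb _ (norm_xfoll_le_Cinit i (le_of_not_gt hik))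
    · intro j
      by_cases hjh : (j : ℕ) < h
      · exact hb _ (norm_ylead_le_Cinit hsol j hjh ⟨by linarith, le_rfl⟩)
      · exact hb _ (norm_yfoll_le_Cinit j (le_of_not_gt hjh))
  have norm_of : ∀ z : EuclideanSpace ℝ (Fin d),
      (∀ w : EuclideanSpace ℝ (Fin d), ‖w‖ ≤ 1 → ⟪z, w⟫ ≤ Cinit h k τ x y) →
      ‖z‖ ≤ Cinit h k τ x y := by
    intro z hz
    rcases eq_or_ne z 0 with rfl | hz0
    · simpa using hC0
    · have hnz : (0:ℝ) < ‖z‖ := norm_pos_iff.mpr hz0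
      have hw : ‖(‖z‖⁻¹ • z : EuclideanSpace ℝ (Fin d))‖ ≤ 1 := by
        rw [norm_smul, norm_inv, norm_norm, inv_mul_cancel₀ (ne_of_gt hnz)]
      have := hz _ hw
      rw [real_inner_smul_right, real_inner_self_eq_norm_sq] at this
      have he : ‖z‖⁻¹ * ‖z‖ ^ 2 = ‖z‖ := by
        field_simp
      rw [he] at this
      exact this
  constructor
  · intro i t ht
    exact norm_of _ (fun w hw => (key w hw t ht).1 i)
  · intro j t ht
    exact norm_of _ (fun w hw => (key w hw t ht).2 j)

end Main3




lemma card_filt {n m : ℕ} (hm : m < n) :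
    (Finset.univ.filter (fun j : Fin n => (j : ℕ) < m)).card = m := by
  have e : (Finset.univ.filter (fun j : Fin n => (j : ℕ) < m))
      = Finset.Iio (⟨m, hm⟩ : Fin n) := by
    ext j
    simp [Fin.lt_def]
  rw [e, Fin.card_Iio]

lemma erase_sum_le {n : ℕ} (i : Fin n) (c : Fin n → ℝ) (den K : ℝ) (hden : 0 < den)
    (hc : ∀ j, c j ≤ K) :
    ∑ j ∈ Finset.univ.erase i, c j / den ≤ ((n : ℝ) - 1) * (K / den) := by
  calc ∑ j ∈ Finset.univ.erase i, c j / den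
      ≤ (Finset.univ.erase i).card • (K / den) := by
        refine Finset.sum_le_card_nsmul _ _ _ fun l _ => ?_
        gcongr
        exact hc l
    _ = ((n : ℝ) - 1) * (K / den) := by
        rw [Finset.card_erase_of_mem (Finset.mem_univ i), Finset.card_univ,
          Fintype.card_fin, nsmul_eq_mul]
        congr 1
        have := i.pos
        push_cast [Nat.cast_sub (by omega : 1 ≤ n)]
        ring

lemma filt_sum_le {n m : ℕ} (hm : m < n) (c : Fin n → ℝ) (den K : ℝ) (hden : 0 < den)
    (hc : ∀ j, c j ≤ K) :
    ∑ j ∈ Finset.univ.filter (fun j : Fin n => (j : ℕ) < m), c j / den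
      ≤ (m : ℝ) * (K / den) := by
  calc ∑ j ∈ Finset.univ.filter (fun j : Fin n => (j : ℕ) < m), c j / den
      ≤ (Finset.univ.filter (fun j : Fin n => (j : ℕ) < m)).card • (K / den) := by
        refine Finset.sum_le_card_nsmul _ _ _ fun l _ => ?_
        gcongr
        exact hc l
    _ = (m : ℝ) * (K / den) := by
        rw [card_filt hm, nsmul_eq_mul]

section Main4

variable {d N M h k : ℕ} {τ : ℝ}
  {ψ ψs φ φs : EuclideanSpace ℝ (Fin d) → EuclideanSpace ℝ (Fin d) → ℝ}
  {x : Fin N → ℝ → EuclideanSpace ℝ (Fin d)}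
  {y : Fin M → ℝ → EuclideanSpace ℝ (Fin d)}

lemma gam_le_psi (hψ : Admissible ψ) {z1 z2 : EuclideanSpace ℝ (Fin d)}
    (h1 : ‖z1‖ ≤ Cinit h k τ x y) (h2 : ‖z2‖ ≤ Cinit h k τ x y) :
    Gam h k τ ψ ψs φ φs x y ≤ ψ z1 z2 :=
  le_trans (min_le_left _ _) (le_trans (min_le_left _ _) (minOnBall_le hψ h1 h2))

lemma gam_le_psis (hψs : Admissible ψs) {z1 z2 : EuclideanSpace ℝ (Fin d)}
    (h1 : ‖z1‖ ≤ Cinit h k τ x y) (h2 : ‖z2‖ ≤ Cinit h k τ x y) :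
    Gam h k τ ψ ψs φ φs x y ≤ ψs z1 z2 :=
  le_trans (min_le_left _ _) (le_trans (min_le_right _ _) (minOnBall_le hψs h1 h2))

lemma gam_le_phis (hφs : Admissible φs) {z1 z2 : EuclideanSpace ℝ (Fin d)}
    (h1 : ‖z1‖ ≤ Cinit h k τ x y) (h2 : ‖z2‖ ≤ Cinit h k τ x y) :
    Gam h k τ ψ ψs φ φs x y ≤ φs z1 z2 :=
  le_trans (min_le_right _ _) (le_trans (min_le_right _ _) (minOnBall_le hφs h1 h2))

lemma gam_pos (hsol : IsSol h k τ ψ ψs φ φs x y)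
    (hψ : Admissible ψ) (hψs : Admissible ψs) (hφ : Admissible φ) (hφs : Admissible φs)
    (hN : 2 ≤ N) (hk1 : 1 ≤ k) (hτ : 0 < τ) :
    0 < Gam h k τ ψ ψs φ φs x y := by
  have hC := cinit_nonneg (ψ := ψ) (ψs := ψs) (φ := φ) (φs := φs) hsol hN hk1 hτ
  exact lt_min (lt_min (minOnBall_pos hψ hC) (minOnBall_pos hψs hC))
    (lt_min (minOnBall_pos hφ hC) (minOnBall_pos hφs hC))

lemma gam_le_lam (hsol : IsSol h k τ ψ ψs φ φs x y)
    (hψ : Admissible ψ)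
    (hN : 2 ≤ N) (hk1 : 1 ≤ k) (hτ : 0 < τ) :
    Gam h k τ ψ ψs φ φs x y ≤ Lam ψ ψs φ φs := by
  have hC := cinit_nonneg (ψ := ψ) (ψs := ψs) (φ := φ) (φs := φs) hsol hN hk1 hτ
  exact le_trans (gam_le_psi hψ (z1 := 0) (z2 := 0) (by simpa using hC) (by simpa using hC))
    (le_lam_psi hψ 0 0)

lemma DXL_le (hψ : Admissible ψ) (hφ : Admissible φ) (hN : 2 ≤ N) (hhM : h < M)
    (w : EuclideanSpace ℝ (Fin d)) (i : Fin N) (t Mb : ℝ)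
    (hallx : ∀ j : Fin N, ⟪x j t, w⟫ ≤ Mb)
    (hdel : ∀ j : Fin M, (j : ℕ) < h → ⟪y j (t - τ), w⟫ ≤ Mb) :
    ((∑ j ∈ Finset.univ.erase i,
          (ψ (x i (t)) (x j (t)) / ((N : ℝ) + h - 1)) * (⟪x j (t), w⟫ - ⟪x i (t), w⟫)) +
        ∑ j ∈ Finset.univ.filter (fun j : Fin M => (j : ℕ) < h),
          (φ (x i (t)) (y j ((t) - τ)) / ((N : ℝ) + h - 1)) * (⟪y j ((t) - τ), w⟫ - ⟪x i (t), w⟫)) ≤ Lam ψ ψs φ φs * (Mb - ⟪x i t, w⟫) := by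
  have hden := den_xl_pos (h := h) hN
  set K := Lam ψ ψs φ φs with hK
  have hb1 : (∑ j ∈ Finset.univ.erase i,
      (ψ (x i t) (x j t) / ((N : ℝ) + h - 1)) * (⟪x j t, w⟫ - ⟪x i t, w⟫))
      ≤ (((N : ℝ) - 1) * (K / ((N : ℝ) + h - 1))) * (Mb - ⟪x i t, w⟫) :=
    sum_bound _ _ _ _ _ _ (fun l _ => div_nonneg (hψ.2.1 _ _).le hden.le)
      (erase_sum_le i _ _ _ hden (fun j => le_lam_psi hψ _ _))
      (fun l _ => hallx l) (hallx i)
  have hb2 : (∑ j ∈ Finset.univ.filter (fun j : Fin M => (j : ℕ) < h),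
      (φ (x i t) (y j (t - τ)) / ((N : ℝ) + h - 1)) * (⟪y j (t - τ), w⟫ - ⟪x i t, w⟫))
      ≤ ((h : ℝ) * (K / ((N : ℝ) + h - 1))) * (Mb - ⟪x i t, w⟫) :=
    sum_bound _ _ _ _ _ _ (fun l _ => div_nonneg (hφ.2.1 _ _).le hden.le)
      (filt_sum_le hhM _ _ _ hden (fun j => le_lam_phi hφ _ _))
      (fun l hl => hdel l (Finset.mem_filter.mp hl).2) (hallx i)
  have hsplit : (((N : ℝ) - 1) * (K / ((N : ℝ) + h - 1)))
      + ((h : ℝ) * (K / ((N : ℝ) + h - 1))) = K := by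
    field_simp
    ring
  have e : (((N : ℝ) - 1) * (K / ((N : ℝ) + h - 1))) * (Mb - ⟪x i t, w⟫)
      + ((h : ℝ) * (K / ((N : ℝ) + h - 1))) * (Mb - ⟪x i t, w⟫)
      = K * (Mb - ⟪x i t, w⟫) := by
    rw [← add_mul, hsplit]
  linarith

lemma DXL_le_pull (hψ : Admissible ψ) (hψs : Admissible ψs) (hφ : Admissible φ)
    (hφs : Admissible φs) (hN : 2 ≤ N) (hhM : h < M)
    (w : EuclideanSpace ℝ (Fin d)) (i : Fin N) (t Mb : ℝ)
    (hallx : ∀ j : Fin N, ⟪x j t, w⟫ ≤ Mb)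
    (hdel : ∀ j : Fin M, (j : ℕ) < h → ⟪y j (t - τ), w⟫ ≤ Mb)
    (j0 : Fin N) (hj0 : j0 ≠ i) (β : ℝ) (hβ : 0 ≤ β)
    (hΓ0 : 0 ≤ Gam h k τ ψ ψs φ φs x y)
    (hn1 : ‖x i t‖ ≤ Cinit h k τ x y) (hn2 : ‖x j0 t‖ ≤ Cinit h k τ x y)
    (hpull : ⟪x j0 t, w⟫ ≤ Mb - β) :
    ((∑ j ∈ Finset.univ.erase i,
          (ψ (x i (t)) (x j (t)) / ((N : ℝ) + h - 1)) * (⟪x j (t), w⟫ - ⟪x i (t), w⟫)) +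
        ∑ j ∈ Finset.univ.filter (fun j : Fin M => (j : ℕ) < h),
          (φ (x i (t)) (y j ((t) - τ)) / ((N : ℝ) + h - 1)) * (⟪y j ((t) - τ), w⟫ - ⟪x i (t), w⟫)) ≤ Lam ψ ψs φ φs * (Mb - ⟪x i t, w⟫)
      - (Gam h k τ ψ ψs φ φs x y / ((N : ℝ) + M)) * β := by
  have hden := den_xl_pos (h := h) hN
  have hMr : (h : ℝ) ≤ (M : ℝ) := by exact_mod_cast hhM.le
  have hdenle : (N : ℝ) + h - 1 ≤ (N : ℝ) + M := by linarith
  set K := Lam ψ ψs φ φs with hK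
  set Γ := Gam h k τ ψ ψs φ φs x y with hΓ
  have hγle : Γ / ((N : ℝ) + M) ≤ ψ (x i t) (x j0 t) / ((N : ℝ) + h - 1) := by
    calc Γ / ((N : ℝ) + M) ≤ Γ / ((N : ℝ) + h - 1) := by gcongr
      _ ≤ ψ (x i t) (x j0 t) / ((N : ℝ) + h - 1) := by
          gcongr
          exact gam_le_psi hψ hn1 hn2
  have hγ0 : 0 ≤ Γ / ((N : ℝ) + M) := by positivity
  have hb1 : (∑ j ∈ Finset.univ.erase i,
      (ψ (x i t) (x j t) / ((N : ℝ) + h - 1)) * (⟪x j t, w⟫ - ⟪x i t, w⟫))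
      ≤ (((N : ℝ) - 1) * (K / ((N : ℝ) + h - 1))) * (Mb - ⟪x i t, w⟫)
        - (Γ / ((N : ℝ) + M)) * β := by
    refine sum_bound_pull _ _ _ _ _ _ _ _ j0
      (Finset.mem_erase.mpr ⟨hj0, Finset.mem_univ _⟩)
      (fun l _ => div_nonneg (hψ.2.1 _ _).le hden.le)
      (erase_sum_le i _ _ _ hden (fun j => le_lam_psi hψ _ _))
      (fun l _ => hallx l) (hallx i) hγle hγ0 hpull hβ
  have hb2 : (∑ j ∈ Finset.univ.filter (fun j : Fin M => (j : ℕ) < h),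
      (φ (x i t) (y j (t - τ)) / ((N : ℝ) + h - 1)) * (⟪y j (t - τ), w⟫ - ⟪x i t, w⟫))
      ≤ ((h : ℝ) * (K / ((N : ℝ) + h - 1))) * (Mb - ⟪x i t, w⟫) :=
    sum_bound _ _ _ _ _ _ (fun l _ => div_nonneg (hφ.2.1 _ _).le hden.le)
      (filt_sum_le hhM _ _ _ hden (fun j => le_lam_phi hφ _ _))
      (fun l hl => hdel l (Finset.mem_filter.mp hl).2) (hallx i)
  have hsplit : (((N : ℝ) - 1) * (K / ((N : ℝ) + h - 1)))
      + ((h : ℝ) * (K / ((N : ℝ) + h - 1))) = K := by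
    field_simp
    ring
  have e : (((N : ℝ) - 1) * (K / ((N : ℝ) + h - 1))) * (Mb - ⟪x i t, w⟫)
      + ((h : ℝ) * (K / ((N : ℝ) + h - 1))) * (Mb - ⟪x i t, w⟫)
      = K * (Mb - ⟪x i t, w⟫) := by
    rw [← add_mul, hsplit]
  linarith

lemma DXF_le_pull (hψ : Admissible ψ) (hψs : Admissible ψs) (hφ : Admissible φ)
    (hφs : Admissible φs) (hN : 2 ≤ N)
    (w : EuclideanSpace ℝ (Fin d)) (i : Fin N) (t Mb : ℝ)
    (hallx : ∀ j : Fin N, ⟪x j t, w⟫ ≤ Mb)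
    (j0 : Fin N) (hj0 : j0 ≠ i) (β : ℝ) (hβ : 0 ≤ β)
    (hΓ0 : 0 ≤ Gam h k τ ψ ψs φ φs x y)
    (hn1 : ‖x i t‖ ≤ Cinit h k τ x y) (hn2 : ‖x j0 t‖ ≤ Cinit h k τ x y)
    (hpull : ⟪x j0 t, w⟫ ≤ Mb - β) :
    (∑ j ∈ Finset.univ.erase i,
          (ψ (x i (t)) (x j (t)) / ((N : ℝ) - 1)) * (⟪x j (t), w⟫ - ⟪x i (t), w⟫)) ≤ Lam ψ ψs φ φs * (Mb - ⟪x i t, w⟫)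
      - (Gam h k τ ψ ψs φ φs x y / ((N : ℝ) + M)) * β := by
  have hden := den_xf_pos (N := N) hN
  have hM0 : (0 : ℝ) ≤ (M : ℝ) := Nat.cast_nonneg M
  have hdenle : (N : ℝ) - 1 ≤ (N : ℝ) + M := by linarith
  set K := Lam ψ ψs φ φs with hK
  set Γ := Gam h k τ ψ ψs φ φs x y with hΓ
  have hγle : Γ / ((N : ℝ) + M) ≤ ψ (x i t) (x j0 t) / ((N : ℝ) - 1) := by
    calc Γ / ((N : ℝ) + M) ≤ Γ / ((N : ℝ) - 1) := by gcongr
      _ ≤ ψ (x i t) (x j0 t) / ((N : ℝ) - 1) := by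
          gcongr
          exact gam_le_psi hψ hn1 hn2
  have hγ0 : 0 ≤ Γ / ((N : ℝ) + M) := by positivity
  have hb1 : (∑ j ∈ Finset.univ.erase i,
          (ψ (x i (t)) (x j (t)) / ((N : ℝ) - 1)) * (⟪x j (t), w⟫ - ⟪x i (t), w⟫))
      ≤ (((N : ℝ) - 1) * (K / ((N : ℝ) - 1))) * (Mb - ⟪x i t, w⟫)
        - (Γ / ((N : ℝ) + M)) * β :=
    sum_bound_pull _ _ _ _ _ _ _ _ j0
      (Finset.mem_erase.mpr ⟨hj0, Finset.mem_univ _⟩)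
      (fun l _ => div_nonneg (hψ.2.1 _ _).le hden.le)
      (erase_sum_le i _ _ _ hden (fun j => le_lam_psi hψ _ _))
      (fun l _ => hallx l) (hallx i) hγle hγ0 hpull hβ
  have hsplit : ((N : ℝ) - 1) * (K / ((N : ℝ) - 1)) = K := by
    field_simp
  rw [hsplit] at hb1
  exact hb1

lemma DYL_le_pull_del (hψ : Admissible ψ) (hψs : Admissible ψs) (hφ : Admissible φ)
    (hφs : Admissible φs) (hM2 : 2 ≤ M) (hkN : k < N) (hMN : M ≤ N)
    (w : EuclideanSpace ℝ (Fin d)) (i : Fin M) (t Mb : ℝ)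
    (hally : ∀ j : Fin M, ⟪y j t, w⟫ ≤ Mb)
    (hdel : ∀ j : Fin N, (j : ℕ) < k → ⟪x j (t - τ), w⟫ ≤ Mb)
    (j0 : Fin N) (hj0k : (j0 : ℕ) < k) (β : ℝ) (hβ : 0 ≤ β)
    (hΓ0 : 0 ≤ Gam h k τ ψ ψs φ φs x y)
    (hn1 : ‖y i t‖ ≤ Cinit h k τ x y) (hn2 : ‖x j0 (t - τ)‖ ≤ Cinit h k τ x y)
    (hpull : ⟪x j0 (t - τ), w⟫ ≤ Mb - β) :
    ((∑ j ∈ Finset.univ.erase i,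
          (ψs (y i (t)) (y j (t)) / ((M : ℝ) + k - 1)) * (⟪y j (t), w⟫ - ⟪y i (t), w⟫)) +
        ∑ j ∈ Finset.univ.filter (fun j : Fin N => (j : ℕ) < k),
          (φs (y i (t)) (x j ((t) - τ)) / ((M : ℝ) + k - 1)) * (⟪x j ((t) - τ), w⟫ - ⟪y i (t), w⟫)) ≤ Lam ψ ψs φ φs * (Mb - ⟪y i t, w⟫)
      - (Gam h k τ ψ ψs φ φs x y / ((N : ℝ) + M)) * β := by
  have hden := den_yl_pos (k := k) hM2
  have hkr : (k : ℝ) ≤ (N : ℝ) := by exact_mod_cast hkN.le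
  have hMr : (M : ℝ) ≤ (N : ℝ) := by exact_mod_cast hMN
  have hdenle : (M : ℝ) + k - 1 ≤ (N : ℝ) + M := by linarith
  set K := Lam ψ ψs φ φs with hK
  set Γ := Gam h k τ ψ ψs φ φs x y with hΓ
  have hγle : Γ / ((N : ℝ) + M) ≤ φs (y i t) (x j0 (t - τ)) / ((M : ℝ) + k - 1) := by
    calc Γ / ((N : ℝ) + M) ≤ Γ / ((M : ℝ) + k - 1) := by gcongr
      _ ≤ φs (y i t) (x j0 (t - τ)) / ((M : ℝ) + k - 1) := by
          gcongr
          exact gam_le_phis hφs hn1 hn2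
  have hγ0 : 0 ≤ Γ / ((N : ℝ) + M) := by positivity
  have hb1 : (∑ j ∈ Finset.univ.erase i,
      (ψs (y i t) (y j t) / ((M : ℝ) + k - 1)) * (⟪y j t, w⟫ - ⟪y i t, w⟫))
      ≤ (((M : ℝ) - 1) * (K / ((M : ℝ) + k - 1))) * (Mb - ⟪y i t, w⟫) :=
    sum_bound _ _ _ _ _ _ (fun l _ => div_nonneg (hψs.2.1 _ _).le hden.le)
      (erase_sum_le i _ _ _ hden (fun j => le_lam_psis hψs _ _))
      (fun l _ => hally l) (hally i)
  have hb2 : (∑ j ∈ Finset.univ.filter (fun j : Fin N => (j : ℕ) < k),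
      (φs (y i t) (x j (t - τ)) / ((M : ℝ) + k - 1)) * (⟪x j (t - τ), w⟫ - ⟪y i t, w⟫))
      ≤ ((k : ℝ) * (K / ((M : ℝ) + k - 1))) * (Mb - ⟪y i t, w⟫)
        - (Γ / ((N : ℝ) + M)) * β :=
    sum_bound_pull _ _ _ _ _ _ _ _ j0
      (Finset.mem_filter.mpr ⟨Finset.mem_univ _, hj0k⟩)
      (fun l _ => div_nonneg (hφs.2.1 _ _).le hden.le)
      (filt_sum_le hkN _ _ _ hden (fun j => le_lam_phis hφs _ _))
      (fun l hl => hdel l (Finset.mem_filter.mp hl).2) (hally i) hγle hγ0 hpull hβ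
  have hsplit : (((M : ℝ) - 1) * (K / ((M : ℝ) + k - 1)))
      + ((k : ℝ) * (K / ((M : ℝ) + k - 1))) = K := by
    field_simp
    ring
  have e : (((M : ℝ) - 1) * (K / ((M : ℝ) + k - 1))) * (Mb - ⟪y i t, w⟫)
      + ((k : ℝ) * (K / ((M : ℝ) + k - 1))) * (Mb - ⟪y i t, w⟫)
      = K * (Mb - ⟪y i t, w⟫) := by
    rw [← add_mul, hsplit]
  linarith

lemma DYF_le_pull (hψ : Admissible ψ) (hψs : Admissible ψs) (hφ : Admissible φ)
    (hφs : Admissible φs) (hM2 : 2 ≤ M) (hMN : M ≤ N)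
    (w : EuclideanSpace ℝ (Fin d)) (i : Fin M) (t Mb : ℝ)
    (hally : ∀ j : Fin M, ⟪y j t, w⟫ ≤ Mb)
    (j0 : Fin M) (hj0 : j0 ≠ i) (β : ℝ) (hβ : 0 ≤ β)
    (hΓ0 : 0 ≤ Gam h k τ ψ ψs φ φs x y)
    (hn1 : ‖y i t‖ ≤ Cinit h k τ x y) (hn2 : ‖y j0 t‖ ≤ Cinit h k τ x y)
    (hpull : ⟪y j0 t, w⟫ ≤ Mb - β) :
    (∑ j ∈ Finset.univ.erase i,
          (ψs (y i (t)) (y j (t)) / ((M : ℝ) - 1)) * (⟪y j (t), w⟫ - ⟪y i (t), w⟫)) ≤ Lam ψ ψs φ φs * (Mb - ⟪y i t, w⟫)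
      - (Gam h k τ ψ ψs φ φs x y / ((N : ℝ) + M)) * β := by
  have hden := den_yf_pos (M := M) hM2
  have hMr : (M : ℝ) ≤ (N : ℝ) := by exact_mod_cast hMN
  have hN0 : (0 : ℝ) ≤ (N : ℝ) := Nat.cast_nonneg N
  have hdenle : (M : ℝ) - 1 ≤ (N : ℝ) + M := by linarith
  set K := Lam ψ ψs φ φs with hK
  set Γ := Gam h k τ ψ ψs φ φs x y with hΓ
  have hγle : Γ / ((N : ℝ) + M) ≤ ψs (y i t) (y j0 t) / ((M : ℝ) - 1) := by
    calc Γ / ((N : ℝ) + M) ≤ Γ / ((M : ℝ) - 1) := by gcongr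
      _ ≤ ψs (y i t) (y j0 t) / ((M : ℝ) - 1) := by
          gcongr
          exact gam_le_psis hψs hn1 hn2
  have hγ0 : 0 ≤ Γ / ((N : ℝ) + M) := by positivity
  have hb1 : (∑ j ∈ Finset.univ.erase i,
          (ψs (y i (t)) (y j (t)) / ((M : ℝ) - 1)) * (⟪y j (t), w⟫ - ⟪y i (t), w⟫))
      ≤ (((M : ℝ) - 1) * (K / ((M : ℝ) - 1))) * (Mb - ⟪y i t, w⟫)
        - (Γ / ((N : ℝ) + M)) * β :=
    sum_bound_pull _ _ _ _ _ _ _ _ j0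
      (Finset.mem_erase.mpr ⟨hj0, Finset.mem_univ _⟩)
      (fun l _ => div_nonneg (hψs.2.1 _ _).le hden.le)
      (erase_sum_le i _ _ _ hden (fun j => le_lam_psis hψs _ _))
      (fun l _ => hally l) (hally i) hγle hγ0 hpull hβ
  have hsplit : ((M : ℝ) - 1) * (K / ((M : ℝ) - 1)) = K := by
    field_simp
  rw [hsplit] at hb1
  exact hb1

end Main4


/-- The contraction constant. -/
def epsC {d : ℕ} (N M h k : ℕ) (τ : ℝ)
    (ψ ψs φ φs : EuclideanSpace ℝ (Fin d) → EuclideanSpace ℝ (Fin d) → ℝ)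
    (x : Fin N → ℝ → EuclideanSpace ℝ (Fin d))
    (y : Fin M → ℝ → EuclideanSpace ℝ (Fin d)) : ℝ :=
  ((Gam h k τ ψ ψs φ φs x y / ((N : ℝ) + M)) / Lam ψ ψs φ φs
      * (1 - Real.exp (-(Lam ψ ψs φ φs * τ))))^2
    * (Real.exp (-(Lam ψ ψs φ φs * (6 * τ))) / 2)

section Main5

variable {d N M h k : ℕ} {τ : ℝ}
  {ψ ψs φ φs : EuclideanSpace ℝ (Fin d) → EuclideanSpace ℝ (Fin d) → ℝ}
  {x : Fin N → ℝ → EuclideanSpace ℝ (Fin d)}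
  {y : Fin M → ℝ → EuclideanSpace ℝ (Fin d)}

lemma eps_pos (hsol : IsSol h k τ ψ ψs φ φs x y)
    (hψ : Admissible ψ) (hψs : Admissible ψs) (hφ : Admissible φ) (hφs : Admissible φs)
    (hN : 2 ≤ N) (hk1 : 1 ≤ k) (hτ : 0 < τ) :
    0 < epsC N M h k τ ψ ψs φ φs x y := by
  have hΓ := gam_pos hsol hψ hψs hφ hφs hN hk1 hτ
  have hK := lam_pos (ψs := ψs) (φ := φ) (φs := φs) hψ
  have he : Real.exp (-(Lam ψ ψs φ φs * τ)) < 1 := by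
    rw [Real.exp_lt_one_iff]
    nlinarith
  have hNM : (0:ℝ) < (N : ℝ) + M := by
    have h1 : (2:ℝ) ≤ (N:ℝ) := by exact_mod_cast hN
    have h2 : (0:ℝ) ≤ (M:ℝ) := Nat.cast_nonneg M
    linarith
  have hb : 0 < 1 - Real.exp (-(Lam ψ ψs φ φs * τ)) := by linarith
  unfold epsC
  apply mul_pos
  · apply pow_pos
    exact mul_pos (div_pos (div_pos hΓ hNM) hK) hb
  · positivity

lemma eps_lt_one (hsol : IsSol h k τ ψ ψs φ φs x y)
    (hψ : Admissible ψ) (hψs : Admissible ψs) (hφ : Admissible φ) (hφs : Admissible φs)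
    (hN : 2 ≤ N) (hk1 : 1 ≤ k) (hτ : 0 < τ) :
    epsC N M h k τ ψ ψs φ φs x y < 1 := by
  have hΓ := gam_pos hsol hψ hψs hφ hφs hN hk1 hτ
  have hK := lam_pos (ψs := ψs) (φ := φ) (φs := φs) hψ
  have hΓK := gam_le_lam hsol hψ hN hk1 hτ
  have hNM : (1:ℝ) ≤ (N : ℝ) + M := by
    have : (2:ℝ) ≤ (N:ℝ) := by exact_mod_cast hN
    have : (0:ℝ) ≤ (M:ℝ) := Nat.cast_nonneg M
    linarith
  have hγ : Gam h k τ ψ ψs φ φs x y / ((N : ℝ) + M) ≤ Lam ψ ψs φ φs :=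
    le_trans (div_le_self hΓ.le hNM) hΓK
  have hρ1 : (Gam h k τ ψ ψs φ φs x y / ((N : ℝ) + M)) / Lam ψ ψs φ φs ≤ 1 :=
    div_le_one_of_le₀ hγ hK.le
  have hρ0 : 0 ≤ (Gam h k τ ψ ψs φ φs x y / ((N : ℝ) + M)) / Lam ψ ψs φ φs := by
    positivity
  have hee : 0 < Real.exp (-(Lam ψ ψs φ φs * τ)) := Real.exp_pos _
  have he1 : Real.exp (-(Lam ψ ψs φ φs * τ)) < 1 := by
    rw [Real.exp_lt_one_iff]
    nlinarith
  have hee2 : Real.exp (-(Lam ψ ψs φ φs * (6 * τ))) ≤ 1 := by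
    rw [Real.exp_le_one_iff]
    nlinarith
  have hsq : ((Gam h k τ ψ ψs φ φs x y / ((N : ℝ) + M)) / Lam ψ ψs φ φs
      * (1 - Real.exp (-(Lam ψ ψs φ φs * τ))))^2 ≤ 1 := by
    have h1 : (Gam h k τ ψ ψs φ φs x y / ((N : ℝ) + M)) / Lam ψ ψs φ φs
        * (1 - Real.exp (-(Lam ψ ψs φ φs * τ))) ≤ 1 := by nlinarith
    have h0 : 0 ≤ (Gam h k τ ψ ψs φ φs x y / ((N : ℝ) + M)) / Lam ψ ψs φ φs
        * (1 - Real.exp (-(Lam ψ ψs φ φs * τ))) := mul_nonneg hρ0 (by linarith)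
    nlinarith
  unfold epsC
  nlinarith [Real.exp_pos (-(Lam ψ ψs φ φs * (6 * τ)))]

set_option maxHeartbeats 2000000 in
lemma keyStep (hsol : IsSol h k τ ψ ψs φ φs x y)
    (hψ : Admissible ψ) (hψs : Admissible ψs) (hφ : Admissible φ) (hφs : Admissible φs)
    (hN : 2 ≤ N) (hM2 : 2 ≤ M) (hMN : M ≤ N)
    (hh1 : 1 ≤ h) (hhM : h < M) (hk1 : 1 ≤ k) (hkN : k < N) (hτ : 0 < τ)
    (w : EuclideanSpace ℝ (Fin d)) (n : ℕ)
    (hcase : ⟪x (⟨0, by omega⟩ : Fin N) (6 * (n : ℝ) * τ), w⟫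
      ≤ (mSeq h k τ w x y n + MSeq h k τ w x y n) / 2) :
    MSeq h k τ w x y (n + 1) ≤ MSeq h k τ w x y n
      - epsC N M h k τ ψ ψs φ φs x y
        * (MSeq h k τ w x y n - mSeq h k τ w x y n) := by
  -- abbreviations
  set K := Lam ψ ψs φ φs with hKdef
  set Γ := Gam h k τ ψ ψs φ φs x y with hΓdef
  set γ := Γ / ((N : ℝ) + M) with hγdef
  set ρ := γ / K * (1 - Real.exp (-(K * τ))) with hρdef
  set a := 6 * (n : ℝ) * τ with hadef
  set Mb := MSeq h k τ w x y n with hMbdef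
  set m := mSeq h k τ w x y n with hmdef
  set x0 : Fin N := ⟨0, by omega⟩ with hx0def
  set y0 : Fin M := ⟨0, by omega⟩ with hy0def
  have hx0k : (x0 : ℕ) < k := by simp [hx0def]; omega
  have hy0h : (y0 : ℕ) < h := by simp [hy0def]; omega
  have hK : 0 < K := lam_pos (ψs := ψs) (φ := φ) (φs := φs) hψ
  have hΓ : 0 < Γ := gam_pos hsol hψ hψs hφ hφs hN hk1 hτ
  have hNM : (1:ℝ) ≤ (N : ℝ) + M := by
    have h1 : (2:ℝ) ≤ (N:ℝ) := by exact_mod_cast hN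
    have h2 : (0:ℝ) ≤ (M:ℝ) := Nat.cast_nonneg M
    linarith
  have hγpos : 0 < γ := by rw [hγdef]; positivity
  have hγK : γ ≤ K := le_trans (div_le_self hΓ.le hNM) (gam_le_lam hsol hψ hN hk1 hτ)
  have hexpτ : Real.exp (-(K * τ)) < 1 := by
    rw [Real.exp_lt_one_iff]; nlinarith
  have hρpos : 0 < ρ := by
    rw [hρdef]
    have : 0 < 1 - Real.exp (-(K * τ)) := by linarith
    positivity
  have hρ1 : ρ ≤ 1 := by
    rw [hρdef]
    have h1 : γ / K ≤ 1 := div_le_one_of_le₀ hγK hK.le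
    have h2 : 0 ≤ γ / K := by positivity
    nlinarith [Real.exp_pos (-(K * τ))]
  have ha0 : 0 ≤ a := by rw [hadef]; positivity
  -- invariance
  have INVH := invN_high hsol hψ hψs hφ hφs hN hM2 hkN hhM hτ w n
  have INVL := invN_low hsol hψ hψs hφ hφs hN hM2 hkN hhM hτ w n
  have NB := normBound hsol hψ hψs hφ hφs hN hM2 hk1 hkN hhM hτ
  have hD0 : 0 ≤ Mb - m := by
    have h1 := mSeq_le_xlead hsol hτ w n x0 hx0k (t := a) ⟨window_le hτ n, le_rfl⟩
    have h2 := xlead_le_MSeq hsol hτ w n x0 hx0k (t := a) ⟨window_le hτ n, le_rfl⟩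
    linarith
  set β0 := Real.exp (-(K * (6 * τ))) * ((Mb - m) / 2) with hβ0def
  have hβ00 : 0 ≤ β0 := by rw [hβ0def]; positivity
  have hwineq : (6 * (n : ℝ) - 1) * τ = a - τ := by rw [hadef]; ring
  -- bound on delayed y-leaders for times > a
  have hdelY : ∀ s, a < s → ∀ j : Fin M, (j : ℕ) < h → ⟪y j (s - τ), w⟫ ≤ Mb := by
    intro s hs j hjh
    by_cases hsa : a ≤ s - τ
    · exact (INVH (s - τ) hsa).2 j
    · push_neg at hsa
      exact ylead_le_MSeq hsol hτ w n j hjh ⟨by rw [hwineq]; linarith, by linarith⟩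
  have hdelX : ∀ s, a < s → ∀ j : Fin N, (j : ℕ) < k → ⟪x j (s - τ), w⟫ ≤ Mb := by
    intro s hs j hjk
    by_cases hsa : a ≤ s - τ
    · exact (INVH (s - τ) hsa).1 j
    · push_neg at hsa
      exact xlead_le_MSeq hsol hτ w n j hjk ⟨by rw [hwineq]; linarith, by linarith⟩
  -- Stage 0
  have S0 : ∀ t ∈ Icc a (a + 6 * τ), β0 ≤ Mb - ⟪x x0 t, w⟫ := by
    intro t ht
    have hpA := pullA (fun s => Mb - ⟪x x0 s, w⟫)
      (fun s => -((∑ j ∈ Finset.univ.erase x0,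
          (ψ (x x0 s) (x j s) / ((N : ℝ) + h - 1)) * (⟪x j s, w⟫ - ⟪x x0 s, w⟫)) +
        ∑ j ∈ Finset.univ.filter (fun j : Fin M => (j : ℕ) < h),
          (φ (x x0 s) (y j (s - τ)) / ((N : ℝ) + h - 1)) * (⟪y j (s - τ), w⟫ - ⟪x x0 s, w⟫)))
      K a t hK ht.1
      (continuous_const.sub (contP hsol x0 w))
      (fun s hs => by
        simpa using HasDerivAt.const_sub Mb
          (hdP_xl hsol w x0 hx0k s (lt_of_le_of_lt ha0 hs.1)))
      (fun s hs => by
        have hb := DXL_le (ψs := ψs) (φs := φs) hψ hφ hN hhM w x0 s Mb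
          (fun j => (INVH s hs.1.le).1 j)
          (fun j hjh => hdelY s hs.1 j hjh)
        linarith)
    have hu0 : (Mb - m) / 2 ≤ Mb - ⟪x x0 a, w⟫ := by
      have hc' : ⟪x x0 a, w⟫ ≤ (m + Mb) / 2 := hcase
      linarith
    have hexp : Real.exp (-(K * (6 * τ))) ≤ Real.exp (-(K * (t - a))) := by
      apply Real.exp_le_exp.mpr
      nlinarith [ht.1, ht.2]
    calc β0 ≤ Real.exp (-(K * (t - a))) * ((Mb - m) / 2) := by
          rw [hβ0def]
          apply mul_le_mul_of_nonneg_right hexp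
          positivity
      _ ≤ Real.exp (-(K * (t - a))) * (Mb - ⟪x x0 a, w⟫) := by
          apply mul_le_mul_of_nonneg_left hu0 (Real.exp_pos _).le
      _ ≤ Mb - ⟪x x0 t, w⟫ := hpA
  -- Stage 1 : all x agents
  have S1 : ∀ i : Fin N, ∀ t ∈ Icc (a + τ) (a + 6 * τ), ρ * β0 ≤ Mb - ⟪x i t, w⟫ := by
    intro i t ht
    by_cases hi0 : i = x0
    · subst hi0
      have hS := S0 t ⟨by linarith [ht.1], ht.2⟩
      have h2 : ρ * β0 ≤ β0 := mul_le_of_le_one_left hβ00 hρ1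
      linarith
    · have hj0 : x0 ≠ i := fun he => hi0 he.symm
      have hua : 0 ≤ Mb - ⟪x i a, w⟫ := by linarith [(INVH a le_rfl).1 i]
      have hat : a ≤ t := by linarith [ht.1]
      have hex : Real.exp (-(K * (t - a))) ≤ Real.exp (-(K * τ)) :=
        Real.exp_le_exp.mpr (by
          have h2 := mul_le_mul_of_nonneg_left (show τ ≤ t - a by linarith [ht.1]) hK.le
          linarith)
      have h00 : 0 ≤ γ * β0 / K := div_nonneg (mul_nonneg hγpos.le hβ00) hK.le
      have hρcalc : ρ * β0 ≤ γ * β0 / K * (1 - Real.exp (-(K * (t - a)))) := by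
        calc ρ * β0 = γ * β0 / K * (1 - Real.exp (-(K * τ))) := by rw [hρdef]; ring
          _ ≤ γ * β0 / K * (1 - Real.exp (-(K * (t - a)))) :=
            mul_le_mul_of_nonneg_left (by linarith) h00
      refine le_trans hρcalc ?_
      by_cases hik : (i : ℕ) < k
      · exact pullB (fun s => Mb - ⟪x i s, w⟫)
          (fun s => -((∑ j ∈ Finset.univ.erase i,
          (ψ (x i (s)) (x j (s)) / ((N : ℝ) + h - 1)) * (⟪x j (s), w⟫ - ⟪x i (s), w⟫)) +
        ∑ j ∈ Finset.univ.filter (fun j : Fin M => (j : ℕ) < h),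
          (φ (x i (s)) (y j ((s) - τ)) / ((N : ℝ) + h - 1)) * (⟪y j ((s) - τ), w⟫ - ⟪x i (s), w⟫)))
          K (γ * β0) a t hK hat
          (continuous_const.sub (contP hsol i w))
          (fun s hs => by
            simpa using HasDerivAt.const_sub Mb
              (hdP_xl hsol w i hik s (lt_of_le_of_lt ha0 hs.1)))
          (fun s hs => by
            have hS0 := S0 s ⟨hs.1.le, by linarith [hs.2, ht.2]⟩
            have hb := DXL_le_pull hψ hψs hφ hφs hN hhM w i s Mb
              (fun j => (INVH s hs.1.le).1 j) (fun j hjh => hdelY s hs.1 j hjh)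
              x0 hj0 β0 hβ00 hΓ.le
              (NB.1 i s (le_trans ha0 hs.1.le)) (NB.1 x0 s (le_trans ha0 hs.1.le))
              (by linarith)
            linarith)
          hua
      · exact pullB (fun s => Mb - ⟪x i s, w⟫)
          (fun s => -(∑ j ∈ Finset.univ.erase i,
          (ψ (x i (s)) (x j (s)) / ((N : ℝ) - 1)) * (⟪x j (s), w⟫ - ⟪x i (s), w⟫)))
          K (γ * β0) a t hK hat
          (continuous_const.sub (contP hsol i w))
          (fun s hs => by
            simpa using HasDerivAt.const_sub Mb
              (hdP_xf hsol w i (le_of_not_gt hik) s (lt_of_le_of_lt ha0 hs.1)))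
          (fun s hs => by
            have hS0 := S0 s ⟨hs.1.le, by linarith [hs.2, ht.2]⟩
            have hb := DXF_le_pull hψ hψs hφ hφs hN w i s Mb
              (fun j => (INVH s hs.1.le).1 j)
              x0 hj0 β0 hβ00 hΓ.le
              (NB.1 i s (le_trans ha0 hs.1.le)) (NB.1 x0 s (le_trans ha0 hs.1.le))
              (by linarith)
            linarith)
          hua
  -- Stage 2 : y leaders
  have S2 : ∀ i : Fin M, (i : ℕ) < h → ∀ t ∈ Icc (a + 2 * τ) (a + 6 * τ),
      ρ * β0 ≤ Mb - ⟪y i t, w⟫ := by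
    intro i hih t ht
    have hat : a + τ ≤ t := by linarith [ht.1]
    have haτ : a ≤ a + τ := by linarith
    have hua : 0 ≤ Mb - ⟪y i (a + τ), w⟫ := by linarith [(INVH (a + τ) haτ).2 i]
    have hex : Real.exp (-(K * (t - (a + τ)))) ≤ Real.exp (-(K * τ)) :=
      Real.exp_le_exp.mpr (by nlinarith [ht.1])
    have h00 : 0 ≤ γ * β0 / K := by positivity
    have hρcalc : ρ * β0 ≤ γ * β0 / K * (1 - Real.exp (-(K * (t - (a + τ))))) := by
      calc ρ * β0 = γ * β0 / K * (1 - Real.exp (-(K * τ))) := by rw [hρdef]; ring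
        _ ≤ γ * β0 / K * (1 - Real.exp (-(K * (t - (a + τ))))) := by nlinarith
    refine le_trans hρcalc ?_
    exact pullB (fun s => Mb - ⟪y i s, w⟫)
      (fun s => -((∑ j ∈ Finset.univ.erase i,
          (ψs (y i (s)) (y j (s)) / ((M : ℝ) + k - 1)) * (⟪y j (s), w⟫ - ⟪y i (s), w⟫)) +
        ∑ j ∈ Finset.univ.filter (fun j : Fin N => (j : ℕ) < k),
          (φs (y i (s)) (x j ((s) - τ)) / ((M : ℝ) + k - 1)) * (⟪x j ((s) - τ), w⟫ - ⟪y i (s), w⟫)))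
      K (γ * β0) (a + τ) t hK hat
      (continuous_const.sub (contQ hsol i w))
      (fun s hs => by
        simpa using HasDerivAt.const_sub Mb
          (hdP_yl hsol w i hih s (lt_of_le_of_lt ha0 (by linarith [hs.1]))))
      (fun s hs => by
        have hsa : a ≤ s := by linarith [hs.1]
        have hS0 := S0 (s - τ) ⟨by linarith [hs.1], by linarith [hs.2, ht.2]⟩
        have hb := DYL_le_pull_del hψ hψs hφ hφs hM2 hkN hMN w i s Mb
          (fun j => (INVH s hsa).2 j) (fun j hjk => hdelX s (by linarith [hs.1]) j hjk)
          x0 hx0k β0 hβ00 hΓ.le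
          (NB.2 i s (le_trans ha0 hsa)) (NB.1 x0 (s - τ) (by linarith [hs.1]))
          (by linarith)
        linarith)
      hua
  -- Stage 3 : y followers
  have S3 : ∀ i : Fin M, h ≤ (i : ℕ) → ∀ t ∈ Icc (a + 3 * τ) (a + 6 * τ),
      ρ * (ρ * β0) ≤ Mb - ⟪y i t, w⟫ := by
    intro i hih t ht
    have hy0i : y0 ≠ i := by
      intro he
      have : (y0 : ℕ) = (i : ℕ) := congrArg Fin.val he
      rw [hy0def] at this
      simp at this
      omega
    have hρβ : 0 ≤ ρ * β0 := mul_nonneg hρpos.le hβ00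
    have hat : a + 2 * τ ≤ t := by linarith [ht.1]
    have haτ : a ≤ a + 2 * τ := by linarith
    have hua : 0 ≤ Mb - ⟪y i (a + 2 * τ), w⟫ := by linarith [(INVH (a + 2 * τ) haτ).2 i]
    have hex : Real.exp (-(K * (t - (a + 2 * τ)))) ≤ Real.exp (-(K * τ)) :=
      Real.exp_le_exp.mpr (by
        have h2 := mul_le_mul_of_nonneg_left
          (show τ ≤ t - (a + 2 * τ) by linarith [ht.1]) hK.le
        linarith)
    have h00 : 0 ≤ γ * (ρ * β0) / K := div_nonneg (mul_nonneg hγpos.le hρβ) hK.le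
    have hρcalc : ρ * (ρ * β0)
        ≤ γ * (ρ * β0) / K * (1 - Real.exp (-(K * (t - (a + 2 * τ))))) := by
      calc ρ * (ρ * β0) = γ * (ρ * β0) / K * (1 - Real.exp (-(K * τ))) := by
            rw [hρdef]; ring
        _ ≤ γ * (ρ * β0) / K * (1 - Real.exp (-(K * (t - (a + 2 * τ))))) :=
          mul_le_mul_of_nonneg_left (by linarith) h00
    refine le_trans hρcalc ?_
    exact pullB (fun s => Mb - ⟪y i s, w⟫)
      (fun s => -(∑ j ∈ Finset.univ.erase i,
          (ψs (y i (s)) (y j (s)) / ((M : ℝ) - 1)) * (⟪y j (s), w⟫ - ⟪y i (s), w⟫)))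
      K (γ * (ρ * β0)) (a + 2 * τ) t hK hat
      (continuous_const.sub (contQ hsol i w))
      (fun s hs => by
        simpa using HasDerivAt.const_sub Mb
          (hdP_yf hsol w i hih s (lt_of_le_of_lt ha0 (by linarith [hs.1]))))
      (fun s hs => by
        have hsa : a ≤ s := by linarith [hs.1]
        have hS2 := S2 y0 hy0h s ⟨by linarith [hs.1], by linarith [hs.2, ht.2]⟩
        have hb := DYF_le_pull (φ := φ) hψ hψs hφ hφs hM2 hMN w i s Mb
          (fun j => (INVH s hsa).2 j)
          y0 hy0i (ρ * β0) hρβ hΓ.le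
          (NB.2 i s (le_trans ha0 hsa)) (NB.2 y0 s (le_trans ha0 hsa))
          (by linarith)
        linarith)
      hua
  -- Final assembly
  have hρβ0 : 0 ≤ ρ * β0 := mul_nonneg hρpos.le hβ00
  have hρρβ : 0 ≤ ρ * (ρ * β0) := mul_nonneg hρpos.le hρβ0
  have hρβρρβ : ρ * (ρ * β0) ≤ ρ * β0 := mul_le_of_le_one_left hρβ0 hρ1
  have e1 : (6 * ((n + 1 : ℕ) : ℝ) - 1) * τ = a + 5 * τ := by
    push_cast
    rw [hadef]
    ring
  have e2 : 6 * ((n + 1 : ℕ) : ℝ) * τ = a + 6 * τ := by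
    push_cast
    rw [hadef]
    ring
  have hbuild : MSeq h k τ w x y (n + 1) ≤ Mb - ρ * (ρ * β0) := by
    refine MSeq_le hN hM2 hh1 hk1 hkN hhM hτ w (n + 1) _ ?_ ?_ ?_ ?_
    · intro i hik t ht
      rw [e1, e2] at ht
      have := S1 i t ⟨by linarith [ht.1], ht.2⟩
      linarith
    · intro i hik
      rw [e2]
      have := S1 i (a + 6 * τ) ⟨by linarith, le_rfl⟩
      linarith
    · intro j hjh t ht
      rw [e1, e2] at ht
      have := S2 j hjh t ⟨by linarith [ht.1], ht.2⟩
      linarith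
    · intro j hjh
      rw [e2]
      have := S3 j hjh (a + 6 * τ) ⟨by linarith, le_rfl⟩
      linarith
  have heps : epsC N M h k τ ψ ψs φ φs x y
      = (γ / K * (1 - Real.exp (-(K * τ))))^2 * (Real.exp (-(K * (6 * τ))) / 2) := by
    rw [hγdef, hΓdef, hKdef]
    rfl
  have hrw : ρ * (ρ * β0) = epsC N M h k τ ψ ψs φ φs x y * (Mb - m) := by
    rw [heps, hβ0def, hρdef]
    ring
  linarith


end Main5


section Main6

variable {d N M h k : ℕ} {τ : ℝ}
  {ψ ψs φ φs : EuclideanSpace ℝ (Fin d) → EuclideanSpace ℝ (Fin d) → ℝ}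
  {x : Fin N → ℝ → EuclideanSpace ℝ (Fin d)}
  {y : Fin M → ℝ → EuclideanSpace ℝ (Fin d)}

lemma MSeq_mono (hsol : IsSol h k τ ψ ψs φ φs x y)
    (hψ : Admissible ψ) (hψs : Admissible ψs) (hφ : Admissible φ) (hφs : Admissible φs)
    (hN : 2 ≤ N) (hM2 : 2 ≤ M) (hh1 : 1 ≤ h) (hk1 : 1 ≤ k)
    (hkN : k < N) (hhM : h < M) (hτ : 0 < τ)
    (w : EuclideanSpace ℝ (Fin d)) (n : ℕ) :
    MSeq h k τ w x y (n + 1) ≤ MSeq h k τ w x y n := by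
  have INVH := invN_high hsol hψ hψs hφ hφs hN hM2 hkN hhM hτ w n
  have e1 : (6 * ((n + 1 : ℕ) : ℝ) - 1) * τ = 6 * (n : ℝ) * τ + 5 * τ := by
    push_cast; ring
  have e2 : 6 * ((n + 1 : ℕ) : ℝ) * τ = 6 * (n : ℝ) * τ + 6 * τ := by
    push_cast; ring
  refine MSeq_le hN hM2 hh1 hk1 hkN hhM hτ w (n + 1) _ ?_ ?_ ?_ ?_
  · intro i hik t ht
    rw [e1] at ht
    exact (INVH t (by linarith [ht.1])).1 i
  · intro i hik
    rw [e2]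
    exact (INVH _ (by linarith)).1 i
  · intro j hjh t ht
    rw [e1] at ht
    exact (INVH t (by linarith [ht.1])).2 j
  · intro j hjh
    rw [e2]
    exact (INVH _ (by linarith)).2 j

lemma mSeq_mono (hsol : IsSol h k τ ψ ψs φ φs x y)
    (hψ : Admissible ψ) (hψs : Admissible ψs) (hφ : Admissible φ) (hφs : Admissible φs)
    (hN : 2 ≤ N) (hM2 : 2 ≤ M) (hh1 : 1 ≤ h) (hk1 : 1 ≤ k)
    (hkN : k < N) (hhM : h < M) (hτ : 0 < τ)
    (w : EuclideanSpace ℝ (Fin d)) (n : ℕ) :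
    mSeq h k τ w x y n ≤ mSeq h k τ w x y (n + 1) := by
  have := MSeq_mono hsol hψ hψs hφ hφs hN hM2 hh1 hk1 hkN hhM hτ (-w) n
  rw [MSeq_neg h k τ w x y n, MSeq_neg h k τ w x y (n + 1)] at this
  linarith

lemma DSeq_nonneg (hsol : IsSol h k τ ψ ψs φ φs x y)
    (hN : 2 ≤ N) (hk1 : 1 ≤ k) (hτ : 0 < τ)
    (w : EuclideanSpace ℝ (Fin d)) (n : ℕ) :
    0 ≤ MSeq h k τ w x y n - mSeq h k τ w x y n := by
  have hN0 : 0 < N := by omega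
  set x0 : Fin N := ⟨0, hN0⟩ with hx0
  have hx0k : (x0 : ℕ) < k := by simp [hx0]; omega
  have h1 := mSeq_le_xlead hsol hτ w n x0 hx0k
    (t := 6 * (n : ℝ) * τ) ⟨window_le hτ n, le_rfl⟩
  have h2 := xlead_le_MSeq hsol hτ w n x0 hx0k
    (t := 6 * (n : ℝ) * τ) ⟨window_le hτ n, le_rfl⟩
  linarith

lemma contractD (hsol : IsSol h k τ ψ ψs φ φs x y)
    (hψ : Admissible ψ) (hψs : Admissible ψs) (hφ : Admissible φ) (hφs : Admissible φs)
    (hN : 2 ≤ N) (hM2 : 2 ≤ M) (hMN : M ≤ N)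
    (hh1 : 1 ≤ h) (hhM : h < M) (hk1 : 1 ≤ k) (hkN : k < N) (hτ : 0 < τ)
    (v : EuclideanSpace ℝ (Fin d)) (n : ℕ) :
    MSeq h k τ v x y (n + 1) - mSeq h k τ v x y (n + 1)
      ≤ (1 - epsC N M h k τ ψ ψs φ φs x y)
        * (MSeq h k τ v x y n - mSeq h k τ v x y n) := by
  set ε := epsC N M h k τ ψ ψs φ φs x y with hε
  have hid : (1 - ε) * (MSeq h k τ v x y n - mSeq h k τ v x y n)
      = (MSeq h k τ v x y n - mSeq h k τ v x y n)
        - ε * (MSeq h k τ v x y n - mSeq h k τ v x y n) := by ring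
  by_cases hc : ⟪x (⟨0, by omega⟩ : Fin N) (6 * (n : ℝ) * τ), v⟫
      ≤ (mSeq h k τ v x y n + MSeq h k τ v x y n) / 2
  · have h1 := keyStep hsol hψ hψs hφ hφs hN hM2 hMN hh1 hhM hk1 hkN hτ v n hc
    have h2 := mSeq_mono hsol hψ hψs hφ hφs hN hM2 hh1 hk1 hkN hhM hτ v n
    rw [hid]
    linarith
  · push_neg at hc
    have hc' : ⟪x (⟨0, by omega⟩ : Fin N) (6 * (n : ℝ) * τ), -v⟫
        ≤ (mSeq h k τ (-v) x y n + MSeq h k τ (-v) x y n) / 2 := by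
      rw [inner_neg_right, mSeq_neg h k τ v x y n, MSeq_neg h k τ v x y n]
      linarith
    have h1 := keyStep hsol hψ hψs hφ hφs hN hM2 hMN hh1 hhM hk1 hkN hτ (-v) n hc'
    rw [mSeq_neg h k τ v x y n, MSeq_neg h k τ v x y n,
      MSeq_neg h k τ v x y (n + 1)] at h1
    have h2 := MSeq_mono hsol hψ hψs hφ hφs hN hM2 hh1 hk1 hkN hhM hτ v n
    rw [hid]
    linarith

end Main6

theorem stmt15
    (d N M h k : ℕ) (hd : 1 ≤ d) (hN : 2 ≤ N) (hM2 : 2 ≤ M) (hMN : M ≤ N)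
    (hh1 : 1 ≤ h) (hhM : h < M) (hk1 : 1 ≤ k) (hkN : k < N)
    (τ : ℝ) (hτ : 0 < τ)
    (ψ ψs φ φs : EuclideanSpace ℝ (Fin d) → EuclideanSpace ℝ (Fin d) → ℝ)
    (hψ : Admissible ψ) (hψs : Admissible ψs) (hφ : Admissible φ) (hφs : Admissible φs)
    (x : Fin N → ℝ → EuclideanSpace ℝ (Fin d)) (y : Fin M → ℝ → EuclideanSpace ℝ (Fin d))
    (hsol : IsSol h k τ ψ ψs φ φs x y)
    (v : EuclideanSpace ℝ (Fin d)) (hv : ‖v‖ = 1)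
    (hm₀pos : 0 < mSeq h k τ v x y 0)
    (D : ℕ → ℝ) (hD : ∀ n, D n = MSeq h k τ v x y n - mSeq h k τ v x y n) :
    (∀ n : ℕ, 0 ≤ D n) ∧ (∀ n : ℕ, D (n + 1) ≤ D n) ∧
    Tendsto D atTop (nhds 0) ∧
    (∀ i j : Fin N, Tendsto (fun t : ℝ => ⟪x i t - x j t, v⟫) atTop (nhds 0)) ∧
    (∀ i j : Fin M, Tendsto (fun t : ℝ => ⟪y i t - y j t, v⟫) atTop (nhds 0)) ∧
    (∀ i : Fin N, ∀ j : Fin M, Tendsto (fun t : ℝ => ⟪x i t - y j t, v⟫) atTop (nhds 0)) := by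
  -- proof
  set ε := epsC N M h k τ ψ ψs φ φs x y with hε
  have hεp := eps_pos hsol hψ hψs hφ hφs hN hk1 hτ
  have hε1 := eps_lt_one hsol hψ hψs hφ hφs hN hk1 hτ
  have hDnn : ∀ n, 0 ≤ D n := fun n => by
    rw [hD n]; exact DSeq_nonneg hsol hN hk1 hτ v n
  have hmono : ∀ n, D (n + 1) ≤ D n := fun n => by
    rw [hD n, hD (n + 1)]
    have h1 := MSeq_mono hsol hψ hψs hφ hφs hN hM2 hh1 hk1 hkN hhM hτ v n
    have h2 := mSeq_mono hsol hψ hψs hφ hφs hN hM2 hh1 hk1 hkN hhM hτ v n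
    linarith
  have hcontr : ∀ n, D (n + 1) ≤ (1 - ε) * D n := fun n => by
    rw [hD n, hD (n + 1)]
    exact contractD hsol hψ hψs hφ hφs hN hM2 hMN hh1 hhM hk1 hkN hτ v n
  have h1ε0 : 0 ≤ 1 - ε := by linarith
  have hgeom : ∀ n, D n ≤ (1 - ε) ^ n * D 0 := by
    intro n
    induction n with
    | zero => simp
    | succ n IH =>
      calc D (n + 1) ≤ (1 - ε) * D n := hcontr n
        _ ≤ (1 - ε) * ((1 - ε) ^ n * D 0) := mul_le_mul_of_nonneg_left IH h1ε0
        _ = (1 - ε) ^ (n + 1) * D 0 := by ring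
  have htend : Tendsto D atTop (nhds 0) := by
    have hpow : Tendsto (fun n : ℕ => (1 - ε) ^ n * D 0) atTop (nhds 0) := by
      have := (tendsto_pow_atTop_nhds_zero_of_lt_one h1ε0 (by linarith)).mul_const (D 0)
      simpa using this
    exact squeeze_zero hDnn hgeom hpow
  have hpair : ∀ f : ℝ → ℝ, (∀ n : ℕ, ∀ t, 6 * (n : ℝ) * τ ≤ t → |f t| ≤ D n) →
      Tendsto f atTop (nhds 0) := by
    intro f hf
    rw [Metric.tendsto_atTop]
    intro ε' hε'
    obtain ⟨n₀, hn₀⟩ := (Metric.tendsto_atTop.mp htend) ε' hε'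
    refine ⟨6 * (n₀ : ℝ) * τ, fun t ht => ?_⟩
    have hDn := hn₀ n₀ le_rfl
    rw [Real.dist_eq, sub_zero] at hDn ⊢
    have habs : |D n₀| = D n₀ := abs_of_nonneg (hDnn n₀)
    calc |f t| ≤ D n₀ := hf n₀ t ht
      _ < ε' := by rw [habs] at hDn; exact hDn
  have hbnd : ∀ n : ℕ, ∀ t, 6 * (n : ℝ) * τ ≤ t →
      (∀ i, mSeq h k τ v x y n ≤ ⟪x i t, v⟫ ∧ ⟪x i t, v⟫ ≤ MSeq h k τ v x y n) ∧
      (∀ j, mSeq h k τ v x y n ≤ ⟪y j t, v⟫ ∧ ⟪y j t, v⟫ ≤ MSeq h k τ v x y n) := by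
    intro n t ht
    have hH := invN_high hsol hψ hψs hφ hφs hN hM2 hkN hhM hτ v n t ht
    have hL := invN_low hsol hψ hψs hφ hφs hN hM2 hkN hhM hτ v n t ht
    exact ⟨fun i => ⟨hL.1 i, hH.1 i⟩, fun j => ⟨hL.2 j, hH.2 j⟩⟩
  refine ⟨hDnn, hmono, htend, ?_, ?_, ?_⟩
  · intro i j
    apply hpair
    intro n t ht
    have hi := (hbnd n t ht).1 i
    have hj := (hbnd n t ht).1 j
    rw [inner_sub_left, hD n]
    exact abs_le.mpr ⟨by linarith [hi.1, hj.2], by linarith [hi.2, hj.1]⟩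
  · intro i j
    apply hpair
    intro n t ht
    have hi := (hbnd n t ht).2 i
    have hj := (hbnd n t ht).2 j
    rw [inner_sub_left, hD n]
    exact abs_le.mpr ⟨by linarith [hi.1, hj.2], by linarith [hi.2, hj.1]⟩
  · intro i j
    apply hpair
    intro n t ht
    have hi := (hbnd n t ht).1 i
    have hj := (hbnd n t ht).2 j
    rw [inner_sub_left, hD n]
    exact abs_le.mpr ⟨by linarith [hi.1, hj.2], by linarith [hi.2, hj.1]⟩
end
end
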